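/- arXiv:2409.17078 — 6 statements merged into one kernel-verified Lean document; each statement's English description precedes it below -/
import Mathlib

section
/- Let R, B ⊂ ℝ² be finite disjoint sets with R ∪ B in general position, and let C ⊆ ℝ² be a convex region. Then the number of empty red-red-blue triangles whose three vertices all lie in C is at least |B ∩ C| · (|R ∩ C| − |B ∩ C|). -/
/-- No three distinct points of `S` are collinear. -/
def GenPos (S : Set ℂ) : Prop :=
  ∀ p ∈ S, ∀ q ∈ S, ∀ r ∈ S, p ≠ q → p ≠ r → q ≠ r → ¬ Collinear ℝ ({p, q, r} : Set ℂ)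

/-- The collection of empty red-red-blue triangles: vertex sets `{a, b, c}` with
`a, b ∈ R` distinct, `c ∈ B`, whose convex hull contains no other point of `R ∪ B`. -/
def emptyRRB (R B : Finset ℂ) : Set (Set ℂ) :=
  {T | ∃ a b c : ℂ, a ∈ R ∧ b ∈ R ∧ c ∈ B ∧ a ≠ b ∧ T = {a, b, c} ∧
    convexHull ℝ {a, b, c} ∩ (↑R ∪ ↑B : Set ℂ) = ({a, b, c} : Set ℂ)}

open Complex Real

noncomputable def crossIm (u v : ℂ) : ℝ := ((starRingEnd ℂ) u * v).im

lemma crossIm_eq (u v : ℂ) :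
    crossIm u v = ‖u‖ * ‖v‖ * Real.sin (arg v - arg u) := by
  unfold crossIm
  conv_lhs => rw [← norm_mul_exp_arg_mul_I u, ← norm_mul_exp_arg_mul_I v]
  rw [map_mul, ← Complex.exp_conj]
  simp only [map_mul, Complex.conj_ofReal, Complex.conj_I]
  rw [mul_mul_mul_comm, ← Complex.exp_add]
  have : (↑(arg u) * I).re = 0 := by simp
  have h2 : (↑(arg u) : ℂ) * -I + ↑(arg v) * I = ((arg v - arg u : ℝ) : ℂ) * I := by
    push_cast; ring
  rw [h2, Complex.exp_mul_I]
  simp [Complex.mul_im, ← Complex.ofReal_sub, Complex.sin_ofReal_re]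

lemma sin_window {x : ℝ} (h1 : -(2*π) < x) (h2 : x < 2*π) (hs : 0 < Real.sin x) :
    (0 < x ∧ x < π) ∨ x < -π := by
  by_contra hcon
  push_neg at hcon
  obtain ⟨h3, h4⟩ := hcon
  have hpi := Real.pi_pos
  rcases le_or_gt x 0 with hx0 | hx0
  · exact absurd (Real.sin_nonpos_of_nonpos_of_neg_pi_le hx0 h4) (not_le.2 hs)
  · have hxπ : π ≤ x := by
      rcases lt_or_ge x π with h | h
      · linarith [h3 hx0]
      · exact h
    have : Real.sin (x - 2*π) ≤ 0 :=
      Real.sin_nonpos_of_nonpos_of_neg_pi_le (by linarith) (by linarith)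
    rw [Real.sin_sub_two_pi] at this
    linarith

lemma collinear_of_smul {q x z : ℂ} {c : ℝ} (h : z - q = c • (x - q)) :
    Collinear ℝ ({q, x, z} : Set ℂ) := by
  rw [collinear_iff_exists_forall_eq_smul_vadd]
  refine ⟨q, x - q, ?_⟩
  intro p hp
  rcases hp with rfl | rfl | rfl
  · exact ⟨0, by simp⟩
  · exact ⟨1, by simp⟩
  · exact ⟨c, by rw [vadd_eq_add]; rw [sub_eq_iff_eq_add] at h; rw [h]⟩

/-- If the cross product of two nonzero vectors vanishes, the three points are collinear. -/
lemma collinear_of_crossIm_zero {q x y : ℂ} (hx : x ≠ q) (h : crossIm (x - q) (y - q) = 0) :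
    Collinear ℝ ({q, x, y} : Set ℂ) := by
  have hu : x - q ≠ 0 := sub_ne_zero.2 hx
  set u := x - q with hu'
  set v := y - q with hv'
  set r := ((starRingEnd ℂ) u * v).re with hr'
  have hn : Complex.normSq u ≠ 0 := ne_of_gt (Complex.normSq_pos.2 hu)
  have h2 : (starRingEnd ℂ) u * v = (r : ℂ) := by
    apply Complex.ext
    · simp [hr']
    · simpa [crossIm] using h
  have h3 : (Complex.normSq u : ℂ) * v = (r : ℂ) * u := by
    rw [← Complex.mul_conj, mul_assoc, h2]; ring
  have hnc : (Complex.normSq u : ℂ) ≠ 0 := by exact_mod_cast hn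
  have h4 : v = ((r:ℂ) / (Complex.normSq u : ℂ)) * u := by
    field_simp
    linear_combination h3
  have key : v = ((r / Complex.normSq u : ℝ)) • u := by
    rw [Complex.real_smul]
    push_cast
    exact h4
  have := collinear_of_smul (q := q) (x := x) (z := y) key
  exact this.subset (by intro p hp; rcases hp with rfl|rfl|rfl <;> simp)

lemma crossIm_def (u v : ℂ) : crossIm u v = u.re * v.im - u.im * v.re := by
  simp [crossIm, Complex.mul_im]
  ring

lemma collinear_of_arg_eq {q z w : ℂ} (hz : z ≠ q) (hw : w ≠ q)
    (h : Complex.arg (z - q) = Complex.arg (w - q)) : Collinear ℝ ({q, z, w} : Set ℂ) := by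
  have h2 := (Complex.arg_eq_arg_iff (sub_ne_zero.2 hz) (sub_ne_zero.2 hw)).1 h
  have key : w - q = ((‖w - q‖ / ‖z - q‖ : ℝ)) • (z - q) := by
    rw [Complex.real_smul]
    push_cast
    exact h2.symm
  exact collinear_of_smul key

lemma cone_sin {q x y z : ℂ} (hx : x ≠ q) (hy : y ≠ q) (hz : z ≠ q)
    (h1 : 0 < Real.sin (arg (y - q) - arg (x - q)))
    {β γ : ℝ} (hβ : 0 < β) (hγ : 0 < γ)
    (hrep : z - q = β • (x - q) + γ • (y - q)) :
    0 < Real.sin (arg (z - q) - arg (x - q)) ∧ 0 < Real.sin (arg (y - q) - arg (z - q)) := by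
  set u := x - q with hu'
  set v := y - q with hv'
  set w := z - q with hw'
  have hu : u ≠ 0 := sub_ne_zero.2 hx
  have hv : v ≠ 0 := sub_ne_zero.2 hy
  have hw : w ≠ 0 := sub_ne_zero.2 hz
  have hre : w.re = β * u.re + γ * v.re := by
    rw [hrep]; simp [Complex.real_smul]
  have him : w.im = β * u.im + γ * v.im := by
    rw [hrep]; simp [Complex.real_smul]
  have huv : 0 < crossIm u v := by
    rw [crossIm_eq]
    have := norm_pos_iff.mpr hu
    have := norm_pos_iff.mpr hv
    positivity
  have e1 : crossIm u w = γ * crossIm u v := by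
    rw [crossIm_def, crossIm_def, hre, him]; ring
  have e2 : crossIm w v = β * crossIm u v := by
    rw [crossIm_def, crossIm_def, hre, him]; ring
  constructor
  · have : 0 < crossIm u w := by rw [e1]; positivity
    rw [crossIm_eq] at this
    have h3 := norm_pos_iff.mpr hu
    have h4 := norm_pos_iff.mpr hw
    nlinarith [mul_pos h3 h4]
  · have : 0 < crossIm w v := by rw [e2]; positivity
    rw [crossIm_eq] at this
    have h3 := norm_pos_iff.mpr hv
    have h4 := norm_pos_iff.mpr hw
    nlinarith [mul_pos h4 h3]

lemma empty_triangle {S : Set ℂ} (hgp : GenPos S) {C : Set ℂ} (hC : Convex ℝ C)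
    {q x y : ℂ} (hqS : q ∈ S) (hxS : x ∈ S) (hyS : y ∈ S)
    (hqC : q ∈ C) (hxC : x ∈ C) (hyC : y ∈ C)
    (hxq : x ≠ q) (hyq : y ≠ q) (hxy : x ≠ y)
    (hcone : ∀ z ∈ S, z ∈ C → z ≠ q → ∀ β γ : ℝ, 0 < β → 0 < γ →
      z - q = β • (x - q) + γ • (y - q) → False) :
    convexHull ℝ ({x, y, q} : Set ℂ) ∩ S = ({x, y, q} : Set ℂ) := by
  classical
  apply Set.Subset.antisymm
  · rintro z ⟨hzhull, hzS⟩
    by_contra hznot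
    simp only [Set.mem_insert_iff, Set.mem_singleton_iff, not_or] at hznot
    obtain ⟨hzx, hzy, hzq⟩ := hznot
    have hsub : ({x, y, q} : Set ℂ) ⊆ C := by
      rintro p (rfl | rfl | rfl) <;> assumption
    have hzC : z ∈ C := convexHull_min hsub hC hzhull
    -- get weights
    have hcoe : (↑({x, y, q} : Finset ℂ) : Set ℂ) = ({x, y, q} : Set ℂ) := by
      simp
    rw [← hcoe, Finset.convexHull_eq] at hzhull
    obtain ⟨w, hw0, hw1, hwz⟩ := hzhull
    rw [Finset.centerMass_eq_of_sum_1 _ _ hw1] at hwz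
    have hxny : x ∉ ({y, q} : Finset ℂ) := by
      simp [hxy, hxq]
    have hynq : y ∉ ({q} : Finset ℂ) := by simp [hyq]
    rw [Finset.sum_insert hxny, Finset.sum_insert hynq, Finset.sum_singleton] at hwz hw1
    set β := w x with hβ'
    set γ := w y with hγ'
    set α := w q with hα'
    have hβ0 : 0 ≤ β := hw0 x (by simp)
    have hγ0 : 0 ≤ γ := hw0 y (by simp)
    have hrep : z - q = β • (x - q) + γ • (y - q) := by
      simp only [id_eq] at hwz
      have h1 : (β:ℂ) + ((γ:ℂ) + (α:ℂ)) = 1 := by exact_mod_cast hw1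
      rw [Complex.real_smul, Complex.real_smul, Complex.real_smul] at hwz
      rw [Complex.real_smul, Complex.real_smul]
      rw [← hwz]
      linear_combination (q : ℂ) * h1
    rcases eq_or_lt_of_le hβ0 with hβz | hβpos
    · rcases eq_or_lt_of_le hγ0 with hγz | hγpos
      · rw [← hβz, ← hγz] at hrep
        simp at hrep
        exact hzq (by linear_combination hrep)
      · -- z - q = γ • (y - q) : collinear q y z
        rw [← hβz] at hrep
        simp at hrep
        exact hgp q hqS y hyS z hzS (Ne.symm hyq) (Ne.symm hzq) (fun h => hzy h.symm)
          (collinear_of_smul hrep)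
    · rcases eq_or_lt_of_le hγ0 with hγz | hγpos
      · rw [← hγz] at hrep
        simp at hrep
        exact hgp q hqS x hxS z hzS (Ne.symm hxq) (Ne.symm hzq) (fun h => hzx h.symm)
          (collinear_of_smul hrep)
      · exact hcone z hzS hzC hzq β γ hβpos hγpos hrep
  · rintro z (rfl | rfl | rfl)
    · exact ⟨subset_convexHull ℝ _ (by simp), hxS⟩
    · exact ⟨subset_convexHull ℝ _ (by simp), hyS⟩
    · exact ⟨subset_convexHull ℝ _ (by simp), hqS⟩

lemma perq (R B : Finset ℂ) (hdisj : Disjoint R B) (hgp : GenPos (↑R ∪ ↑B : Set ℂ))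
    (C : Set ℂ) (hC : Convex ℝ C) {q : ℂ} (hqB : q ∈ B) (hqC : q ∈ C) :
    ∃ Tq : Finset (Set ℂ),
      (∀ T ∈ Tq, ∃ x y : ℂ, x ∈ R ∧ y ∈ R ∧ x ≠ y ∧ x ∈ C ∧ y ∈ C ∧ T = {x, y, q} ∧
        convexHull ℝ ({x, y, q} : Set ℂ) ∩ (↑R ∪ ↑B : Set ℂ) = ({x, y, q} : Set ℂ)) ∧
      ((↑R ∩ C : Set ℂ).ncard : ℤ) - ((↑B ∩ C : Set ℂ).ncard : ℤ) ≤ (Tq.card : ℤ) := by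
  classical
  set Rc : Finset ℂ := R.filter (· ∈ C) with hRc
  set Bc : Finset ℂ := B.filter (· ∈ C) with hBc
  have hRcard : (↑R ∩ C : Set ℂ).ncard = Rc.card := by
    rw [← Set.ncard_coe_finset]
    congr 1
    ext z
    simp [hRc]
  have hBcard : (↑B ∩ C : Set ℂ).ncard = Bc.card := by
    rw [← Set.ncard_coe_finset]
    congr 1
    ext z
    simp [hBc]
  set r : ℕ := Rc.card with hr
  set bb : ℕ := Bc.card with hbb
  rw [hRcard, hBcard]
  by_cases hrb : (r : ℤ) - (bb : ℤ) ≤ 0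
  · exact ⟨∅, by simp, by simpa using hrb⟩
  push_neg at hrb
  have hbb1 : 1 ≤ bb := Finset.card_pos.2 ⟨q, by simp [hBc, hqB, hqC]⟩
  have hrbb : (bb : ℤ) < r := by linarith
  -- the punctured point set
  set P : Finset ℂ := (Rc ∪ Bc).erase q with hP
  have hqP : q ∉ P := Finset.notMem_erase _ _
  have hPmem : ∀ z, z ∈ P ↔ (z ≠ q ∧ (z ∈ R ∨ z ∈ B) ∧ z ∈ C) := by
    intro z
    simp only [hP, Finset.mem_erase, Finset.mem_union, hRc, hBc, Finset.mem_filter]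
    tauto
  have hdisjc : Disjoint Rc Bc := hdisj.mono (Finset.filter_subset _ _) (Finset.filter_subset _ _)
  have hqRcBc : q ∈ Rc ∪ Bc := by simp [hBc, hqB, hqC]
  set m : ℕ := P.card with hm
  have hmcard : m + 1 = r + bb := by
    rw [hm, hP, Finset.card_erase_of_mem hqRcBc, Finset.card_union_of_disjoint hdisjc]
    have : 1 ≤ Rc.card + Bc.card := by omega
    omega
  have hm2 : 2 ≤ m := by omega
  haveI : NeZero m := ⟨by omega⟩
  -- the angle function
  set f : ℂ → ℝ := fun z => Complex.arg (z - q) with hf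
  have hSmem : ∀ z ∈ P, z ∈ (↑R ∪ ↑B : Set ℂ) := by
    intro z hz
    rcases (hPmem z).1 hz with ⟨-, h, -⟩
    rcases h with h | h
    · exact Or.inl h
    · exact Or.inr h
  have hqS : q ∈ (↑R ∪ ↑B : Set ℂ) := Or.inr hqB
  have hfinj : ∀ z ∈ P, ∀ w ∈ P, f z = f w → z = w := by
    intro z hz w hw hfzw
    by_contra hne
    obtain ⟨hzq, -, -⟩ := (hPmem z).1 hz
    obtain ⟨hwq, -, -⟩ := (hPmem w).1 hw
    exact hgp q hqS z (hSmem z hz) w (hSmem w hw) (Ne.symm hzq) (Ne.symm hwq) hne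
      (collinear_of_arg_eq hzq hwq hfzw)
  set F : Finset ℝ := P.image f with hF
  have hFcard : F.card = m := by
    rw [hF, Finset.card_image_of_injOn (fun a ha b hb => hfinj a ha b hb)]
  set e := F.orderEmbOfFin hFcard with he
  have hσex : ∀ i : Fin m, ∃ z, z ∈ P ∧ f z = e i := by
    intro i
    obtain ⟨z, hz, hfz⟩ := Finset.mem_image.1 (F.orderEmbOfFin_mem hFcard i)
    exact ⟨z, hz, hfz⟩
  choose σ hσP hσf using hσex
  have hσinj : Function.Injective σ := by
    intro i j hij
    apply e.injective
    rw [← hσf i, ← hσf j, hij]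
  have hσsurj : ∀ p ∈ P, ∃ i, σ i = p := by
    intro p hp
    have h1 : f p ∈ F := by rw [hF]; exact Finset.mem_image_of_mem f hp
    have h2 : f p ∈ Set.range e := by rw [Finset.range_orderEmbOfFin]; exact_mod_cast h1
    obtain ⟨i, hi⟩ := h2
    exact ⟨i, hfinj _ (hσP i) _ hp (by rw [hσf i, hi])⟩
  have hbnd : ∀ i : Fin m, -π < e i ∧ e i ≤ π := by
    intro i
    rw [← hσf i]
    exact ⟨Complex.neg_pi_lt_arg _, Complex.arg_le_pi _⟩
  -- cyclic successor
  set nxt : Fin m → Fin m := fun i => if h : (i : ℕ) + 1 < m then ⟨(i : ℕ) + 1, h⟩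
    else ⟨0, by omega⟩ with hnxt
  set prv : Fin m → Fin m := fun j => if h : 1 ≤ (j : ℕ) then ⟨(j : ℕ) - 1, by omega⟩
    else ⟨m - 1, by omega⟩ with hprv
  have hnxtval : ∀ i : Fin m, ((nxt i : Fin m) : ℕ) = if (i : ℕ) + 1 < m then (i : ℕ) + 1 else 0 := by
    intro i
    rw [hnxt]
    split_ifs with h <;> simp [h]
  have hprvval : ∀ j : Fin m, ((prv j : Fin m) : ℕ) = if 1 ≤ (j : ℕ) then (j : ℕ) - 1 else m - 1 := by
    intro j
    rw [hprv]
    split_ifs with h <;> simp [h]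
  have hnp : ∀ j, nxt (prv j) = j := by
    intro j
    have hj := j.isLt
    apply Fin.ext
    rw [hnxtval, hprvval]
    split_ifs <;> omega
  have hpn : ∀ i, prv (nxt i) = i := by
    intro i
    have hi := i.isLt
    apply Fin.ext
    rw [hprvval, hnxtval]
    split_ifs <;> omega
  have hnxtinj : Function.Injective nxt := by
    intro a b hab
    rw [← hpn a, ← hpn b, hab]
  have hnxtne : ∀ i, nxt i ≠ i := by
    intro i h
    have := congrArg (Fin.val) h
    rw [hnxtval] at this
    have hi := i.isLt
    split_ifs at this <;> omega
  have emono : ∀ i j : Fin m, (i : ℕ) ≤ (j : ℕ) → e i ≤ e j := by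
    intro i j hij
    exact e.monotone (by exact hij)
  have elt : ∀ i j : Fin m, e i < e j ↔ (i : ℕ) < (j : ℕ) := by
    intro i j
    rw [e.lt_iff_lt]
    rfl
  -- the goodness predicate
  set Good : Fin m → Prop := fun i => ∀ z ∈ P, ∀ β γ : ℝ, 0 < β → 0 < γ →
    z - q = β • (σ i - q) + γ • (σ (nxt i) - q) → False with hGood
  have hσq : ∀ i : Fin m, σ i ≠ q := fun i => ((hPmem _).1 (hσP i)).1
  have hzbnd : ∀ z ∈ P, -π < f z ∧ f z ≤ π := by
    intro z hz
    exact ⟨Complex.neg_pi_lt_arg _, Complex.arg_le_pi _⟩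
  have hek : ∀ z ∈ P, ∃ k : Fin m, e k = f z := by
    intro z hz
    have h1 : f z ∈ F := Finset.mem_image_of_mem f hz
    have h2 : f z ∈ Set.range e := by rw [Finset.range_orderEmbOfFin]; exact_mod_cast h1
    exact h2
  have goodlin : ∀ i : Fin m, (i : ℕ) + 1 < m → e (nxt i) - e i < π → Good i := by
    intro i hi hgap z hz β γ hβ hγ hrep
    have hzq : z ≠ q := ((hPmem z).1 hz).1
    have hltn : e i < e (nxt i) := by
      rw [elt, hnxtval, if_pos hi]
      omega
    have h1 : 0 < Real.sin (f (σ (nxt i)) - f (σ i)) := by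
      rw [hσf, hσf]
      exact Real.sin_pos_of_pos_of_lt_pi (by linarith) (by linarith)
    obtain ⟨A, Bs⟩ := cone_sin (hσq i) (hσq (nxt i)) hzq h1 hβ hγ hrep
    obtain ⟨k, hk⟩ := hek z hz
    have hba := hbnd i
    have hbb' := hbnd (nxt i)
    have hbz := hzbnd z hz
    have hA : 0 < Real.sin (f z - f (σ i)) := A
    have hB : 0 < Real.sin (f (σ (nxt i)) - f z) := Bs
    rw [hσf] at hA
    rw [hσf] at hB
    have hpi := Real.pi_pos
    have WA := sin_window (by linarith) (by linarith) hA
    have WB := sin_window (by linarith) (by linarith) hB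
    rcases WA with ⟨wa1, wa2⟩ | wa
    · rcases WB with ⟨wb1, wb2⟩ | wb
      · -- e i < f z < e (nxt i), f z = e k
        have h2 : e i < e k := by rw [hk]; linarith
        have h3 : e k < e (nxt i) := by rw [hk]; linarith
        rw [elt] at h2 h3
        rw [hnxtval, if_pos hi] at h3
        omega
      · linarith
    · rcases WB with ⟨wb1, wb2⟩ | wb <;> linarith
  set ilast : Fin m := ⟨m - 1, by omega⟩ with hilast
  set i0f : Fin m := ⟨0, by omega⟩ with hi0f
  have hilastval : ((ilast : Fin m) : ℕ) = m - 1 := rfl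
  have hi0fval : ((i0f : Fin m) : ℕ) = 0 := rfl
  have hnxtlast : nxt ilast = i0f := by
    apply Fin.ext
    rw [hnxtval]
    rw [hi0fval]
    split_ifs <;> omega
  have goodwrap : π < e ilast - e i0f → Good ilast := by
    intro hgap z hz β γ hβ hγ hrep
    have hzq : z ≠ q := ((hPmem z).1 hz).1
    have hba := hbnd ilast
    have hbb' := hbnd i0f
    have hbz := hzbnd z hz
    have hpi := Real.pi_pos
    have h1 : 0 < Real.sin (f (σ (nxt ilast)) - f (σ ilast)) := by
      rw [hσf, hσf, hnxtlast]
      have hd1 : e i0f - e ilast + 2 * π ∈ Set.Ioo 0 π := by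
        constructor <;> [linarith; linarith]
      have : Real.sin (e i0f - e ilast) = Real.sin (e i0f - e ilast + 2 * π) := by
        rw [Real.sin_add_two_pi]
      rw [this]
      exact Real.sin_pos_of_pos_of_lt_pi hd1.1 hd1.2
    obtain ⟨A, Bs⟩ := cone_sin (hσq ilast) (hσq (nxt ilast)) hzq h1 hβ hγ hrep
    obtain ⟨k, hk⟩ := hek z hz
    have hA : 0 < Real.sin (f z - f (σ ilast)) := A
    have hB : 0 < Real.sin (f (σ (nxt ilast)) - f z) := Bs
    rw [hσf] at hA
    rw [hσf, hnxtlast] at hB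
    -- bounds: e i0f ≤ f z ≤ e ilast
    have hk1 : e i0f ≤ f z := by rw [← hk]; exact emono _ _ (by omega)
    have hk2 : f z ≤ e ilast := by
      rw [← hk]
      exact emono _ _ (by have := k.isLt; omega)
    have WA := sin_window (by linarith) (by linarith) hA
    have WB := sin_window (by linarith) (by linarith) hB
    rcases WA with ⟨wa1, wa2⟩ | wa
    · linarith
    · rcases WB with ⟨wb1, wb2⟩ | wb
      · linarith
      · linarith
  have gapne : ∀ i j : Fin m, i ≠ j → e j - e i ≠ π := by
    intro i j hij hpi
    have hzero : Real.sin (f (σ j) - f (σ i)) = 0 := by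
      rw [hσf, hσf, hpi, Real.sin_pi]
    have hcross : crossIm (σ i - q) (σ j - q) = 0 := by
      rw [crossIm_eq]
      have : arg (σ j - q) - arg (σ i - q) = f (σ j) - f (σ i) := rfl
      rw [this, hzero, mul_zero]
    have hcol := collinear_of_crossIm_zero (hσq i) hcross
    exact hgp q hqS (σ i) (hSmem _ (hσP i)) (σ j) (hSmem _ (hσP j))
      (Ne.symm (hσq i)) (Ne.symm (hσq j)) (fun h => hij (hσinj h)) hcol
  have range2pi : e ilast - e i0f < 2 * π := by
    have h1 := hbnd ilast
    have h2 := hbnd i0f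
    have hpi := Real.pi_pos
    linarith
  have htwo : ∀ i j : Fin m, (i : ℕ) + 1 < m → (j : ℕ) + 1 < m → i ≠ j →
      π < e (nxt i) - e i → e (nxt j) - e j < π := by
    intro i j hi hj hij hgi
    by_contra hcon
    push_neg at hcon
    -- sum of two gaps ≤ range < 2π
    have key : ∀ a c : Fin m, (a : ℕ) + 1 < m → (c : ℕ) + 1 < m → (a : ℕ) < (c : ℕ) →
        (e (nxt a) - e a) + (e (nxt c) - e c) ≤ e ilast - e i0f := by
      intro a c ha hc hac
      have h1 : e i0f ≤ e a := emono _ _ (by omega)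
      have h2 : e (nxt a) ≤ e c := by
        apply emono
        rw [hnxtval, if_pos ha]
        omega
      have h3 : e (nxt c) ≤ e ilast := by
        apply emono
        rw [hnxtval, if_pos hc]
        omega
      linarith
    rcases Nat.lt_or_ge (i : ℕ) (j : ℕ) with h | h
    · have := key i j hi hj h
      linarith
    · have hne : (j : ℕ) < (i : ℕ) := by
        rcases Nat.lt_or_ge (j : ℕ) (i : ℕ) with h' | h'
        · exact h'
        · exact absurd (Fin.ext (by omega)) hij
      have := key j i hj hi hne
      linarith
  -- there is at most one bad edge
  have hexi0 : ∃ i0 : Fin m, ∀ i : Fin m, i ≠ i0 → Good i := by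
    by_cases hL : ∃ i : Fin m, (i : ℕ) + 1 < m ∧ π < e (nxt i) - e i
    · obtain ⟨i0, hi0lt, hi0gap⟩ := hL
      refine ⟨i0, fun i hi => ?_⟩
      by_cases hlin : (i : ℕ) + 1 < m
      · exact goodlin i hlin (htwo i0 i hi0lt hlin (Ne.symm hi) hi0gap)
      · have : i = ilast := Fin.ext (by have := i.isLt; simp only [hilast]; omega)
        rw [this]
        apply goodwrap
        have h1 : e i0f ≤ e i0 := emono _ _ (by omega)
        have h2 : e (nxt i0) ≤ e ilast := by
          apply emono
          rw [hnxtval, if_pos hi0lt]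
          omega
        linarith
    · push_neg at hL
      refine ⟨ilast, fun i hi => ?_⟩
      have hlin : (i : ℕ) + 1 < m := by
        have := i.isLt
        rcases Nat.lt_or_ge ((i : ℕ) + 1) m with h | h
        · exact h
        · exact absurd (Fin.ext (by omega)) hi
      have hle := hL i hlin
      have hne := gapne i (nxt i) (fun h => hnxtne i h.symm)
      have hlt : e i < e (nxt i) := by
        rw [elt, hnxtval, if_pos hlin]
        omega
      apply goodlin i hlin
      rcases lt_or_eq_of_le hle with h | h
      · exact h
      · exact absurd h hne
  -- counting
  obtain ⟨i0, hi0⟩ := hexi0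
  have hqBc : q ∈ Bc := by simp [hBc, hqB, hqC]
  have hBecard : bb = (Bc.erase q).card + 1 := by
    rw [Finset.card_erase_of_mem hqBc]
    omega
  set S1 : Finset (Fin m) := Finset.univ.filter (fun i => σ i ∈ B) with hS1
  set S2 : Finset (Fin m) := Finset.univ.filter (fun i => σ (nxt i) ∈ B) with hS2
  have hS1card : S1.card = (Bc.erase q).card := by
    apply Finset.card_bij (fun i _ => σ i)
    · intro a ha
      rw [hS1, Finset.mem_filter] at ha
      obtain ⟨hq', hmem, hCmem⟩ := (hPmem _).1 (hσP a)
      refine Finset.mem_erase.2 ⟨hq', ?_⟩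
      rw [hBc, Finset.mem_filter]
      exact ⟨ha.2, hCmem⟩
    · intro a _ b _ hab
      exact hσinj hab
    · intro z hz
      rw [Finset.mem_erase] at hz
      have hzB : z ∈ B := (Finset.mem_filter.1 hz.2).1
      have hzC : z ∈ C := (Finset.mem_filter.1 hz.2).2
      have hzP : z ∈ P := (hPmem z).2 ⟨hz.1, Or.inr hzB, hzC⟩
      obtain ⟨i, hi⟩ := hσsurj z hzP
      exact ⟨i, by rw [hS1, Finset.mem_filter]; exact ⟨Finset.mem_univ _, by rw [hi]; exact hzB⟩, hi⟩
  have hS2card : S2.card = S1.card := by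
    apply Finset.card_bij (fun i _ => nxt i)
    · intro a ha
      rw [hS2, Finset.mem_filter] at ha
      rw [hS1, Finset.mem_filter]
      exact ⟨Finset.mem_univ _, ha.2⟩
    · intro a _ b _ hab
      exact hnxtinj hab
    · intro j hj
      rw [hS1, Finset.mem_filter] at hj
      refine ⟨prv j, ?_, hnp j⟩
      rw [hS2, Finset.mem_filter, hnp j]
      exact ⟨Finset.mem_univ _, hj.2⟩
  set G : Finset (Fin m) := Finset.univ.filter
    (fun i => Good i ∧ σ i ∈ R ∧ σ (nxt i) ∈ R) with hG
  have hcover : (Finset.univ : Finset (Fin m)) ⊆ G ∪ ({i0} ∪ (S1 ∪ S2)) := by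
    intro i _
    rw [Finset.mem_union, Finset.mem_union, Finset.mem_union]
    by_cases h0 : i = i0
    · exact Or.inr (Or.inl (by simp [h0]))
    have hGd := hi0 i h0
    by_cases h2 : σ i ∈ R
    · by_cases h3 : σ (nxt i) ∈ R
      · exact Or.inl (by rw [hG, Finset.mem_filter]; exact ⟨Finset.mem_univ _, hGd, h2, h3⟩)
      · have : σ (nxt i) ∈ B := by
          rcases ((hPmem _).1 (hσP (nxt i))).2.1 with h | h
          · exact absurd h h3
          · exact h
        exact Or.inr (Or.inr (Or.inr (by rw [hS2, Finset.mem_filter]; exact ⟨Finset.mem_univ _, this⟩)))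
    · have : σ i ∈ B := by
        rcases ((hPmem _).1 (hσP i)).2.1 with h | h
        · exact absurd h h2
        · exact h
      exact Or.inr (Or.inr (Or.inl (by rw [hS1, Finset.mem_filter]; exact ⟨Finset.mem_univ _, this⟩)))
  have hGlb : r ≤ G.card + bb := by
    have h1 : m ≤ (G ∪ ({i0} ∪ (S1 ∪ S2))).card := by
      have := Finset.card_le_card hcover
      rwa [Finset.card_univ, Fintype.card_fin] at this
    have h2 := Finset.card_union_le G ({i0} ∪ (S1 ∪ S2))
    have h3 := Finset.card_union_le ({i0} : Finset (Fin m)) (S1 ∪ S2)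
    have h4 := Finset.card_union_le S1 S2
    have h5 : ({i0} : Finset (Fin m)).card = 1 := Finset.card_singleton _
    omega
  refine ⟨G.image (fun i => ({σ i, σ (nxt i), q} : Set ℂ)), ?_, ?_⟩
  · intro T hT
    rw [Finset.mem_image] at hT
    obtain ⟨i, hiG, rfl⟩ := hT
    rw [hG, Finset.mem_filter] at hiG
    obtain ⟨-, hGd, hxR, hyR⟩ := hiG
    have hxy : σ i ≠ σ (nxt i) := fun h => hnxtne i (hσinj h).symm
    have hxC : σ i ∈ C := ((hPmem _).1 (hσP i)).2.2
    have hyC : σ (nxt i) ∈ C := ((hPmem _).1 (hσP (nxt i))).2.2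
    refine ⟨σ i, σ (nxt i), hxR, hyR, hxy, hxC, hyC, rfl, ?_⟩
    apply empty_triangle hgp hC hqS (hSmem _ (hσP i)) (hSmem _ (hσP (nxt i)))
      hqC hxC hyC (hσq i) (hσq (nxt i)) hxy
    intro z hzS hzC hzq β γ hβ hγ hrep
    have hzP : z ∈ P := by
      refine (hPmem z).2 ⟨hzq, ?_, hzC⟩
      rcases hzS with h | h
      · exact Or.inl h
      · exact Or.inr h
    exact hGd z hzP β γ hβ hγ hrep
  · by_cases hm3 : 3 ≤ m
    · have hinj : Set.InjOn (fun i => ({σ i, σ (nxt i), q} : Set ℂ)) G := by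
        intro i hi j hj hset
        simp only at hset
        have hmemi : σ i ∈ ({σ j, σ (nxt j), q} : Set ℂ) := by
          rw [← hset]; left; rfl
        have hmemi2 : σ (nxt i) ∈ ({σ j, σ (nxt j), q} : Set ℂ) := by
          rw [← hset]; right; left; rfl
        have h1 : σ i = σ j ∨ σ i = σ (nxt j) := by
          rcases hmemi with h | h | h
          · exact Or.inl h
          · exact Or.inr h
          · exact absurd h (hσq i)
        have h2 : σ (nxt i) = σ j ∨ σ (nxt i) = σ (nxt j) := by
          rcases hmemi2 with h | h | h
          · exact Or.inl h
          · exact Or.inr h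
          · exact absurd h (hσq (nxt i))
        rcases h1 with h1 | h1
        · exact hσinj h1
        · rcases h2 with h2 | h2
          · -- i = nxt j and nxt i = j : impossible for m ≥ 3
            have e1 : i = nxt j := hσinj h1
            have e2 : nxt i = j := hσinj h2
            have v1 := congrArg Fin.val e1
            have v2 := congrArg Fin.val e2
            rw [hnxtval] at v1 v2
            have hi' := i.isLt
            have hj' := j.isLt
            split_ifs at v1 v2 <;> omega
          · exact hnxtinj (hσinj h2)
      rw [Finset.card_image_of_injOn hinj]
      omega
    · -- m = 2 : then r = 2, bb = 1
      have hm2' : m = 2 := by omega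
      have hrbbn : bb < r := by exact_mod_cast hrbb
      have hbb1' : bb = 1 := by omega
      have hr2 : r = 2 := by omega
      have hGne : G.Nonempty := by
        rw [← Finset.card_pos]
        omega
      obtain ⟨i, hiG⟩ := hGne
      have : ({σ i, σ (nxt i), q} : Set ℂ) ∈ G.image (fun i => ({σ i, σ (nxt i), q} : Set ℂ)) :=
        Finset.mem_image_of_mem _ hiG
      have hpos : 1 ≤ (G.image (fun i => ({σ i, σ (nxt i), q} : Set ℂ))).card :=
        Finset.card_pos.2 ⟨_, this⟩
      have : ((r : ℤ) - bb) = 1 := by rw [hbb1', hr2]; norm_num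
      rw [this]
      exact_mod_cast hpos

/-- The number of empty red-red-blue triangles inside a convex region `C` is at least
`|B ∩ C| · (|R ∩ C| − |B ∩ C|)`. -/
theorem stmt_2 (R B : Finset ℂ) (hdisj : Disjoint R B) (hgp : GenPos (↑R ∪ ↑B))
    (C : Set ℂ) (hC : Convex ℝ C) :
    ((↑B ∩ C : Set ℂ).ncard : ℤ) * (((↑R ∩ C : Set ℂ).ncard : ℤ) - ((↑B ∩ C : Set ℂ).ncard : ℤ))
      ≤ ({T ∈ emptyRRB R B | T ⊆ C}.ncard : ℤ) := by
  classical
  set S : Set (Set ℂ) := {T ∈ emptyRRB R B | T ⊆ C} with hS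
  have hSfin : S.Finite := by
    apply Set.Finite.subset (Set.Finite.image (fun p : ℂ × ℂ × ℂ => ({p.1, p.2.1, p.2.2} : Set ℂ))
      (((R.finite_toSet).prod ((R.finite_toSet).prod (B.finite_toSet)))))
    rintro T ⟨⟨a, b, c, ha, hb, hc, hab, rfl, hhull⟩, hTC⟩
    exact ⟨(a, b, c), ⟨ha, hb, hc⟩, rfl⟩
  set Bcf : Finset ℂ := B.filter (· ∈ C) with hBcf
  have hBcard : (↑B ∩ C : Set ℂ).ncard = Bcf.card := by
    rw [← Set.ncard_coe_finset]
    congr 1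
    ext z
    simp [hBcf]
  have hex : ∀ q ∈ Bcf, ∃ Tq : Finset (Set ℂ),
      (∀ T ∈ Tq, ∃ x y : ℂ, x ∈ R ∧ y ∈ R ∧ x ≠ y ∧ x ∈ C ∧ y ∈ C ∧ T = {x, y, q} ∧
        convexHull ℝ ({x, y, q} : Set ℂ) ∩ (↑R ∪ ↑B : Set ℂ) = ({x, y, q} : Set ℂ)) ∧
      ((↑R ∩ C : Set ℂ).ncard : ℤ) - ((↑B ∩ C : Set ℂ).ncard : ℤ) ≤ (Tq.card : ℤ) := by
    intro q hq
    rw [hBcf, Finset.mem_filter] at hq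
    exact perq R B hdisj hgp C hC hq.1 hq.2
  choose 𝒯 hT1 hT2 using hex
  set 𝒯' : ℂ → Finset (Set ℂ) := fun q => if h : q ∈ Bcf then 𝒯 q h else ∅ with h𝒯'
  have hT1' : ∀ q ∈ Bcf, ∀ T ∈ 𝒯' q, ∃ x y : ℂ, x ∈ R ∧ y ∈ R ∧ x ≠ y ∧ x ∈ C ∧ y ∈ C ∧
      T = {x, y, q} ∧
      convexHull ℝ ({x, y, q} : Set ℂ) ∩ (↑R ∪ ↑B : Set ℂ) = ({x, y, q} : Set ℂ) := by
    intro q hq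
    rw [h𝒯']
    simp only [dif_pos hq]
    exact hT1 q hq
  have hT2' : ∀ q ∈ Bcf, ((↑R ∩ C : Set ℂ).ncard : ℤ) - ((↑B ∩ C : Set ℂ).ncard : ℤ)
      ≤ ((𝒯' q).card : ℤ) := by
    intro q hq
    rw [h𝒯']
    simp only [dif_pos hq]
    exact hT2 q hq
  -- all triangles land in S
  have hsub : ∀ q ∈ Bcf, ∀ T ∈ 𝒯' q, T ∈ S := by
    intro q hq T hT
    obtain ⟨x, y, hxR, hyR, hxy, hxC, hyC, rfl, hhull⟩ := hT1' q hq T hT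
    have hqBC := Finset.mem_filter.1 (by rwa [hBcf] at hq)
    constructor
    · exact ⟨x, y, q, hxR, hyR, hqBC.1, hxy, rfl, hhull⟩
    · rintro z (rfl | rfl | rfl)
      · exact hxC
      · exact hyC
      · exact hqBC.2
  -- blue vertex determines the component
  have hdisjT : ∀ q1 ∈ Bcf, ∀ q2 ∈ Bcf, q1 ≠ q2 → Disjoint (𝒯' q1) (𝒯' q2) := by
    intro q1 hq1 q2 hq2 hne
    rw [Finset.disjoint_left]
    intro T hT1m hT2m
    obtain ⟨x, y, hxR, hyR, hxy, hxC, hyC, hTeq, -⟩ := hT1' q1 hq1 T hT1m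
    obtain ⟨x', y', hxR', hyR', -, -, -, hTeq', -⟩ := hT1' q2 hq2 T hT2m
    have hq2B : q2 ∈ B := (Finset.mem_filter.1 (by rwa [hBcf] at hq2)).1
    have : q2 ∈ ({x, y, q1} : Set ℂ) := by
      rw [← hTeq, hTeq']
      right; right; rfl
    rcases this with rfl | rfl | h
    · exact (Finset.disjoint_left.1 hdisj hxR) hq2B
    · exact (Finset.disjoint_left.1 hdisj hyR) hq2B
    · exact hne h.symm
  have hbiU : (Bcf.biUnion 𝒯').card = ∑ q ∈ Bcf, (𝒯' q).card :=
    Finset.card_biUnion hdisjT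
  have hbiUsub : Bcf.biUnion 𝒯' ⊆ hSfin.toFinset := by
    intro T hT
    rw [Finset.mem_biUnion] at hT
    obtain ⟨q, hq, hTq⟩ := hT
    rw [Set.Finite.mem_toFinset]
    exact hsub q hq T hTq
  have hcard1 : (Bcf.biUnion 𝒯').card ≤ S.ncard := by
    rw [Set.ncard_eq_toFinset_card _ hSfin]
    exact Finset.card_le_card hbiUsub
  -- final chain
  calc ((↑B ∩ C : Set ℂ).ncard : ℤ) * (((↑R ∩ C : Set ℂ).ncard : ℤ) - ((↑B ∩ C : Set ℂ).ncard : ℤ))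
      = ∑ _q ∈ Bcf, (((↑R ∩ C : Set ℂ).ncard : ℤ) - ((↑B ∩ C : Set ℂ).ncard : ℤ)) := by
        rw [Finset.sum_const, hBcard, nsmul_eq_mul]
    _ ≤ ∑ q ∈ Bcf, ((𝒯' q).card : ℤ) := Finset.sum_le_sum hT2'
    _ = ((∑ q ∈ Bcf, (𝒯' q).card : ℕ) : ℤ) := by push_cast; rfl
    _ = ((Bcf.biUnion 𝒯').card : ℤ) := by rw [hbiU]
    _ ≤ (S.ncard : ℤ) := by exact_mod_cast hcard1
end

section
/- Let R, B ⊂ ℝ² be finite disjoint sets with R ∪ B in general position, C ⊆ ℝ² convex, and let b ∈ B ∩ C. If |R ∩ C| − |B ∩ C| > 0, then b is a vertex of at least |R ∩ C| − |B ∩ C| empty red-red-blue triangles with all vertices in C. -/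
open Complex Set Real

section AuxTriangleLemmas

noncomputable def Fang (b d p : ℂ) : ℝ := Complex.arg ((p - b) * (starRingEnd ℂ) d)

lemma Fang_mem_Ioc (b d p : ℂ) : Fang b d p ∈ Set.Ioc (-π) π :=
  Complex.arg_mem_Ioc _

lemma Fang_coe (b d p : ℂ) (hp : p - b ≠ 0) (hd : d ≠ 0) :
    ((Fang b d p : ℝ) : Real.Angle) = (((p - b).arg : Real.Angle)) - ((d.arg : Real.Angle)) := by
  unfold Fang
  rw [Complex.arg_mul_coe_angle hp (by simpa using hd), Complex.arg_conj_coe_angle,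
    ← sub_eq_add_neg]

lemma cross_eq (u w : ℂ) (hu : u ≠ 0) (hw : w ≠ 0) :
    ((starRingEnd ℂ) u * w).im
      = ‖u‖ * ‖w‖ * Real.sin (((w.arg - u.arg : ℝ) : Real.Angle).toReal) := by
  have h1 : ((((starRingEnd ℂ) u * w).arg : Real.Angle)) = ((w.arg - u.arg : ℝ) : Real.Angle) := by
    rw [Complex.arg_mul_coe_angle (by simpa using hu) hw, Complex.arg_conj_coe_angle]
    rw [Real.Angle.coe_sub]
    abel
  have h2 : (((starRingEnd ℂ) u * w).arg) = (((w.arg - u.arg : ℝ) : Real.Angle)).toReal := by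
    rw [← h1, Complex.arg_coe_angle_toReal_eq_arg]
  have h3 := Complex.sin_arg ((starRingEnd ℂ) u * w)
  have habs : ‖(starRingEnd ℂ) u * w‖ = ‖u‖ * ‖w‖ := by
    simp [map_mul]
  rw [h2, habs] at h3
  rw [h3]
  have h4 : ‖u‖ ≠ 0 := by simpa using hu
  have h5 : ‖w‖ ≠ 0 := by simpa using hw
  field_simp

lemma cross_pos_iff (u w : ℂ) (hu : u ≠ 0) (hw : w ≠ 0) :
    0 < ((starRingEnd ℂ) u * w).im
      ↔ (((w.arg - u.arg : ℝ) : Real.Angle)).toReal ∈ Set.Ioo 0 π := by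
  rw [cross_eq u w hu hw]
  have habs : 0 < ‖u‖ * ‖w‖ :=
    mul_pos (norm_pos_iff.2 hu) (norm_pos_iff.2 hw)
  constructor
  · intro h
    have hsin : 0 < Real.sin ((((w.arg - u.arg : ℝ)) : Real.Angle).toReal) := by
      by_contra hs
      push_neg at hs
      nlinarith
    set t := (((w.arg - u.arg : ℝ)) : Real.Angle).toReal with ht
    have hmem := Real.Angle.toReal_mem_Ioc (((w.arg - u.arg : ℝ)) : Real.Angle)
    rw [← ht] at hmem
    constructor
    · by_contra h0
      push_neg at h0
      have := Real.sin_nonpos_of_nonpos_of_neg_pi_le h0 (le_of_lt hmem.1)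
      linarith
    · rcases lt_or_eq_of_le hmem.2 with h' | h'
      · exact h'
      · rw [h'] at hsin; simp [Real.sin_pi] at hsin
  · intro h
    exact mul_pos habs (Real.sin_pos_of_pos_of_lt_pi h.1 h.2)

lemma cross_zero_real_multiple (u w : ℂ) (hu : u ≠ 0)
    (h : ((starRingEnd ℂ) u * w).im = 0) : ∃ t : ℝ, w = t • u := by
  obtain ⟨r, hr⟩ : ∃ r : ℝ, (starRingEnd ℂ) u * w = (r : ℂ) :=
    ⟨((starRingEnd ℂ) u * w).re, Complex.ext rfl (by simpa using h)⟩
  have hnz : Complex.normSq u ≠ 0 := by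
    simpa [Complex.normSq_eq_zero] using hu
  have key : (Complex.normSq u : ℂ) * w = (r : ℂ) * u := by
    calc (Complex.normSq u : ℂ) * w = (u * (starRingEnd ℂ) u) * w := by
          rw [Complex.mul_conj]
      _ = u * ((starRingEnd ℂ) u * w) := by ring
      _ = u * (r : ℂ) := by rw [hr]
      _ = (r : ℂ) * u := by ring
  refine ⟨r / Complex.normSq u, ?_⟩
  rw [Complex.real_smul]
  push_cast
  have hnz' : ((Complex.normSq u : ℝ) : ℂ) ≠ 0 := by exact_mod_cast hnz
  field_simp
  linear_combination key

lemma collinear_of_real_multiple {x y b : ℂ} (t : ℝ) (h : y - b = t • (x - b)) :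
    Collinear ℝ ({x, y, b} : Set ℂ) := by
  apply (collinear_iff_of_mem (show b ∈ ({x, y, b} : Set ℂ) by simp)).2
  refine ⟨x - b, ?_⟩
  intro p hp
  rcases hp with h1 | h1 | h1
  · exact ⟨1, by rw [h1]; simp⟩
  · exact ⟨t, by rw [h1, ← h]; simp⟩
  · exact ⟨0, by rw [h1]; simp⟩

lemma toReal_coe_shift_down {t : ℝ} (h1 : π < t) (h2 : t ≤ 3*π) :
    ((t : ℝ) : Real.Angle).toReal = t - 2*π := by
  have h : ((t : ℝ) : Real.Angle) = ((t - 2*π : ℝ) : Real.Angle) := by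
    rw [Real.Angle.coe_sub, Real.Angle.coe_two_pi, sub_zero]
  rw [h, Real.Angle.toReal_coe_eq_self_iff.2 ⟨by linarith, by linarith⟩]

lemma toReal_coe_shift_up {t : ℝ} (h1 : -3*π < t) (h2 : t ≤ -π) :
    ((t : ℝ) : Real.Angle).toReal = t + 2*π := by
  have h : ((t : ℝ) : Real.Angle) = ((t + 2*π : ℝ) : Real.Angle) := by
    rw [Real.Angle.coe_add, Real.Angle.coe_two_pi, add_zero]
  rw [h, Real.Angle.toReal_coe_eq_self_iff.2 ⟨by linarith, by linarith⟩]

lemma angle_between {a m c : ℝ} (hax : -π < a) (_ha : a ≤ π) (hmx : -π < m) (hm : m ≤ π)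
    (_hcx : -π < c) (hc : c ≤ π) (h1 : 0 < c - a) (h2 : c - a < π)
    (hma : (((m - a : ℝ) : Real.Angle)).toReal ∈ Set.Ioo 0 π)
    (hcm : (((c - m : ℝ) : Real.Angle)).toReal ∈ Set.Ioo 0 π) : a < m ∧ m < c := by
  have hpi := Real.pi_pos
  rcases le_or_gt (m - a) (-π) with hcase | hcase
  · have hcm' : π < c - m := by linarith
    have hcm2 : c - m ≤ 3*π := by linarith
    rw [toReal_coe_shift_down hcm' hcm2] at hcm
    have : c - m < 2*π := by linarith
    linarith [hcm.1]
  · rcases le_or_gt (m - a) π with hcase2 | hcase2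
    · rw [Real.Angle.toReal_coe_eq_self_iff.2 ⟨hcase, hcase2⟩] at hma
      have ham : a < m := by linarith [hma.1]
      refine ⟨ham, ?_⟩
      rcases le_or_gt (c - m) (-π) with hc1 | hc1
      · exfalso
        have : π < m - a := by linarith
        linarith
      · rcases le_or_gt (c - m) π with hc2 | hc2
        · rw [Real.Angle.toReal_coe_eq_self_iff.2 ⟨hc1, hc2⟩] at hcm
          linarith [hcm.1]
        · exfalso
          have hc3 : c - m ≤ 3*π := by linarith
          rw [toReal_coe_shift_down hc2 hc3] at hcm
          have : c - m < 2*π := by linarith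
          linarith [hcm.1]
    · exfalso
      have h3 : m - a ≤ 3*π := by linarith
      rw [toReal_coe_shift_down hcase2 h3] at hma
      have : m - a < 2*π := by linarith
      linarith [hma.1]

lemma mem_hull_decomp {x y b p : ℂ} (hp : p ∈ convexHull ℝ ({x, y, b} : Set ℂ)) :
    ∃ s t : ℝ, 0 ≤ s ∧ 0 ≤ t ∧ p - b = s • (x - b) + t • (y - b) := by
  have hset : ({x, y, b} : Set ℂ) = insert b {x, y} := by
    ext z; simp; tauto
  rw [hset, convexHull_insert (by simp : ({x, y} : Set ℂ).Nonempty), mem_convexJoin] at hp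
  obtain ⟨a, ha, z, hz, hseg⟩ := hp
  rw [Set.mem_singleton_iff] at ha
  rw [convexHull_pair] at hz
  obtain ⟨γ, δ, hγ0, hδ0, hγδ, hz2⟩ := hz
  obtain ⟨α, β, hα0, hβ0, hαβ, hp2⟩ := hseg
  rw [ha] at hp2
  refine ⟨β * γ, β * δ, mul_nonneg hβ0 hγ0, mul_nonneg hβ0 hδ0, ?_⟩
  have hα : α = 1 - β := by linarith
  have hγ : γ = 1 - δ := by linarith
  have e1 : p - b = β • (z - b) := by
    rw [← hp2, hα]; module
  have e2 : z - b = γ • (x - b) + δ • (y - b) := by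
    rw [← hz2, hγ]; module
  rw [e1, e2]; module

lemma real_multiple_of_fang_diff {b d₀ : ℂ} (hd₀ : d₀ ≠ 0)
    {x y : ℂ} (hxb : x - b ≠ 0) (hyb : y - b ≠ 0)
    (hsin : Real.sin (((Fang b d₀ y - Fang b d₀ x : ℝ) : Real.Angle)).toReal = 0) :
    ∃ t : ℝ, y - b = t • (x - b) := by
  set u := (x - b) * (starRingEnd ℂ) d₀ with hu
  set v := (y - b) * (starRingEnd ℂ) d₀ with hv
  have hu0 : u ≠ 0 := mul_ne_zero hxb (by simpa using hd₀)
  have hv0 : v ≠ 0 := mul_ne_zero hyb (by simpa using hd₀)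
  have hcz : ((starRingEnd ℂ) u * v).im = 0 := by
    rw [cross_eq u v hu0 hv0]
    have : v.arg - u.arg = Fang b d₀ y - Fang b d₀ x := rfl
    rw [this, hsin, mul_zero]
  obtain ⟨t, ht⟩ := cross_zero_real_multiple u v hu0 hcz
  refine ⟨t, ?_⟩
  have h2 : ((y - b) - t • (x - b)) * (starRingEnd ℂ) d₀ = 0 := by
    rw [sub_mul, smul_mul_assoc, ← hv, ← hu, ht, sub_self]
  rcases mul_eq_zero.1 h2 with h3 | h3
  · exact sub_eq_zero.1 h3
  · exact absurd h3 (by simpa using hd₀)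

lemma good_frame (S' : Finset ℂ) (b : ℂ) (hb : ∀ p ∈ S', p ≠ b)
    (hcol : ∀ p ∈ S', ∀ q ∈ S', p ≠ q → ¬ Collinear ℝ ({p, q, b} : Set ℂ))
    (hne : S'.Nonempty) :
    ∃ d : ℂ, d ≠ 0 ∧ ∀ x ∈ S', ∀ y ∈ S',
      Fang b d x < Fang b d y →
      (∀ p ∈ S', ¬(Fang b d x < Fang b d p ∧ Fang b d p < Fang b d y)) →
      Fang b d y - Fang b d x < π := by
  have hpi := Real.pi_pos
  obtain ⟨q₀, hq₀⟩ := hne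
  set d₀ := q₀ - b with hd₀def
  have hd₀ : d₀ ≠ 0 := sub_ne_zero.2 (hb q₀ hq₀)
  by_cases hgood : ∀ x ∈ S', ∀ y ∈ S',
      Fang b d₀ x < Fang b d₀ y →
      (∀ p ∈ S', ¬(Fang b d₀ x < Fang b d₀ p ∧ Fang b d₀ p < Fang b d₀ y)) →
      Fang b d₀ y - Fang b d₀ x < π
  · exact ⟨d₀, hd₀, hgood⟩
  push_neg at hgood
  obtain ⟨x, hx, y, hy, hlt, hnob, hge⟩ := hgood
  have hxb : x - b ≠ 0 := sub_ne_zero.2 (hb x hx)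
  have hyb : y - b ≠ 0 := sub_ne_zero.2 (hb y hy)
  have hxy : x ≠ y := by intro h; rw [h] at hlt; exact lt_irrefl _ hlt
  have hne2 : Fang b d₀ y - Fang b d₀ x ≠ π := by
    intro heq
    have hsin : Real.sin (((Fang b d₀ y - Fang b d₀ x : ℝ) : Real.Angle)).toReal = 0 := by
      rw [heq, Real.Angle.toReal_coe_eq_self_iff.2 ⟨by linarith, le_refl _⟩, Real.sin_pi]
    obtain ⟨t, ht⟩ := real_multiple_of_fang_diff hd₀ hxb hyb hsin
    exact hcol x hx y hy hxy (collinear_of_real_multiple t ht)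
  have hgt : π < Fang b d₀ y - Fang b d₀ x := lt_of_le_of_ne hge (Ne.symm hne2)
  refine ⟨y - b, hyb, ?_⟩
  have hclaim : ∀ p ∈ S', 0 ≤ Fang b (y - b) p ∧ Fang b (y - b) p < π := by
    intro p hp
    have hpb : p - b ≠ 0 := sub_ne_zero.2 (hb p hp)
    have hid : ((Fang b (y - b) p : ℝ) : Real.Angle)
        = ((Fang b d₀ p - Fang b d₀ y : ℝ) : Real.Angle) := by
      rw [Fang_coe b (y - b) p hpb hyb, Real.Angle.coe_sub,
        Fang_coe b d₀ p hpb hd₀, Fang_coe b d₀ y hyb hd₀]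
      have : ((y - b).arg : Real.Angle) = Fang b d₀ y + d₀.arg := by
        rw [Fang_coe b d₀ y hyb hd₀]; abel
      rw [this]
      abel
    have htr : Fang b (y - b) p
        = (((Fang b d₀ p - Fang b d₀ y : ℝ) : Real.Angle)).toReal := by
      rw [← hid, Real.Angle.toReal_coe_eq_self_iff.2
        ⟨(Fang_mem_Ioc b (y - b) p).1, (Fang_mem_Ioc b (y - b) p).2⟩]
    have hAp := Fang_mem_Ioc b d₀ p
    have hAy := Fang_mem_Ioc b d₀ y
    have hAx := Fang_mem_Ioc b d₀ x
    have hY0 : 0 < Fang b d₀ y := by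
      have := hAx.1; linarith
    rcases le_or_gt (Fang b d₀ y) (Fang b d₀ p) with hcase | hcase
    · have hmem : Fang b d₀ p - Fang b d₀ y ∈ Set.Ioc (-π) π := by
        constructor
        · linarith [hAp.1, hAy.2]
        · linarith [hAp.2]
      rw [htr, Real.Angle.toReal_coe_eq_self_iff.2 ⟨hmem.1, hmem.2⟩]
      constructor
      · linarith
      · linarith [hAp.2]
    · have hpx : Fang b d₀ p ≤ Fang b d₀ x := by
        by_contra hcon
        push_neg at hcon
        exact absurd (hnob p hp hcon) (not_le.2 hcase)
      have h1 : Fang b d₀ p - Fang b d₀ y ≤ -π := by linarith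
      have h2 : -3*π < Fang b d₀ p - Fang b d₀ y := by
        have := hAp.1; have := hAy.2; linarith
      rw [htr, toReal_coe_shift_up h2 h1]
      constructor
      · have := hAp.1; have := hAy.2; linarith
      · linarith
  intro x' hx' y' hy' hlt' _
  have h1 := hclaim x' hx'
  have h2 := hclaim y' hy'
  linarith [h1.1, h2.2]

lemma crossIm_s3 (z w : ℂ) : ((starRingEnd ℂ) z * w).im = z.re * w.im - z.im * w.re := by
  simp [Complex.mul_im, Complex.conj_re, Complex.conj_im]
  ring

lemma cone_between {b d x y p : ℂ} (hd : d ≠ 0)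
    (hxb : x - b ≠ 0) (hyb : y - b ≠ 0) (hpb : p - b ≠ 0)
    (hlt : Fang b d x < Fang b d y) (hdiff : Fang b d y - Fang b d x < π)
    {s t : ℝ} (hs : 0 < s) (ht : 0 < t) (hdecomp : p - b = s • (x - b) + t • (y - b)) :
    Fang b d x < Fang b d p ∧ Fang b d p < Fang b d y := by
  have hpi := Real.pi_pos
  have hdc : (starRingEnd ℂ) d ≠ 0 := by simpa using hd
  set u := (x - b) * (starRingEnd ℂ) d with hu
  set v := (y - b) * (starRingEnd ℂ) d with hv
  set w := (p - b) * (starRingEnd ℂ) d with hw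
  have hu0 : u ≠ 0 := mul_ne_zero hxb hdc
  have hv0 : v ≠ 0 := mul_ne_zero hyb hdc
  have hw0 : w ≠ 0 := mul_ne_zero hpb hdc
  have hwsum : w = s • u + t • v := by
    rw [hw, hu, hv, hdecomp, add_mul, smul_mul_assoc, smul_mul_assoc]
  have hwre : w.re = s * u.re + t * v.re := by
    rw [hwsum]; simp [Complex.add_re, Complex.smul_re]
  have hwim : w.im = s * u.im + t * v.im := by
    rw [hwsum]; simp [Complex.add_im, Complex.smul_im]
  have harg_uv : v.arg - u.arg = Fang b d y - Fang b d x := rfl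
  have c_uv : 0 < u.re * v.im - u.im * v.re := by
    have h := (cross_pos_iff u v hu0 hv0).2 (by
      rw [harg_uv, Real.Angle.toReal_coe_eq_self_iff.2 ⟨by linarith, by linarith⟩]
      exact ⟨by linarith, hdiff⟩)
    rwa [crossIm_s3] at h
  have c_uw : 0 < u.re * w.im - u.im * w.re := by
    have h : u.re * w.im - u.im * w.re = t * (u.re * v.im - u.im * v.re) := by
      rw [hwre, hwim]; ring
    rw [h]; positivity
  have c_wv : 0 < w.re * v.im - w.im * v.re := by
    have h : w.re * v.im - w.im * v.re = s * (u.re * v.im - u.im * v.re) := by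
      rw [hwre, hwim]; ring
    rw [h]; positivity
  have h_uw := (cross_pos_iff u w hu0 hw0).1 (by rwa [crossIm_s3])
  have h_wv := (cross_pos_iff w v hw0 hv0).1 (by rwa [crossIm_s3])
  have harg_uw : w.arg - u.arg = Fang b d p - Fang b d x := rfl
  have harg_wv : v.arg - w.arg = Fang b d y - Fang b d p := rfl
  rw [harg_uw] at h_uw
  rw [harg_wv] at h_wv
  have hbx := Complex.arg_mem_Ioc u
  have hbp := Complex.arg_mem_Ioc w
  have hby := Complex.arg_mem_Ioc v
  exact angle_between hbx.1 hbx.2 hbp.1 hbp.2 hby.1 hby.2 (by linarith) hdiff h_uw h_wv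

lemma run_count (N : ℕ) (P : ℕ → Prop) [DecidablePred P] :
    ((Finset.range N).filter P).card
      ≤ ((Finset.range (N-1)).filter (fun i => P i ∧ P (i+1))).card
        + ((Finset.range N).filter (fun i => ¬ P i)).card + 1 := by
  classical
  set T : Finset ℕ := ((Finset.range (N-1)).filter (fun i => P i ∧ P (i+1)))
      ∪ (((Finset.range N).filter (fun i => ¬ P i)).image (fun j => N + j))
      ∪ {2*N+5} with hT
  have hle : T.card ≤ ((Finset.range (N-1)).filter (fun i => P i ∧ P (i+1))).card
      + ((Finset.range N).filter (fun i => ¬ P i)).card + 1 := by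
    calc T.card ≤ (((Finset.range (N-1)).filter (fun i => P i ∧ P (i+1)))
        ∪ (((Finset.range N).filter (fun i => ¬ P i)).image (fun j => N + j))).card + 1 := by
          rw [hT]; exact le_trans (Finset.card_union_le _ _) (by simp)
      _ ≤ _ := by
          have := Finset.card_union_le ((Finset.range (N-1)).filter (fun i => P i ∧ P (i+1)))
            (((Finset.range N).filter (fun i => ¬ P i)).image (fun j => N + j))
          have h2 := Finset.card_image_le (s := (Finset.range N).filter (fun i => ¬ P i))
            (f := fun j => N + j)
          omega
  refine le_trans (Finset.card_le_card_of_injOn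
    (fun i => if i+1 < N then (if P (i+1) then i else N + (i+1)) else 2*N+5)
    ?_ ?_) hle
  · intro i hi
    simp only [Finset.coe_filter, Finset.mem_coe, Set.mem_setOf_eq, Finset.mem_filter,
      Finset.mem_range] at hi
    obtain ⟨hiN, hPi⟩ := hi
    show (if i+1 < N then (if P (i+1) then i else N + (i+1)) else 2*N+5) ∈ T
    split_ifs with h1 h2
    · apply Finset.mem_union_left
      apply Finset.mem_union_left
      simp only [Finset.mem_filter, Finset.mem_range]
      exact ⟨by omega, hPi, h2⟩
    · apply Finset.mem_union_left
      apply Finset.mem_union_right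
      apply Finset.mem_image_of_mem
      simp only [Finset.mem_filter, Finset.mem_range]
      exact ⟨h1, h2⟩
    · apply Finset.mem_union_right
      simp
  · intro i hi j hj hij
    simp only [Finset.coe_filter, Set.mem_setOf_eq, Finset.mem_range] at hi hj
    have hij' : (if i+1 < N then (if P (i+1) then i else N + (i+1)) else 2*N+5)
        = (if j+1 < N then (if P (j+1) then j else N + (j+1)) else 2*N+5) := hij
    split_ifs at hij' <;> omega

end AuxTriangleLemmas

lemma empty_triangle_of_consecutive
    (R B : Finset ℂ) (hgp : GenPos (↑R ∪ ↑B)) (C : Set ℂ) (hC : Convex ℝ C)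
    (b : ℂ) (hbB : b ∈ B) (hbC : b ∈ C) (hbR : b ∉ R)
    (S' : Finset ℂ) (hS'sub : ∀ p ∈ S', p ∈ C ∧ (p ∈ R ∨ p ∈ B) ∧ p ≠ b)
    (hS'all : ∀ p : ℂ, p ∈ C → (p ∈ R ∨ p ∈ B) → p ≠ b → p ∈ S')
    (d : ℂ) (hd : d ≠ 0)
    (x y : ℂ) (hx : x ∈ S') (hy : y ∈ S') (hxR : x ∈ R) (hyR : y ∈ R)
    (hlt : Fang b d x < Fang b d y) (hdiff : Fang b d y - Fang b d x < π)
    (hnob : ∀ p ∈ S', ¬(Fang b d x < Fang b d p ∧ Fang b d p < Fang b d y)) :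
    ({x, y, b} : Set ℂ) ∈ emptyRRB R B := by
  have hxb : x ≠ b := (hS'sub x hx).2.2
  have hyb : y ≠ b := (hS'sub y hy).2.2
  have hxy : x ≠ y := by
    intro h; rw [h] at hlt; exact lt_irrefl _ hlt
  have hxC : x ∈ C := (hS'sub x hx).1
  have hyC : y ∈ C := (hS'sub y hy).1
  refine ⟨x, y, b, hxR, hyR, hbB, hxy, rfl, ?_⟩
  apply Set.Subset.antisymm
  · rintro p ⟨hphull, hpRB⟩
    by_contra hpnot
    simp only [Set.mem_insert_iff, Set.mem_singleton_iff, not_or] at hpnot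
    obtain ⟨hpx, hpy, hpb⟩ := hpnot
    have hhullC : convexHull ℝ ({x, y, b} : Set ℂ) ⊆ C := by
      apply convexHull_min _ hC
      rintro z (rfl | rfl | rfl) <;> assumption
    have hpC : p ∈ C := hhullC hphull
    have hpRB' : p ∈ R ∨ p ∈ B := by
      rcases hpRB with h | h
      · exact Or.inl (by exact_mod_cast h)
      · exact Or.inr (by exact_mod_cast h)
    have hpS' : p ∈ S' := hS'all p hpC hpRB' hpb
    obtain ⟨s, t, hs0, ht0, hdecomp⟩ := mem_hull_decomp hphull
    -- memberships in ↑R ∪ ↑B for GenPos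
    have hmem : ∀ z : ℂ, z ∈ S' → (z : ℂ) ∈ (↑R ∪ ↑B : Set ℂ) := by
      intro z hz
      rcases (hS'sub z hz).2.1 with h | h
      · exact Or.inl (by exact_mod_cast h)
      · exact Or.inr (by exact_mod_cast h)
    have hbRB : (b : ℂ) ∈ (↑R ∪ ↑B : Set ℂ) := Or.inr (by exact_mod_cast hbB)
    -- s and t are strictly positive
    have hs : 0 < s := by
      rcases lt_or_eq_of_le hs0 with h | h
      · exact h
      · exfalso
        have : p - b = t • (y - b) := by rw [hdecomp, ← h]; simp
        have hcol := collinear_of_real_multiple t this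
        exact hgp y (hmem y hy) p (hmem p hpS') b hbRB (Ne.symm hpy) hyb hpb hcol
    have ht : 0 < t := by
      rcases lt_or_eq_of_le ht0 with h | h
      · exact h
      · exfalso
        have : p - b = s • (x - b) := by rw [hdecomp, ← h]; simp
        have hcol := collinear_of_real_multiple s this
        exact hgp x (hmem x hx) p (hmem p hpS') b hbRB (Ne.symm hpx) hxb hpb hcol
    have hbetw := cone_between hd (sub_ne_zero.2 hxb) (sub_ne_zero.2 hyb)
      (sub_ne_zero.2 hpb) hlt hdiff hs ht hdecomp
    exact hnob p hpS' hbetw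
  · rintro p (rfl | rfl | rfl)
    · exact ⟨subset_convexHull ℝ _ (by simp), Or.inl (by exact_mod_cast hxR)⟩
    · exact ⟨subset_convexHull ℝ _ (by simp), Or.inl (by exact_mod_cast hyR)⟩
    · exact ⟨subset_convexHull ℝ _ (by simp), Or.inr (by exact_mod_cast hbB)⟩

/-- If the discrepancy `|R ∩ C| − |B ∩ C|` of a convex region `C` is positive, then each
blue point `b ∈ B ∩ C` is a vertex of at least that many empty red-red-blue triangles in `C`. -/
theorem stmt_3 (R B : Finset ℂ) (hdisj : Disjoint R B) (hgp : GenPos (↑R ∪ ↑B))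
    (C : Set ℂ) (hC : Convex ℝ C) (b : ℂ) (hb : b ∈ (↑B ∩ C : Set ℂ))
    (hdisc : (↑B ∩ C : Set ℂ).ncard < (↑R ∩ C : Set ℂ).ncard) :
    ((↑R ∩ C : Set ℂ).ncard : ℤ) - ((↑B ∩ C : Set ℂ).ncard : ℤ)
      ≤ ({T ∈ emptyRRB R B | T ⊆ C ∧ b ∈ T}.ncard : ℤ) := by
  classical
  set TS := {T ∈ emptyRRB R B | T ⊆ C ∧ b ∈ T} with hTS
  obtain ⟨hbB', hbC⟩ := hb
  have hbB : b ∈ B := Finset.mem_coe.1 hbB'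
  have hbR : b ∉ R := fun h => Finset.disjoint_left.1 hdisj h hbB
  set Rc := R.filter (fun p => p ∈ C) with hRc
  set Bc := B.filter (fun p => p ∈ C) with hBc
  have hRset : (↑R ∩ C : Set ℂ) = ↑Rc := by ext p; simp [hRc]
  have hBset : (↑B ∩ C : Set ℂ) = ↑Bc := by ext p; simp [hBc]
  rw [hRset, hBset, Set.ncard_coe_finset, Set.ncard_coe_finset] at hdisc ⊢
  have hbBc : b ∈ Bc := Finset.mem_filter.2 ⟨hbB, hbC⟩
  have hRBc_disj : Disjoint Rc Bc := by
    apply Finset.disjoint_left.2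
    intro a ha ha2
    exact Finset.disjoint_left.1 hdisj (Finset.mem_filter.1 ha).1 (Finset.mem_filter.1 ha2).1
  set S' := (Rc ∪ Bc).erase b with hS'def
  have hcard_union : (Rc ∪ Bc).card = Rc.card + Bc.card :=
    Finset.card_union_of_disjoint hRBc_disj
  have h1 : S'.card = (Rc ∪ Bc).card - 1 :=
    Finset.card_erase_of_mem (Finset.mem_union_right _ hbBc)
  have h2 : 0 < (Rc ∪ Bc).card :=
    Finset.card_pos.2 ⟨b, Finset.mem_union_right _ hbBc⟩
  set N := S'.card with hN
  have hNcard : N + 1 = Rc.card + Bc.card := by omega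
  have hS'sub : ∀ p ∈ S', p ∈ C ∧ (p ∈ R ∨ p ∈ B) ∧ p ≠ b := by
    intro p hp
    rw [hS'def, Finset.mem_erase] at hp
    obtain ⟨hpb, hpu⟩ := hp
    rcases Finset.mem_union.1 hpu with h | h
    · exact ⟨(Finset.mem_filter.1 h).2, Or.inl (Finset.mem_filter.1 h).1, hpb⟩
    · exact ⟨(Finset.mem_filter.1 h).2, Or.inr (Finset.mem_filter.1 h).1, hpb⟩
  have hS'all : ∀ p : ℂ, p ∈ C → (p ∈ R ∨ p ∈ B) → p ≠ b → p ∈ S' := by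
    intro p hpC hpRB hpb
    rw [hS'def, Finset.mem_erase]
    refine ⟨hpb, ?_⟩
    rcases hpRB with h | h
    · exact Finset.mem_union_left _ (Finset.mem_filter.2 ⟨h, hpC⟩)
    · exact Finset.mem_union_right _ (Finset.mem_filter.2 ⟨h, hpC⟩)
  have hbnot : ∀ p ∈ S', p ≠ b := fun p hp => (hS'sub p hp).2.2
  have hmemRB : ∀ p ∈ S', (p : ℂ) ∈ (↑R ∪ ↑B : Set ℂ) := by
    intro p hp
    rcases (hS'sub p hp).2.1 with h | h
    · exact Or.inl (Finset.mem_coe.2 h)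
    · exact Or.inr (Finset.mem_coe.2 h)
  have hbRB : (b : ℂ) ∈ (↑R ∪ ↑B : Set ℂ) := Or.inr (Finset.mem_coe.2 hbB)
  have hcol : ∀ p ∈ S', ∀ q ∈ S', p ≠ q → ¬ Collinear ℝ ({p, q, b} : Set ℂ) := by
    intro p hp q hq hpq
    exact hgp p (hmemRB p hp) q (hmemRB q hq) b hbRB hpq (hbnot p hp) (hbnot q hq)
  have hRcS' : ∀ p ∈ Rc, p ∈ S' := by
    intro p hp
    exact hS'all p (Finset.mem_filter.1 hp).2 (Or.inl (Finset.mem_filter.1 hp).1)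
      (fun h => hbR (h ▸ (Finset.mem_filter.1 hp).1))
  have hrpos : 0 < Rc.card := by omega
  have hne : S'.Nonempty := by
    obtain ⟨p, hp⟩ := Finset.card_pos.1 hrpos
    exact ⟨p, hRcS' p hp⟩
  obtain ⟨d, hd0, hgood⟩ := good_frame S' b hbnot hcol hne
  have hFinj : Set.InjOn (Fang b d) ↑S' := by
    intro p hp q hq heq
    by_contra hne2
    have hsin : Real.sin (((Fang b d q - Fang b d p : ℝ) : Real.Angle)).toReal = 0 := by
      rw [heq, sub_self]
      norm_num
    obtain ⟨t, ht⟩ := real_multiple_of_fang_diff hd0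
      (sub_ne_zero.2 (hbnot p (Finset.mem_coe.1 hp)))
      (sub_ne_zero.2 (hbnot q (Finset.mem_coe.1 hq))) hsin
    exact hcol p (Finset.mem_coe.1 hp) q (Finset.mem_coe.1 hq) hne2
      (collinear_of_real_multiple t ht)
  set Fs := S'.image (Fang b d) with hFs
  have hFscard : Fs.card = N := by rw [hFs, Finset.card_image_of_injOn hFinj]
  set e := Fs.orderIsoOfFin hFscard with he
  set g : ℕ → ℂ :=
    fun i => if h : i < N then Function.invFunOn (Fang b d) ↑S' ((e ⟨i, h⟩ : ℝ)) else b with hg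
  have hgmem : ∀ i (h : i < N), g i ∈ S' ∧ Fang b d (g i) = (e ⟨i, h⟩ : ℝ) := by
    intro i h
    have hmem : ((e ⟨i, h⟩ : ℝ)) ∈ S'.image (Fang b d) := (e ⟨i, h⟩).2
    obtain ⟨p, hp, hfp⟩ := Finset.mem_image.1 hmem
    have hex : ∃ a ∈ (↑S' : Set ℂ), Fang b d a = (e ⟨i, h⟩ : ℝ) :=
      ⟨p, Finset.mem_coe.2 hp, hfp⟩
    have h1 : g i ∈ (↑S' : Set ℂ) := by
      simp only [hg, dif_pos h]
      exact Function.invFunOn_mem hex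
    have h2 : Fang b d (g i) = (e ⟨i, h⟩ : ℝ) := by
      simp only [hg, dif_pos h]
      exact Function.invFunOn_eq hex
    exact ⟨Finset.mem_coe.1 h1, h2⟩
  have hgmono : ∀ i j (hi : i < N) (hj : j < N), i < j → Fang b d (g i) < Fang b d (g j) := by
    intro i j hi hj hij
    rw [(hgmem i hi).2, (hgmem j hj).2]
    have hlt : (⟨i, hi⟩ : Fin N) < ⟨j, hj⟩ := hij
    exact Subtype.coe_lt_coe.2 ((OrderIso.lt_iff_lt e).2 hlt)
  have hgsurj : ∀ p ∈ S', ∃ i, ∃ (h : i < N), g i = p := by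
    intro p hp
    have hmem : Fang b d p ∈ Fs := Finset.mem_image_of_mem _ hp
    set j := e.symm ⟨Fang b d p, hmem⟩ with hj
    refine ⟨j.1, j.2, ?_⟩
    have heq2 : Fang b d (g j.1) = (e ⟨j.1, j.2⟩ : ℝ) := (hgmem j.1 j.2).2
    have heq3 : (e ⟨j.1, j.2⟩ : ℝ) = Fang b d p := by
      have hfin : (⟨j.1, j.2⟩ : Fin N) = j := rfl
      rw [hfin, hj]
      simp
    exact hFinj (Finset.mem_coe.2 (hgmem j.1 j.2).1) (Finset.mem_coe.2 hp)
      (by rw [heq2, heq3])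
  have hginj : ∀ i j (hi : i < N) (hj : j < N), g i = g j → i = j := by
    intro i j hi hj hEq
    rcases lt_trichotomy i j with h | h | h
    · exfalso; have := hgmono i j hi hj h; rw [hEq] at this; exact lt_irrefl _ this
    · exact h
    · exfalso; have := hgmono j i hj hi h; rw [hEq] at this; exact lt_irrefl _ this
  have hcount : ((Finset.range N).filter (fun i => g i ∈ R)).card
      ≤ ((Finset.range (N-1)).filter (fun i => g i ∈ R ∧ g (i+1) ∈ R)).card
        + ((Finset.range N).filter (fun i => ¬ g i ∈ R)).card + 1 := by
    simpa using run_count N (fun i => g i ∈ R)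
  have hRed : ((Finset.range N).filter (fun i => g i ∈ R)).card = Rc.card := by
    apply Finset.card_bij (fun i _ => g i)
    · intro i hi
      simp only [Finset.mem_filter, Finset.mem_range] at hi
      have hgS := (hgmem i hi.1).1
      exact Finset.mem_filter.2 ⟨hi.2, (hS'sub _ hgS).1⟩
    · intro i hi j hj hEq
      simp only [Finset.mem_filter, Finset.mem_range] at hi hj
      exact hginj i j hi.1 hj.1 hEq
    · intro p hp
      obtain ⟨i, hiN, hgi⟩ := hgsurj p (hRcS' p hp)
      refine ⟨i, ?_, hgi⟩
      simp only [Finset.mem_filter, Finset.mem_range]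
      exact ⟨hiN, by rw [hgi]; exact (Finset.mem_filter.1 hp).1⟩
  have hRB : ((Finset.range N).filter (fun i => g i ∈ R)).card
      + ((Finset.range N).filter (fun i => ¬ g i ∈ R)).card = N := by
    have := Finset.card_filter_add_card_filter_not
      (s := Finset.range N) (p := fun i => g i ∈ R)
    simpa [Finset.card_range] using this
  have hT_mem : ∀ i ∈ (Finset.range (N-1)).filter (fun i => g i ∈ R ∧ g (i+1) ∈ R),
      ({g i, g (i+1), b} : Set ℂ) ∈ TS := by
    intro i hi
    simp only [Finset.mem_filter, Finset.mem_range] at hi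
    obtain ⟨hiN1, hgiR, hgi1R⟩ := hi
    have hiN : i < N := by omega
    have hi1N : i + 1 < N := by omega
    have hx := (hgmem i hiN).1
    have hy := (hgmem (i+1) hi1N).1
    have hlt : Fang b d (g i) < Fang b d (g (i+1)) := hgmono i (i+1) hiN hi1N (by omega)
    have hnob : ∀ p ∈ S', ¬(Fang b d (g i) < Fang b d p ∧ Fang b d p < Fang b d (g (i+1))) := by
      intro p hp hcontra
      obtain ⟨k, hkN, hgk⟩ := hgsurj p hp
      rw [← hgk] at hcontra
      have hik : i < k := by
        by_contra hle
        push_neg at hle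
        rcases lt_or_eq_of_le hle with h | h
        · exact absurd hcontra.1 (not_lt.2 (le_of_lt (hgmono k i hkN hiN h)))
        · rw [h] at hcontra; exact lt_irrefl _ hcontra.1
      have hki : k < i + 1 := by
        by_contra hle
        push_neg at hle
        rcases lt_or_eq_of_le hle with h | h
        · exact absurd hcontra.2 (not_lt.2 (le_of_lt (hgmono (i+1) k hi1N hkN h)))
        · rw [← h] at hcontra; exact lt_irrefl _ hcontra.2
      omega
    have hdiff := hgood (g i) hx (g (i+1)) hy hlt hnob
    have hmemT := empty_triangle_of_consecutive R B hgp C hC b hbB hbC hbR S'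
      hS'sub hS'all d hd0 (g i) (g (i+1)) hx hy hgiR hgi1R hlt hdiff hnob
    refine ⟨hmemT, ?_, ?_⟩
    · rintro z (rfl | rfl | rfl)
      · exact (hS'sub _ hx).1
      · exact (hS'sub _ hy).1
      · exact hbC
    · simp
  have hφinj : Set.InjOn (fun i => ({g i, g (i+1), b} : Set ℂ))
      ↑((Finset.range (N-1)).filter (fun i => g i ∈ R ∧ g (i+1) ∈ R)) := by
    intro i hi j hj hEq0
    have hEq : ({g i, g (i+1), b} : Set ℂ) = {g j, g (j+1), b} := hEq0
    simp only [Finset.coe_filter, Set.mem_setOf_eq, Finset.mem_range] at hi hj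
    have hiN : i < N := by omega
    have hi1N : i + 1 < N := by omega
    have hjN : j < N := by omega
    have hj1N : j + 1 < N := by omega
    have hgi_mem : g i ∈ ({g j, g (j+1), b} : Set ℂ) := by
      rw [← hEq]; simp
    have hgj_mem : g j ∈ ({g i, g (i+1), b} : Set ℂ) := by
      rw [hEq]; simp
    have d1 : i = j ∨ i = j + 1 := by
      rcases hgi_mem with h | h | h
      · exact Or.inl (hginj i j hiN hjN h)
      · exact Or.inr (hginj i (j+1) hiN hj1N h)
      · exact absurd h (fun hh => hbR (hh ▸ hi.2.1))
    have d2 : j = i ∨ j = i + 1 := by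
      rcases hgj_mem with h | h | h
      · exact Or.inl (hginj j i hjN hiN h)
      · exact Or.inr (hginj j (i+1) hjN hi1N h)
      · exact absurd h (fun hh => hbR (hh ▸ hj.2.1))
    omega
  have hTSfin : TS.Finite := by
    apply Set.Finite.subset (Set.Finite.image
      (f := fun q : ℂ × ℂ × ℂ => ({q.1, q.2.1, q.2.2} : Set ℂ))
      ((R.finite_toSet.prod (R.finite_toSet.prod B.finite_toSet))))
    rintro T ⟨hTe, _, _⟩
    obtain ⟨a, b', c, haR, hb'R, hcB, _, hTeq, _⟩ := hTe
    exact ⟨(a, b', c), ⟨haR, hb'R, hcB⟩, hTeq.symm⟩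
  have hineq : ((Finset.range (N-1)).filter (fun i => g i ∈ R ∧ g (i+1) ∈ R)).card
      ≤ TS.ncard := by
    have himg : ((fun i => ({g i, g (i+1), b} : Set ℂ))
        '' ↑((Finset.range (N-1)).filter (fun i => g i ∈ R ∧ g (i+1) ∈ R))).ncard
        = ((Finset.range (N-1)).filter (fun i => g i ∈ R ∧ g (i+1) ∈ R)).card := by
      rw [Set.ncard_image_of_injOn hφinj, Set.ncard_coe_finset]
    rw [← himg]
    apply Set.ncard_le_ncard _ hTSfin
    rintro T ⟨i, hi, rfl⟩
    exact hT_mem i (Finset.mem_coe.1 hi)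
  omega
end

section
/- Let n ≥ 1 and ε > 0 be sufficiently small. Place n red points at the vertices exp(2πik/n), k = 0, …, n−1, of a regular n-gon inscribed in the unit circle, and n blue points at (1−ε)·exp(2πik/n), k = 0, …, n−1. Then for every three red points a, b, c, the convex hull of {a, b, c} contains at least one blue point in its interior or distinct from a, b, c; in particular this configuration contains no empty red-red-red triangle. -/
open Complex


noncomputable def pt (θ : ℝ) : ℂ := Complex.exp (θ * Complex.I)

lemma pt_mul (x y : ℝ) : pt (x + y) = pt x * pt y := by
  unfold pt; rw [← Complex.exp_add]; push_cast; ring_nf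

lemma abs_pt (θ : ℝ) : ‖pt θ‖ = 1 := Complex.norm_exp_ofReal_mul_I θ

lemma pt_eq (x : ℝ) : pt x = (Real.cos x : ℂ) + (Real.sin x : ℂ) * Complex.I := by
  unfold pt; rw [Complex.exp_mul_I, Complex.ofReal_cos, Complex.ofReal_sin]

lemma pt_add_two_pi (θ : ℝ) : pt (θ + 2 * Real.pi) = pt θ := by
  rw [pt_mul]
  have : pt (2 * Real.pi) = 1 := by
    unfold pt
    rw [show ((2 * Real.pi : ℝ) : ℂ) * Complex.I = 2 * Real.pi * Complex.I by push_cast; ring,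
      Complex.exp_two_pi_mul_I]
  rw [this, mul_one]

lemma pt_sub_two_pi (θ : ℝ) : pt (θ - 2 * Real.pi) = pt θ := by
  rw [← pt_add_two_pi (θ - 2 * Real.pi)]; congr 1; ring

set_option maxHeartbeats 1000000 in
lemma key (δ θ α β ε : ℝ) (hδ0 : 0 < δ) (hδ3 : δ ≤ 2 * Real.pi / 3)
    (hαδ : δ ≤ α) (hβδ : δ ≤ β) (hαπ : α ≤ Real.pi) (hβπ : β ≤ Real.pi)
    (hsum : α + β ≤ 2 * Real.pi - δ) (hε0 : 0 < ε) (hεs : ε < 1 - Real.cos (δ / 2)) :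
    ∃ l1 l2 l3 : ℝ, 0 ≤ l1 ∧ 0 ≤ l2 ∧ 0 ≤ l3 ∧ l1 + l2 + l3 = 1 ∧
      (1 - ε : ℂ) * pt θ = l1 • pt (θ - α) + l2 • pt θ + l3 • pt (θ + β) := by
  have hπ := Real.pi_pos
  set u : ℝ := (α + β) / 2 with hu
  set v : ℝ := (α - β) / 2 with hv
  have huπ : u ≤ Real.pi - δ / 2 := by rw [hu]; linarith
  have hvu : |v| + δ ≤ u := by
    rcases abs_cases v with ⟨h, _⟩ | ⟨h, _⟩ <;> rw [h] <;> rw [hu, hv] <;> linarith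
  have hv2 : |v| ≤ Real.pi / 2 - δ / 2 := by
    rcases abs_cases v with ⟨h, _⟩ | ⟨h, _⟩ <;> rw [h] <;> rw [hv] <;> linarith
  have hvnn : (0:ℝ) ≤ |v| := abs_nonneg v
  have hcu : Real.cos u ≤ Real.cos (|v| + δ) :=
    Real.cos_le_cos_of_nonneg_of_le_pi (by linarith) (by linarith) hvu
  have hcadd : Real.cos (|v| + δ) = Real.cos |v| * Real.cos δ - Real.sin |v| * Real.sin δ :=
    Real.cos_add _ _
  have hsv : 0 ≤ Real.sin |v| := Real.sin_nonneg_of_nonneg_of_le_pi hvnn (by linarith)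
  have hsδ : 0 ≤ Real.sin δ := Real.sin_nonneg_of_nonneg_of_le_pi (by linarith) (by linarith)
  have hcδ : Real.cos δ ≤ Real.cos (δ / 2) :=
    Real.cos_le_cos_of_nonneg_of_le_pi (by linarith) (by linarith) (by linarith)
  have hcv0 : 0 < Real.cos |v| := Real.cos_pos_of_mem_Ioo ⟨by linarith, by linarith⟩
  have hcvv : Real.cos |v| = Real.cos v := Real.cos_abs v
  have hkey : Real.cos u < (1 - ε) * Real.cos v := by
    rw [← hcvv]
    nlinarith [mul_le_mul_of_nonneg_left hcδ hcv0.le]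
  have hcv0' : 0 < Real.cos v := hcvv ▸ hcv0
  have hsinu : 0 < Real.sin u := Real.sin_pos_of_pos_of_lt_pi (by linarith) (by linarith)
  have hαuv : α = u + v := by rw [hu, hv]; ring
  have hβuv : β = u - v := by rw [hu, hv]; ring
  have hD : Real.sin α + Real.sin β - Real.sin (α + β)
      = 2 * Real.sin u * (Real.cos v - Real.cos u) := by
    rw [hαuv, hβuv, show u + v + (u - v) = 2 * u by ring, Real.sin_add, Real.sin_sub,
      Real.sin_two_mul]
    ring
  have hS : Real.sin α + Real.sin β = 2 * Real.sin u * Real.cos v := by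
    rw [hαuv, hβuv, Real.sin_add, Real.sin_sub]; ring
  clear_value u v
  set D : ℝ := Real.sin α + Real.sin β - Real.sin (α + β) with hDdef
  have hcvu : 0 < Real.cos v - Real.cos u := by nlinarith
  clear_value D
  have hD0 : 0 < D := by rw [hD]; nlinarith [mul_pos hsinu hcvu]
  set t : ℝ := ε / D with ht
  have ht0 : 0 ≤ t := div_nonneg hε0.le hD0.le
  have htD : t * D = ε := by rw [ht]; exact div_mul_cancel₀ ε hD0.ne'
  have htdiv : t * (Real.sin α + Real.sin β) ≤ 1 := by
    rw [ht, div_mul_eq_mul_div, div_le_one hD0, hD, hS]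
    nlinarith [mul_pos hsinu hcvu, mul_lt_mul_of_pos_left hkey hsinu]
  clear_value t
  have hsa : 0 ≤ Real.sin α := Real.sin_nonneg_of_nonneg_of_le_pi (by linarith) hαπ
  have hsb : 0 ≤ Real.sin β := Real.sin_nonneg_of_nonneg_of_le_pi (by linarith) hβπ
  refine ⟨t * Real.sin β, 1 - t * (Real.sin α + Real.sin β), t * Real.sin α,
    mul_nonneg ht0 hsb, ?_, mul_nonneg ht0 hsa, by ring, ?_⟩
  · linarith
  · have hre : (t * Real.sin β) * Real.cos α + (1 - t * (Real.sin α + Real.sin β))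
        + (t * Real.sin α) * Real.cos β = 1 - ε := by
      have hsadd : Real.sin (α + β) = Real.sin α * Real.cos β + Real.cos α * Real.sin β :=
        Real.sin_add α β
      have : t * D = ε := htD
      rw [hDdef] at this
      linear_combination -this - t * hsadd
    have hz1 : pt (θ - α) = pt θ * pt (-α) := by
      rw [show θ - α = θ + (-α) by ring, pt_mul]
    have hz3 : pt (θ + β) = pt θ * pt β := by rw [← pt_mul]
    rw [hz1, hz3, pt_eq (-α), pt_eq β, Real.cos_neg, Real.sin_neg]
    simp only [Complex.real_smul, Complex.ofReal_mul, Complex.ofReal_sub, Complex.ofReal_one,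
      Complex.ofReal_add, Complex.ofReal_neg]
    have hreC : (t : ℂ) * Real.sin β * Real.cos α
        + (1 - (t : ℂ) * (Real.sin α + Real.sin β))
        + (t : ℂ) * Real.sin α * Real.cos β = 1 - (ε : ℂ) := by exact_mod_cast hre
    linear_combination -pt θ * hreC

lemma combo_mem (z1 z2 z3 : ℂ) (l1 l2 l3 : ℝ) (h1 : 0 ≤ l1) (h2 : 0 ≤ l2) (h3 : 0 ≤ l3)
    (hs : l1 + l2 + l3 = 1) :
    l1 • z1 + l2 • z2 + l3 • z3 ∈ convexHull ℝ ({z1, z2, z3} : Set ℂ) := by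
  have h := Finset.centerMass_mem_convexHull (t := (Finset.univ : Finset (Fin 3)))
    (w := ![l1, l2, l3]) (z := ![z1, z2, z3]) (s := ({z1, z2, z3} : Set ℂ))
    ?_ ?_ ?_
  · rw [Finset.centerMass] at h
    simpa [Fin.sum_univ_three, hs] using h
  · intro i _; fin_cases i <;> simpa
  · simp [Fin.sum_univ_three, hs]
  · intro i _; fin_cases i <;> simp

lemma main (n : ℕ) (hn3 : 3 ≤ n) (ε : ℝ) (hε0 : 0 < ε)
    (hεs : ε < 1 - Real.cos (Real.pi / n))
    (A B C : ℕ) (hAB : A < B) (hBC : B < C) (hCn : C < n) :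
    ∃ K : ℕ, K < n ∧ (1 - ε : ℂ) * pt (2 * Real.pi * K / n) ∈
      convexHull ℝ ({pt (2 * Real.pi * A / n), pt (2 * Real.pi * B / n),
        pt (2 * Real.pi * C / n)} : Set ℂ) := by
  have hπ := Real.pi_pos
  have h3n : (3:ℝ) ≤ n := by exact_mod_cast hn3
  have hn0 : (0:ℝ) < n := by linarith
  set δ : ℝ := 2 * Real.pi / n with hδ
  have hδ0 : 0 < δ := by positivity
  have hδ3 : δ ≤ 2 * Real.pi / 3 := by
    rw [hδ, div_le_div_iff₀ hn0 (by norm_num)]; nlinarith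
  have hεδ : ε < 1 - Real.cos (δ / 2) := by
    have h : δ / 2 = Real.pi / n := by rw [hδ]; ring
    rw [h]; exact hεs
  set θA : ℝ := 2 * Real.pi * A / n with hθA
  set θB : ℝ := 2 * Real.pi * B / n with hθB
  set θC : ℝ := 2 * Real.pi * C / n with hθC
  have gap_ge : ∀ X Y : ℕ, X < Y →
      δ ≤ 2 * Real.pi * Y / n - 2 * Real.pi * X / n := by
    intro X Y h
    have h1 : (X:ℝ) + 1 ≤ Y := by exact_mod_cast h
    rw [hδ, ← sub_div]
    gcongr
    nlinarith
  have dg1 : δ ≤ θB - θA := gap_ge A B hAB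
  have dg2 : δ ≤ θC - θB := gap_ge B C hBC
  have dg13 : θC - θA ≤ 2 * Real.pi - δ := by
    have hCA : (C:ℝ) - A ≤ (n:ℝ) - 1 := by
      have h1 : (C:ℝ) + 1 ≤ n := by exact_mod_cast hCn
      have h2 : (0:ℝ) ≤ A := Nat.cast_nonneg A
      linarith
    rw [hθC, hθA, hδ, show 2 * Real.pi - 2 * Real.pi / n
      = (2 * Real.pi * n - 2 * Real.pi) / n from by field_simp, ← sub_div]
    apply (div_le_div_iff_of_pos_right hn0).mpr
    nlinarith
  by_cases hg2 : θC - θB ≤ Real.pi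
  · by_cases hg1 : θB - θA ≤ Real.pi
    · -- pick B
      obtain ⟨l1, l2, l3, h1, h2, h3, hs, heq⟩ :=
        key δ θB (θB - θA) (θC - θB) ε hδ0 hδ3 dg1 dg2 hg1 hg2 (by linarith) hε0 hεδ
      refine ⟨B, hBC.trans hCn, ?_⟩
      rw [show θB - (θB - θA) = θA from by ring, show θB + (θC - θB) = θC from by ring] at heq
      rw [heq]
      exact combo_mem _ _ _ _ _ _ h1 h2 h3 hs
    · -- θB - θA > π : pick C, α = g2, β = g3
      push_neg at hg1
      have hg3δ : δ ≤ 2 * Real.pi - (θC - θA) := by linarith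
      have hg3π : 2 * Real.pi - (θC - θA) ≤ Real.pi := by linarith
      obtain ⟨l1, l2, l3, h1, h2, h3, hs, heq⟩ :=
        key δ θC (θC - θB) (2 * Real.pi - (θC - θA)) ε hδ0 hδ3 dg2 hg3δ hg2 hg3π
          (by linarith) hε0 hεδ
      refine ⟨C, hCn, ?_⟩
      rw [show θC - (θC - θB) = θB from by ring,
        show θC + (2 * Real.pi - (θC - θA)) = θA + 2 * Real.pi from by ring,
        pt_add_two_pi] at heq
      rw [heq]
      have hset : ({pt θB, pt θC, pt θA} : Set ℂ) = {pt θA, pt θB, pt θC} := by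
        ext w; simp only [Set.mem_insert_iff, Set.mem_singleton_iff]; tauto
      rw [← hset]
      exact combo_mem _ _ _ _ _ _ h1 h2 h3 hs
  · -- θC - θB > π : pick A, α = g3, β = g1
    push_neg at hg2
    have hg3δ : δ ≤ 2 * Real.pi - (θC - θA) := by linarith
    have hg3π : 2 * Real.pi - (θC - θA) ≤ Real.pi := by linarith
    have hg1π : θB - θA ≤ Real.pi := by linarith
    obtain ⟨l1, l2, l3, h1, h2, h3, hs, heq⟩ :=
      key δ θA (2 * Real.pi - (θC - θA)) (θB - θA) ε hδ0 hδ3 hg3δ dg1 hg3π hg1π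
        (by linarith) hε0 hεδ
    refine ⟨A, (hAB.trans hBC).trans hCn, ?_⟩
    rw [show θA - (2 * Real.pi - (θC - θA)) = θC - 2 * Real.pi from by ring,
      show θA + (θB - θA) = θB from by ring, pt_sub_two_pi] at heq
    rw [heq]
    have hset : ({pt θC, pt θA, pt θB} : Set ℂ) = {pt θA, pt θB, pt θC} := by
      ext w; simp only [Set.mem_insert_iff, Set.mem_singleton_iff]; tauto
    rw [← hset]
    exact combo_mem _ _ _ _ _ _ h1 h2 h3 hs

set_option maxHeartbeats 1000000 in
/-- Place `n` red points at the vertices `exp(2πik/n)` of a regular `n`-gon and `n` blue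
points at `(1-ε)·exp(2πik/n)`.  For `ε > 0` sufficiently small (`ε < 1 - cos(π/n)`),
the convex hull of any three red points contains a blue point (which is distinct from the
three red vertices); in particular there is no empty red-red-red triangle. -/
theorem stmt_5 (n : ℕ) (hn : 1 ≤ n) (ε : ℝ) (hε0 : 0 < ε)
    (hεs : ε < 1 - Real.cos (Real.pi / n))
    (a b c : Fin n) (hab : a ≠ b) (hac : a ≠ c) (hbc : b ≠ c) :
    ∃ k : Fin n,
      ((1 - ε : ℂ) * Complex.exp (2 * Real.pi * Complex.I * (k : ℕ) / n)) ∈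
        convexHull ℝ ({Complex.exp (2 * Real.pi * Complex.I * (a : ℕ) / n),
          Complex.exp (2 * Real.pi * Complex.I * (b : ℕ) / n),
          Complex.exp (2 * Real.pi * Complex.I * (c : ℕ) / n)} : Set ℂ) ∧
      ∀ v : Fin n,
        (1 - ε : ℂ) * Complex.exp (2 * Real.pi * Complex.I * (k : ℕ) / n) ≠
          Complex.exp (2 * Real.pi * Complex.I * (v : ℕ) / n) := by
  have hπ := Real.pi_pos
  have ef : ∀ k : ℕ, Complex.exp (2 * Real.pi * Complex.I * k / n)
      = pt (2 * Real.pi * k / n) := by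
    intro k; unfold pt; congr 1; push_cast; ring
  have hn3 : 3 ≤ n := by
    have hcard : ({a, b, c} : Finset (Fin n)).card = 3 := by
      rw [Finset.card_insert_of_notMem (by simp [hab, hac]),
        Finset.card_insert_of_notMem (by simp [hbc]), Finset.card_singleton]
    have h := Finset.card_le_univ ({a, b, c} : Finset (Fin n))
    simpa [hcard] using h
  have h3n : (3:ℝ) ≤ n := by exact_mod_cast hn3
  have hε1 : ε < 1 := by
    have hc : 0 ≤ Real.cos (Real.pi / n) := by
      apply Real.cos_nonneg_of_mem_Icc
      constructor
      · have : (0:ℝ) ≤ Real.pi / n := by positivity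
        linarith
      · rw [div_le_div_iff₀ (by linarith) (by norm_num)]
        nlinarith
    linarith
  have hne : ∀ θ ψ : ℝ, (1 - ε : ℂ) * pt θ ≠ pt ψ := by
    intro θ ψ h
    have habs := congrArg (‖·‖) h
    rw [norm_mul, abs_pt, abs_pt, mul_one,
      show (1 - (ε:ℂ)) = ((1 - ε : ℝ) : ℂ) from by push_cast; ring,
      Complex.norm_real, Real.norm_eq_abs, abs_of_pos (by linarith)] at habs
    linarith
  have hAB : (a:ℕ) ≠ (b:ℕ) := fun h => hab (Fin.val_injective h)
  have hAC : (a:ℕ) ≠ (c:ℕ) := fun h => hac (Fin.val_injective h)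
  have hBC : (b:ℕ) ≠ (c:ℕ) := fun h => hbc (Fin.val_injective h)
  have hset : ∀ x y z : Fin n, ({pt (2 * Real.pi * x / n), pt (2 * Real.pi * y / n),
      pt (2 * Real.pi * z / n)} : Set ℂ) ⊆ {pt (2 * Real.pi * a / n),
      pt (2 * Real.pi * b / n), pt (2 * Real.pi * c / n)} →
      ∀ K : ℕ, K < n → (1 - ε : ℂ) * pt (2 * Real.pi * K / n) ∈
        convexHull ℝ ({pt (2 * Real.pi * x / n), pt (2 * Real.pi * y / n),
          pt (2 * Real.pi * z / n)} : Set ℂ) →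
      ∃ k : Fin n,
      ((1 - ε : ℂ) * Complex.exp (2 * Real.pi * Complex.I * (k : ℕ) / n)) ∈
        convexHull ℝ ({Complex.exp (2 * Real.pi * Complex.I * (a : ℕ) / n),
          Complex.exp (2 * Real.pi * Complex.I * (b : ℕ) / n),
          Complex.exp (2 * Real.pi * Complex.I * (c : ℕ) / n)} : Set ℂ) ∧
      ∀ v : Fin n,
        (1 - ε : ℂ) * Complex.exp (2 * Real.pi * Complex.I * (k : ℕ) / n) ≠
          Complex.exp (2 * Real.pi * Complex.I * (v : ℕ) / n) := by
    intro x y z hsub K hK hmem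
    refine ⟨⟨K, hK⟩, ?_, fun v => ?_⟩
    · simp only [ef, Fin.val_mk]
      exact convexHull_mono hsub hmem
    · simp only [ef, Fin.val_mk]
      exact hne _ _
  have hsub3 : ∀ x y z : Fin n, ({x, y, z} : Set (Fin n)) = {a, b, c} →
      ({pt (2 * Real.pi * x / n), pt (2 * Real.pi * y / n),
      pt (2 * Real.pi * z / n)} : Set ℂ) ⊆ {pt (2 * Real.pi * a / n),
      pt (2 * Real.pi * b / n), pt (2 * Real.pi * c / n)} := by
    intro x y z hxyz
    have hx : x ∈ ({a, b, c} : Set (Fin n)) := by rw [← hxyz]; simp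
    have hy : y ∈ ({a, b, c} : Set (Fin n)) := by rw [← hxyz]; simp
    have hz : z ∈ ({a, b, c} : Set (Fin n)) := by rw [← hxyz]; simp
    intro w hw
    simp only [Set.mem_insert_iff, Set.mem_singleton_iff] at hw hx hy hz ⊢
    rcases hw with h | h | h
    · rcases hx with h' | h' | h' <;> rw [h, h'] <;> tauto
    · rcases hy with h' | h' | h' <;> rw [h, h'] <;> tauto
    · rcases hz with h' | h' | h' <;> rw [h, h'] <;> tauto
  rcases lt_trichotomy (a:ℕ) (b:ℕ) with h1 | h1 | h1
  · rcases lt_trichotomy (b:ℕ) (c:ℕ) with h2 | h2 | h2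
    · obtain ⟨K, hK, hmem⟩ := main n hn3 ε hε0 hεs a b c h1 h2 c.is_lt
      exact hset a b c (hsub3 a b c rfl) K hK hmem
    · exact absurd h2 hBC
    · rcases lt_trichotomy (a:ℕ) (c:ℕ) with h3 | h3 | h3
      · obtain ⟨K, hK, hmem⟩ := main n hn3 ε hε0 hεs a c b h3 h2 b.is_lt
        exact hset a c b (hsub3 a c b (by ext w; simp only [Set.mem_insert_iff, Set.mem_singleton_iff]; tauto)) K hK hmem
      · exact absurd h3 hAC
      · obtain ⟨K, hK, hmem⟩ := main n hn3 ε hε0 hεs c a b h3 h1 b.is_lt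
        exact hset c a b (hsub3 c a b (by ext w; simp only [Set.mem_insert_iff, Set.mem_singleton_iff]; tauto)) K hK hmem
  · exact absurd h1 hAB
  · rcases lt_trichotomy (a:ℕ) (c:ℕ) with h2 | h2 | h2
    · obtain ⟨K, hK, hmem⟩ := main n hn3 ε hε0 hεs b a c h1 h2 c.is_lt
      exact hset b a c (hsub3 b a c (by ext w; simp only [Set.mem_insert_iff, Set.mem_singleton_iff]; tauto)) K hK hmem
    · exact absurd h2 hAC
    · rcases lt_trichotomy (b:ℕ) (c:ℕ) with h3 | h3 | h3
      · obtain ⟨K, hK, hmem⟩ := main n hn3 ε hε0 hεs b c a h3 h2 a.is_lt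
        exact hset b c a (hsub3 b c a (by ext w; simp only [Set.mem_insert_iff, Set.mem_singleton_iff]; tauto)) K hK hmem
      · exact absurd h3 hBC
      · obtain ⟨K, hK, hmem⟩ := main n hn3 ε hε0 hεs c b a h3 h1 a.is_lt
        exact hset c b a (hsub3 c b a (by ext w; simp only [Set.mem_insert_iff, Set.mem_singleton_iff]; tauto)) K hK hmem
end

section
/- Let R, B ⊂ ℝ² be finite disjoint sets with R ∪ B in general position, |R| = n ≥ 2. For a red point r ∈ R, draw the n−1 rays from r through the other red points, partitioning the plane into n−1 sectors with apex r; call a sector blue if it contains at least one blue point, and let p(r) be the number of blue sectors with respect to r. Then the number of empty red-red-blue triangles in R ∪ B is at least (min_{r∈R} p(r)) · n / 2. -/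
/-- The counterclockwise angle in `[0, 2π)` from direction `u` to direction `v`. -/
noncomputable def ccwAngle (u v : ℂ) : ℝ :=
  if 0 ≤ (v / u).arg then (v / u).arg else (v / u).arg + 2 * Real.pi

/-- `q` lies in the sector with apex `r` that starts at the ray from `r` through the red
point `s` and extends counterclockwise to the next ray through a red point. -/
def inSector (R : Finset ℂ) (r s q : ℂ) : Prop :=
  ∀ s' ∈ R, s' ≠ r → s' ≠ s → ccwAngle (s - r) (q - r) ≤ ccwAngle (s - r) (s' - r)

/-- The blue sectors with respect to `r`: sectors (indexed by the red point on their
starting ray) containing at least one blue point. -/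
def blueSectors (R B : Finset ℂ) (r : ℂ) : Set ℂ :=
  {s ∈ (↑R : Set ℂ) | s ≠ r ∧ ∃ q ∈ B, inSector R r s q}

section Helpers

open Complex Real

def cross2 (z w : ℂ) : ℝ := z.re * w.im - z.im * w.re

lemma ccwAngle_div (u v : ℂ) : ccwAngle u v = ccwAngle 1 (v / u) := by
  simp [ccwAngle]

lemma ccw01_nonneg (z : ℂ) : 0 ≤ ccwAngle 1 z := by
  unfold ccwAngle
  split_ifs with h
  · simpa using h
  · simp only [div_one] at *
    nlinarith [neg_pi_lt_arg z, Real.pi_pos]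

lemma ccw01_lt_two_pi (z : ℂ) : ccwAngle 1 z < 2 * π := by
  unfold ccwAngle
  split_ifs with h <;> simp only [div_one] at *
  · nlinarith [arg_le_pi z, Real.pi_pos]
  · nlinarith [not_le.mp h]

lemma ccw01_of_im_pos {z : ℂ} (h : 0 < z.im) : ccwAngle 1 z = arg z := by
  unfold ccwAngle
  simp only [div_one]
  rw [if_pos (arg_nonneg_iff.mpr h.le)]

lemma ccw01_of_im_neg {z : ℂ} (h : z.im < 0) : ccwAngle 1 z = arg z + 2 * π := by
  unfold ccwAngle
  simp only [div_one]
  rw [if_neg (not_le.mpr (arg_neg_iff.mpr h))]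

lemma arg_pos_of_im_pos {z : ℂ} (h : 0 < z.im) : 0 < arg z := by
  rcases (arg_nonneg_iff.mpr h.le).lt_or_eq with h' | h'
  · exact h'
  · exact absurd (arg_eq_zero_iff.mp h'.symm).2 (by linarith)

lemma arg_lt_pi_of_im_pos {z : ℂ} (h : 0 < z.im) : arg z < π := by
  rcases (arg_le_pi z).lt_or_eq with h' | h'
  · exact h'
  · exact absurd (arg_eq_pi_iff.mp h').2 (by linarith)

lemma ccw01_pos_of_im_ne {z : ℂ} (h : z.im ≠ 0) : 0 < ccwAngle 1 z := by
  rcases h.lt_or_gt with h | h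
  · rw [ccw01_of_im_neg h]
    nlinarith [neg_pi_lt_arg z, Real.pi_pos]
  · rw [ccw01_of_im_pos h]; exact arg_pos_of_im_pos h

lemma sin_arg_sub (z w : ℂ) (hz : z ≠ 0) (hw : w ≠ 0) :
    Real.sin (arg w - arg z) = cross2 z w / (‖z‖ * ‖w‖) := by
  rw [Real.sin_sub, Complex.sin_arg, Complex.cos_arg hz, Complex.cos_arg hw, Complex.sin_arg]
  have h1 : ‖z‖ ≠ 0 := norm_ne_zero_iff.mpr hz
  have h2 : ‖w‖ ≠ 0 := norm_ne_zero_iff.mpr hw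
  field_simp [cross2]
  unfold cross2
  ring

lemma arg_lt_iff_cross {z w : ℂ} (hz : z ≠ 0) (hw : w ≠ 0)
    (hd1 : -π < arg w - arg z) (hd2 : arg w - arg z < π) :
    arg z < arg w ↔ 0 < cross2 z w := by
  have habs : 0 < ‖z‖ * ‖w‖ :=
    mul_pos (norm_pos_iff.mpr hz) (norm_pos_iff.mpr hw)
  have hs := sin_arg_sub z w hz hw
  constructor
  · intro h
    have : 0 < Real.sin (arg w - arg z) := Real.sin_pos_of_pos_of_lt_pi (by linarith) hd2
    rw [hs] at this
    exact (div_pos_iff.mp this).resolve_right (fun ⟨_, h2⟩ => absurd habs (not_lt.mpr h2.le)) |>.1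
  · intro h
    by_contra hle
    push_neg at hle
    have : Real.sin (arg w - arg z) ≤ 0 :=
      Real.sin_nonpos_of_nonpos_of_neg_pi_le (by linarith) (by linarith)
    rw [hs] at this
    nlinarith [div_pos h habs]

lemma cross2_eq_zero_iff {z w : ℂ} : cross2 z w = 0 ↔ z.re * w.im = z.im * w.re := by
  unfold cross2; constructor <;> intro h <;> linarith

lemma parallel_of_cross2_eq_zero {z w : ℂ} (hz : z.im ≠ 0) (h : cross2 z w = 0) :
    w = ((w.im / z.im : ℝ) : ℂ) * z := by
  unfold cross2 at h
  apply Complex.ext <;> simp [Complex.ofReal_re, Complex.mul_re, Complex.mul_im] <;>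
    field_simp <;> linarith

lemma ne_zero_of_im_ne {z : ℂ} (h : z.im ≠ 0) : z ≠ 0 := by
  intro h0; rw [h0] at h; simp at h

lemma ccw_lt_iff_upper {z w : ℂ} (hz : 0 < z.im) (hw : 0 < w.im) :
    (ccwAngle 1 z < ccwAngle 1 w ↔ 0 < cross2 z w) := by
  rw [ccw01_of_im_pos hz, ccw01_of_im_pos hw]
  exact arg_lt_iff_cross (ne_zero_of_im_ne hz.ne') (ne_zero_of_im_ne hw.ne')
    (by nlinarith [arg_pos_of_im_pos hw, arg_lt_pi_of_im_pos hz])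
    (by nlinarith [arg_pos_of_im_pos hz, arg_lt_pi_of_im_pos hw])

lemma ccw_lt_iff_lower {z w : ℂ} (hz : z.im < 0) (hw : w.im < 0) :
    (ccwAngle 1 z < ccwAngle 1 w ↔ 0 < cross2 z w) := by
  rw [ccw01_of_im_neg hz, ccw01_of_im_neg hw, add_lt_add_iff_right]
  have h1 : arg z < 0 := Complex.arg_neg_iff.mpr hz
  have h2 : arg w < 0 := Complex.arg_neg_iff.mpr hw
  exact arg_lt_iff_cross (ne_zero_of_im_ne hz.ne) (ne_zero_of_im_ne hw.ne)
    (by nlinarith [Complex.neg_pi_lt_arg w]) (by nlinarith [Complex.neg_pi_lt_arg z])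

lemma collinear_combo (a b x : ℂ) (t₁ t₂ : ℝ) (hsum : t₁ + t₂ = 1) (h : x = t₁ • a + t₂ • b) :
    Collinear ℝ ({a, b, x} : Set ℂ) := by
  rw [collinear_iff_exists_forall_eq_smul_vadd]
  refine ⟨a, b - a, ?_⟩
  intro p hp
  rcases hp with rfl | rfl | rfl
  · exact ⟨0, by simp⟩
  · exact ⟨1, by simp⟩
  · refine ⟨t₂, ?_⟩
    have : t₁ = 1 - t₂ := by linarith
    subst this
    simp only [h, Complex.real_smul, vadd_eq_add]
    push_cast
    ring

lemma ratio_real_collinear {r a b : ℂ} (ha : a ≠ r) (h : ((b - r) / (a - r)).im = 0) :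
    Collinear ℝ ({r, a, b} : Set ℂ) := by
  set z := (b - r) / (a - r) with hz
  have hu : a - r ≠ 0 := sub_ne_zero.mpr ha
  have hzr : z = ((z.re : ℝ) : ℂ) := by
    apply Complex.ext <;> simp [h]
  have hb : b = (1 - z.re) • r + z.re • a := by
    have h1 : b - r = z * (a - r) := by
      rw [hz]; field_simp
    rw [hzr] at h1
    simp only [Complex.real_smul]
    push_cast
    linear_combination h1
  exact collinear_combo r a b (1 - z.re) z.re (by ring) hb

lemma collinear_of_sub_smul {r b c : ℂ} (k : ℝ) (h : c - r = (k : ℂ) * (b - r)) :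
    Collinear ℝ ({r, b, c} : Set ℂ) := by
  have hc : c = (1 - k) • r + k • b := by
    simp only [Complex.real_smul]; push_cast; linear_combination h
  exact collinear_combo r b c (1 - k) k (by ring) hc

lemma hull_decomp {A B C x : ℂ} (hx : x ∈ convexHull ℝ ({A, B, C} : Set ℂ)) :
    ∃ α β γ : ℝ, 0 ≤ α ∧ 0 ≤ β ∧ 0 ≤ γ ∧ α + β + γ = 1 ∧ x = α • A + β • B + γ • C := by
  rw [show ({A, B, C} : Set ℂ) = insert A {B, C} by rfl,
    convexHull_insert ⟨B, by simp⟩, convexHull_pair] at hx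
  rw [mem_convexJoin] at hx
  obtain ⟨a, ha, y, hy, hxy⟩ := hx
  rw [Set.mem_singleton_iff] at ha
  subst ha
  obtain ⟨c, d, hc, hd, hcd, hy⟩ := hy
  obtain ⟨e, f, he, hf, hef, hx⟩ := hxy
  refine ⟨e, f * c, f * d, he, mul_nonneg hf hc, mul_nonneg hf hd, by nlinarith, ?_⟩
  rw [← hx, ← hy]
  simp only [smul_add, smul_smul]
  rw [add_assoc]

lemma empty_gen (R B : Finset ℂ) (hdisj : Disjoint R B) (hgp : GenPos (↑R ∪ ↑B))
    (r a q : ℂ) (hr : r ∈ R) (ha : a ∈ R) (hq : q ∈ B) (har : a ≠ r)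
    (hred : ∀ x ∈ R, x ≠ r → x ≠ a → ∀ α β γ : ℝ, 0 < α → 0 < β → 0 < γ →
      α + β + γ = 1 → x = α • r + β • a + γ • q → False)
    (hblue : ∀ x ∈ B, x ≠ q → ∀ α β γ : ℝ, 0 < α → 0 < β → 0 < γ →
      α + β + γ = 1 → x = α • r + β • a + γ • q → False) :
    convexHull ℝ ({r, a, q} : Set ℂ) ∩ (↑R ∪ ↑B) = ({r, a, q} : Set ℂ) := by
  have hqr : q ≠ r := fun h => Finset.disjoint_left.mp hdisj hr (h ▸ hq)
  have hqa : q ≠ a := fun h => Finset.disjoint_left.mp hdisj ha (h ▸ hq)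
  have hrm : r ∈ (↑R ∪ ↑B : Set ℂ) := Or.inl hr
  have ham : a ∈ (↑R ∪ ↑B : Set ℂ) := Or.inl ha
  have hqm : q ∈ (↑R ∪ ↑B : Set ℂ) := Or.inr hq
  apply Set.Subset.antisymm
  · rintro x ⟨hxh, hxu⟩
    by_contra hxn
    simp only [Set.mem_insert_iff, Set.mem_singleton_iff, not_or] at hxn
    obtain ⟨hxr, hxa, hxq⟩ := hxn
    obtain ⟨α, β, γ, hα, hβ, hγ, hsum, hx⟩ := hull_decomp hxh
    rcases hγ.eq_or_lt with hγ0 | hγ0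
    · have hx' : x = α • r + β • a := by rw [hx, ← hγ0]; simp
      exact hgp r hrm a ham x hxu (Ne.symm har) (Ne.symm hxr) (Ne.symm hxa)
        (collinear_combo r a x α β (by linarith) hx')
    rcases hβ.eq_or_lt with hβ0 | hβ0
    · have hx' : x = α • r + γ • q := by rw [hx, ← hβ0]; simp
      exact hgp r hrm q hqm x hxu (Ne.symm hqr) (Ne.symm hxr) (Ne.symm hxq)
        (collinear_combo r q x α γ (by linarith) hx')
    rcases hα.eq_or_lt with hα0 | hα0
    · have hx' : x = β • a + γ • q := by rw [hx, ← hα0]; simp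
      exact hgp a ham q hqm x hxu (Ne.symm hqa) (Ne.symm hxa) (Ne.symm hxq)
        (collinear_combo a q x β γ (by linarith) hx')
    rcases hxu with hxR | hxB
    · exact hred x hxR hxr hxa α β γ hα0 hβ0 hγ0 hsum hx
    · exact hblue x hxB hxq α β γ hα0 hβ0 hγ0 hsum hx
  · rintro x (rfl | rfl | rfl)
    · exact ⟨subset_convexHull ℝ _ (by simp), hrm⟩
    · exact ⟨subset_convexHull ℝ _ (by simp), ham⟩
    · exact ⟨subset_convexHull ℝ _ (by simp), hqm⟩

lemma ccw01_arg_decomp (z : ℂ) : ∃ e : ℤ, ccwAngle 1 z = arg z + 2 * π * e ∧ (e = 0 ∨ e = 1) := by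
  unfold ccwAngle
  simp only [div_one]
  split_ifs with h
  · exact ⟨0, by push_cast; ring, Or.inl rfl⟩
  · exact ⟨1, by push_cast; ring, Or.inr rfl⟩

lemma ccw01_inv {m : ℂ} (h : m.im ≠ 0) : ccwAngle 1 m⁻¹ = 2 * π - ccwAngle 1 m := by
  have hm : m ≠ 0 := ne_zero_of_im_ne h
  have hpi : arg m ≠ π := fun hp => h (Complex.arg_eq_pi_iff.mp hp).2
  have harginv : arg m⁻¹ = -arg m := by rw [Complex.arg_inv, if_neg hpi]
  have hinvim : m⁻¹.im = -m.im / Complex.normSq m := Complex.inv_im m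
  have hnsq : 0 < Complex.normSq m := Complex.normSq_pos.mpr hm
  rcases h.lt_or_gt with hneg | hpos
  · have h1 : 0 < m⁻¹.im := by
      rw [hinvim]
      exact div_pos (by linarith) hnsq
    rw [ccw01_of_im_pos h1, ccw01_of_im_neg hneg, harginv]; ring
  · have h1 : m⁻¹.im < 0 := by
      rw [hinvim]
      exact div_neg_of_neg_of_pos (by linarith) hnsq
    rw [ccw01_of_im_neg h1, ccw01_of_im_pos hpos, harginv]; ring

lemma ccw_mod (z m : ℂ) (hz : z ≠ 0) (hm : m ≠ 0) :
    ∃ k : ℤ, ccwAngle 1 (z / m) = ccwAngle 1 z - ccwAngle 1 m + 2 * π * k := by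
  have h := Complex.arg_div_coe_angle hz hm
  rw [← Real.Angle.coe_sub] at h
  obtain ⟨k0, hk0⟩ := Real.Angle.angle_eq_iff_two_pi_dvd_sub.mp h
  obtain ⟨e1, he1, _⟩ := ccw01_arg_decomp (z / m)
  obtain ⟨e2, he2, _⟩ := ccw01_arg_decomp z
  obtain ⟨e3, he3, _⟩ := ccw01_arg_decomp m
  refine ⟨k0 + e1 - e2 + e3, ?_⟩
  rw [he1, he2, he3]
  push_cast
  linarith [hk0]

lemma ccw01_eq_imp_cross (z m : ℂ) (hz : z ≠ 0) (hm : m ≠ 0)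
    (h : ccwAngle 1 z = ccwAngle 1 m) : cross2 m z = 0 := by
  obtain ⟨e2, he2, he2'⟩ := ccw01_arg_decomp z
  obtain ⟨e3, he3, he3'⟩ := ccw01_arg_decomp m
  have hargs : arg z = arg m := by
    rw [he2, he3] at h
    have b1 := Complex.neg_pi_lt_arg z
    have b2 := Complex.arg_le_pi z
    have b3 := Complex.neg_pi_lt_arg m
    have b4 := Complex.arg_le_pi m
    have hpi := Real.pi_pos
    rcases he2' with rfl | rfl <;> rcases he3' with rfl | rfl <;>
      push_cast at h <;> nlinarith
  have := sin_arg_sub m z hm hz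
  rw [hargs, sub_self, Real.sin_zero] at this
  have habs : 0 < ‖m‖ * ‖z‖ :=
    mul_pos (norm_pos_iff.mpr hm) (norm_pos_iff.mpr hz)
  field_simp at this
  linarith [this]

lemma div_im_eq_cross (z m : ℂ) : (z / m).im = cross2 m z / Complex.normSq m := by
  rw [Complex.div_im, cross2]
  ring

lemma sector_disjoint {R B : Finset ℂ} (hdisj : Disjoint R B) (hgp : GenPos (↑R ∪ ↑B))
    {r s₁ s₂ q : ℂ} (hr : r ∈ R) (hs₁ : s₁ ∈ R) (hs₂ : s₂ ∈ R) (hq : q ∈ B)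
    (h1r : s₁ ≠ r) (h2r : s₂ ≠ r) (h12 : s₁ ≠ s₂)
    (hin1 : inSector R r s₁ q) (hin2 : inSector R r s₂ q) : False := by
  have hrm : r ∈ (↑R ∪ ↑B : Set ℂ) := Or.inl hr
  have h1m : s₁ ∈ (↑R ∪ ↑B : Set ℂ) := Or.inl hs₁
  have h2m : s₂ ∈ (↑R ∪ ↑B : Set ℂ) := Or.inl hs₂
  have hqm : q ∈ (↑R ∪ ↑B : Set ℂ) := Or.inr hq
  have hqR : q ∉ R := fun h => Finset.disjoint_left.mp hdisj h hq
  have hq1 : q ≠ s₁ := fun h => hqR (h ▸ hs₁)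
  have hq2 : q ≠ s₂ := fun h => hqR (h ▸ hs₂)
  have hqr : q ≠ r := fun h => hqR (h ▸ hr)
  have hu1 : s₁ - r ≠ 0 := sub_ne_zero.mpr h1r
  have hu2 : s₂ - r ≠ 0 := sub_ne_zero.mpr h2r
  set z := (q - r) / (s₁ - r) with hzdef
  set m := (s₂ - r) / (s₁ - r) with hmdef
  have himz : z.im ≠ 0 := fun h =>
    hgp r hrm s₁ h1m q hqm (Ne.symm h1r) (Ne.symm hqr) (Ne.symm hq1)
      (ratio_real_collinear h1r h)
  have himm : m.im ≠ 0 := fun h =>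
    hgp r hrm s₁ h1m s₂ h2m (Ne.symm h1r) (Ne.symm h2r) h12
      (ratio_real_collinear h1r h)
  have hzm_eq : z / m = (q - r) / (s₂ - r) := by
    rw [hzdef, hmdef]
    field_simp
  have hinv_eq : (s₁ - r) / (s₂ - r) = m⁻¹ := by
    rw [hmdef]
    field_simp
  have himzm : (z / m).im ≠ 0 := by
    rw [hzm_eq]
    exact fun h =>
      hgp r hrm s₂ h2m q hqm (Ne.symm h2r) (Ne.symm hqr) (Ne.symm hq2)
        (ratio_real_collinear h2r h)
  have hz0 : z ≠ 0 := ne_zero_of_im_ne himz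
  have hm0 : m ≠ 0 := ne_zero_of_im_ne himm
  -- the two sector inequalities
  have H1 : ccwAngle 1 z ≤ ccwAngle 1 m := by
    have h := hin1 s₂ hs₂ h2r (Ne.symm h12)
    rwa [ccwAngle_div (s₁ - r) (q - r), ccwAngle_div (s₁ - r) (s₂ - r)] at h
  have H2 : ccwAngle 1 (z / m) ≤ 2 * π - ccwAngle 1 m := by
    have h := hin2 s₁ hs₁ h1r h12
    rw [ccwAngle_div (s₂ - r) (q - r), ccwAngle_div (s₂ - r) (s₁ - r), ← hzm_eq,
      hinv_eq, ccw01_inv himm] at h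
    exact h
  have hne : ccwAngle 1 z ≠ ccwAngle 1 m := by
    intro h
    have hc := ccw01_eq_imp_cross z m hz0 hm0 h
    have := div_im_eq_cross z m
    rw [hc] at this
    simp at this
    exact himzm this
  have H1' : ccwAngle 1 z < ccwAngle 1 m := lt_of_le_of_ne H1 hne
  obtain ⟨k, hk⟩ := ccw_mod z m hz0 hm0
  have hb0 : 0 < ccwAngle 1 (z / m) := ccw01_pos_of_im_ne himzm
  have hb2 : ccwAngle 1 (z / m) < 2 * π := ccw01_lt_two_pi _
  have ha0 : 0 < ccwAngle 1 z := ccw01_pos_of_im_ne himz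
  have hm2 : ccwAngle 1 m < 2 * π := ccw01_lt_two_pi _
  have hpi := Real.pi_pos
  -- pin k = 1
  have hk1 : k = 1 := by
    have hkl : (0 : ℝ) < 2 * π * k := by nlinarith
    have hku : 2 * π * (k : ℝ) < 2 * π * 2 := by nlinarith
    have hkl' : (0 : ℤ) < k := by
      by_contra hcon
      push_neg at hcon
      have : (k : ℝ) ≤ 0 := by exact_mod_cast hcon
      nlinarith
    have hku' : k < 2 := by
      by_contra hcon
      push_neg at hcon
      have : (2 : ℝ) ≤ (k : ℝ) := by exact_mod_cast hcon
      nlinarith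
    omega
  rw [hk1] at hk
  push_cast at hk
  linarith

lemma w_combo {r s a q x : ℂ} (hu : s - r ≠ 0) {α β γ : ℝ} (hsum : α + β + γ = 1)
    (hx : x = α • r + β • a + γ • q) :
    (x - r) / (s - r) = (β : ℂ) * ((a - r) / (s - r)) + (γ : ℂ) * ((q - r) / (s - r)) := by
  have hc : (α : ℂ) + (β : ℂ) + (γ : ℂ) = 1 := by exact_mod_cast hsum
  have hx' : x = (α : ℂ) * r + (β : ℂ) * a + (γ : ℂ) * q := by
    rw [hx]; simp [Complex.real_smul]
  field_simp
  linear_combination hx' + (r : ℂ) * hc - r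

lemma combo_im (β γ : ℝ) (z w : ℂ) :
    ((β : ℂ) * z + (γ : ℂ) * w).im = β * z.im + γ * w.im := by
  simp [Complex.add_im, Complex.mul_im]

lemma cross2_combo_left (β γ : ℝ) (z w v : ℂ) :
    cross2 ((β : ℂ) * z + (γ : ℂ) * w) v = β * cross2 z v + γ * cross2 w v := by
  simp [cross2, Complex.add_re, Complex.add_im, Complex.mul_re, Complex.mul_im]
  ring

lemma cross2_combo_right (β γ : ℝ) (z w v : ℂ) :
    cross2 v ((β : ℂ) * z + (γ : ℂ) * w) = β * cross2 v z + γ * cross2 v w := by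
  simp [cross2, Complex.add_re, Complex.add_im, Complex.mul_re, Complex.mul_im]
  ring

lemma cross2_self (z : ℂ) : cross2 z z = 0 := by simp [cross2]; ring

lemma cross2_antisymm (z w : ℂ) : cross2 z w = -cross2 w z := by simp [cross2]; ring

lemma cross2_one (z : ℂ) : cross2 1 z = z.im := by simp [cross2]

lemma exist_triangle (R B : Finset ℂ) (hdisj : Disjoint R B) (hgp : GenPos (↑R ∪ ↑B))
    (r s : ℂ) (hr : r ∈ R) (hs : s ∈ R) (hsr : s ≠ r)
    (q₀ : ℂ) (hq₀ : q₀ ∈ B) (hq₀s : inSector R r s q₀) :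
    ∃ a q : ℂ, a ∈ R ∧ a ≠ r ∧ q ∈ B ∧ inSector R r s q ∧
      ({r, a, q} : Set ℂ) ∈ emptyRRB R B := by
  classical
  have hu : s - r ≠ 0 := sub_ne_zero.mpr hsr
  set W : ℂ → ℂ := fun z => (z - r) / (s - r) with hW
  have hWs : W s = 1 := div_self hu
  have hccw : ∀ z : ℂ, ccwAngle (s - r) (z - r) = ccwAngle 1 (W z) := fun z =>
    ccwAngle_div (s - r) (z - r)
  have hBnotR : ∀ x ∈ B, x ∉ R := fun x hx hxr => Finset.disjoint_left.mp hdisj hxr hx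
  have him : ∀ x, x ∈ (↑R ∪ ↑B : Set ℂ) → x ≠ r → x ≠ s → (W x).im ≠ 0 := by
    intro x hx h1 h2 h0
    exact hgp r (Or.inl hr) s (Or.inl hs) x hx (Ne.symm hsr) (Ne.symm h1) (Ne.symm h2)
      (ratio_real_collinear hsr h0)
  by_cases hA : ∃ q' ∈ B, inSector R r s q' ∧ 0 < (W q').im
  · -- CASE A
    set QA : Finset ℂ := B.filter (fun q' => inSector R r s q' ∧ 0 < (W q').im) with hQA
    have hQAne : QA.Nonempty := by
      obtain ⟨q', h1, h2, h3⟩ := hA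
      exact ⟨q', Finset.mem_filter.mpr ⟨h1, h2, h3⟩⟩
    obtain ⟨q, hqQA, hqmin⟩ := QA.exists_min_image (fun q' => (W q').im) hQAne
    obtain ⟨hqB, hqsec, hqim⟩ := Finset.mem_filter.mp hqQA
    refine ⟨s, q, hs, hsr, hqB, hqsec, r, s, q, hr, hs, hqB, Ne.symm hsr, rfl, ?_⟩
    apply empty_gen R B hdisj hgp r s q hr hs hqB hsr
    · -- red interior point
      intro x hxR hxr hxs α β γ hα hβ hγ hsum hx
      have hWx : W x = (β : ℂ) * W s + (γ : ℂ) * W q := w_combo hu hsum hx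
      rw [hWs, mul_one] at hWx
      have hWxim : 0 < (W x).im := by
        have : (W x).im = β * (1 : ℂ).im + γ * (W q).im := by
          rw [hWx, ← combo_im, mul_one]
        simp only [Complex.one_im, mul_zero, zero_add] at this
        rw [this]; positivity
      have hcr : 0 < cross2 (W x) (W q) := by
        have : cross2 (W x) (W q) = β * cross2 1 (W q) + γ * cross2 (W q) (W q) := by
          rw [hWx, ← cross2_combo_left, mul_one]
        rw [this, cross2_self, cross2_one, mul_zero, add_zero]
        positivity
      have hlt : ccwAngle 1 (W x) < ccwAngle 1 (W q) := (ccw_lt_iff_upper hWxim hqim).mpr hcr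
      have hle := hqsec x hxR hxr hxs
      rw [hccw q, hccw x] at hle
      linarith
    · -- blue interior point
      intro x hxB hxq α β γ hα hβ hγ hsum hx
      have hWx : W x = (β : ℂ) * W s + (γ : ℂ) * W q := w_combo hu hsum hx
      rw [hWs, mul_one] at hWx
      have hWxim' : (W x).im = γ * (W q).im := by
        have : (W x).im = β * (1 : ℂ).im + γ * (W q).im := by
          rw [hWx, ← combo_im, mul_one]
        simpa using this
      have hWxim : 0 < (W x).im := by rw [hWxim']; positivity
      have hcr : 0 < cross2 (W x) (W q) := by
        have : cross2 (W x) (W q) = β * cross2 1 (W q) + γ * cross2 (W q) (W q) := by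
          rw [hWx, ← cross2_combo_left, mul_one]
        rw [this, cross2_self, cross2_one, mul_zero, add_zero]
        positivity
      have hlt : ccwAngle 1 (W x) < ccwAngle 1 (W q) := (ccw_lt_iff_upper hWxim hqim).mpr hcr
      have hxQA : x ∈ QA := by
        refine Finset.mem_filter.mpr ⟨hxB, ?_, hWxim⟩
        intro s' hs' h1 h2
        have := hqsec s' hs' h1 h2
        rw [hccw q, hccw s'] at this
        rw [hccw x, hccw s']
        linarith
      have := hqmin x hxQA
      have hγ1 : γ < 1 := by linarith
      nlinarith
  · -- not CASE A : every blue point in the sector is below the line rs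
    have hallim : ∀ q' ∈ B, inSector R r s q' → (W q').im < 0 := by
      intro q' hq' hsec
      rcases lt_trichotomy ((W q').im) 0 with h | h | h
      · exact h
      · exact absurd h (him q' (Or.inr hq') (fun hh => hBnotR q' hq' (hh ▸ hr))
          (fun hh => hBnotR q' hq' (hh ▸ hs)))
      · exact absurd ⟨q', hq', hsec, h⟩ hA
    by_cases hT : ∃ t' ∈ R, t' ≠ r ∧ t' ≠ s
    · -- CASE B : there is another red point
      set T : Finset ℂ := R.filter (fun y => y ≠ r ∧ y ≠ s) with hTdef
      have hTne : T.Nonempty := by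
        obtain ⟨t', h1, h2, h3⟩ := hT
        exact ⟨t', Finset.mem_filter.mpr ⟨h1, h2, h3⟩⟩
      obtain ⟨t, htT, htmin⟩ := T.exists_min_image (fun y => ccwAngle 1 (W y)) hTne
      obtain ⟨htR, htr, hts⟩ := Finset.mem_filter.mp htT
      set QB : Finset ℂ := B.filter (fun q' => inSector R r s q') with hQB
      have hQBne : QB.Nonempty := ⟨q₀, Finset.mem_filter.mpr ⟨hq₀, hq₀s⟩⟩
      obtain ⟨q, hqQB, hqmin⟩ := QB.exists_min_image (fun q' => |cross2 (W t) (W q')|) hQBne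
      obtain ⟨hqB, hqsec⟩ := Finset.mem_filter.mp hqQB
      have hqim : (W q).im < 0 := hallim q hqB hqsec
      have hqr : q ≠ r := fun hh => hBnotR q hqB (hh ▸ hr)
      have hqs : q ≠ s := fun hh => hBnotR q hqB (hh ▸ hs)
      have hqt : q ≠ t := fun hh => hBnotR q hqB (hh ▸ htR)
      have hle_qt : ccwAngle 1 (W q) ≤ ccwAngle 1 (W t) := by
        have := hqsec t htR htr hts
        rwa [hccw q, hccw t] at this
      have htim : (W t).im < 0 := by
        have htim0 : (W t).im ≠ 0 := him t (Or.inl htR) htr hts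
        rcases htim0.lt_or_gt with h | h
        · exact h
        · exfalso
          have h1 : ccwAngle 1 (W t) < π := by
            rw [ccw01_of_im_pos h]; exact arg_lt_pi_of_im_pos h
          have h2 : π < ccwAngle 1 (W q) := by
            rw [ccw01_of_im_neg hqim]
            have := Complex.neg_pi_lt_arg (W q)
            linarith
          linarith
      have hcqt : 0 < cross2 (W q) (W t) := by
        rcases lt_trichotomy (cross2 (W q) (W t)) 0 with h | h | h
        · exfalso
          have : 0 < cross2 (W t) (W q) := by
            rw [cross2_antisymm]; linarith
          have := (ccw_lt_iff_lower htim hqim).mpr this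
          linarith
        · exfalso
          have himq : (W q).im ≠ 0 := hqim.ne
          have hpar := parallel_of_cross2_eq_zero himq h
          have htq : t - r = (((W t).im / (W q).im : ℝ) : ℂ) * (q - r) := by
            have h1 : W t * (s - r) = t - r := div_mul_cancel₀ _ hu
            have h2 : W q * (s - r) = q - r := div_mul_cancel₀ _ hu
            calc t - r = W t * (s - r) := h1.symm
              _ = ((((W t).im / (W q).im : ℝ) : ℂ) * W q) * (s - r) := by rw [← hpar]
              _ = (((W t).im / (W q).im : ℝ) : ℂ) * (q - r) := by rw [mul_assoc, h2]
          exact hgp r (Or.inl hr) q (Or.inr hqB) t (Or.inl htR) (Ne.symm hqr) (Ne.symm htr)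
            hqt (collinear_of_sub_smul _ htq)
        · exact h
      refine ⟨t, q, htR, htr, hqB, hqsec, r, t, q, hr, htR, hqB, Ne.symm htr, rfl, ?_⟩
      apply empty_gen R B hdisj hgp r t q hr htR hqB htr
      · -- red interior point
        intro x hxR hxr hxt α β γ hα hβ hγ hsum hx
        have hWx : W x = (β : ℂ) * W t + (γ : ℂ) * W q := w_combo hu hsum hx
        have hWxim : (W x).im < 0 := by
          rw [hWx, combo_im]
          nlinarith
        have hxs : x ≠ s := by
          intro hh
          rw [hh, hWs] at hWxim
          simp at hWxim
        have hcr : 0 < cross2 (W x) (W t) := by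
          rw [hWx, cross2_combo_left, cross2_self, mul_zero, zero_add]
          positivity
        have hlt : ccwAngle 1 (W x) < ccwAngle 1 (W t) := (ccw_lt_iff_lower hWxim htim).mpr hcr
        have := htmin x (Finset.mem_filter.mpr ⟨hxR, hxr, hxs⟩)
        linarith
      · -- blue interior point
        intro x hxB hxq α β γ hα hβ hγ hsum hx
        have hWx : W x = (β : ℂ) * W t + (γ : ℂ) * W q := w_combo hu hsum hx
        have hWxim : (W x).im < 0 := by
          rw [hWx, combo_im]
          nlinarith
        have hcr : 0 < cross2 (W x) (W t) := by
          rw [hWx, cross2_combo_left, cross2_self, mul_zero, zero_add]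
          positivity
        have hlt : ccwAngle 1 (W x) < ccwAngle 1 (W t) := (ccw_lt_iff_lower hWxim htim).mpr hcr
        have hxQB : x ∈ QB := by
          refine Finset.mem_filter.mpr ⟨hxB, ?_⟩
          intro s' hs' h1 h2
          have := htmin s' (Finset.mem_filter.mpr ⟨hs', h1, h2⟩)
          rw [hccw x, hccw s']
          linarith
        have hmx := hqmin x hxQB
        have hcx : cross2 (W t) (W x) = γ * cross2 (W t) (W q) := by
          rw [hWx, cross2_combo_right, cross2_self, mul_zero, zero_add]
        have habs : |cross2 (W t) (W x)| = γ * |cross2 (W t) (W q)| := by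
          rw [hcx, abs_mul, abs_of_pos hγ]
        have hpos : 0 < |cross2 (W t) (W q)| := by
          rw [abs_pos]
          intro hh
          rw [cross2_antisymm] at hcqt
          rw [hh] at hcqt
          simp at hcqt
        have hγ1 : γ < 1 := by linarith
        rw [habs] at hmx
        nlinarith
    · -- CASE C : R = {r, s}
      set QC : Finset ℂ := B.filter (fun q' => inSector R r s q') with hQC
      have hQCne : QC.Nonempty := ⟨q₀, Finset.mem_filter.mpr ⟨hq₀, hq₀s⟩⟩
      obtain ⟨q, hqQC, hqmin⟩ := QC.exists_min_image (fun q' => |(W q').im|) hQCne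
      obtain ⟨hqB, hqsec⟩ := Finset.mem_filter.mp hqQC
      have hqr : q ≠ r := fun hh => hBnotR q hqB (hh ▸ hr)
      have hqs : q ≠ s := fun hh => hBnotR q hqB (hh ▸ hs)
      have hqim : (W q).im ≠ 0 := him q (Or.inr hqB) hqr hqs
      have vac : ∀ x : ℂ, inSector R r s x := by
        intro x s' hs' h1 h2
        exact absurd ⟨s', hs', h1, h2⟩ hT
      refine ⟨s, q, hs, hsr, hqB, hqsec, r, s, q, hr, hs, hqB, Ne.symm hsr, rfl, ?_⟩
      apply empty_gen R B hdisj hgp r s q hr hs hqB hsr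
      · intro x hxR hxr hxs α β γ hα hβ hγ hsum hx
        exact absurd ⟨x, hxR, hxr, hxs⟩ hT
      · intro x hxB hxq α β γ hα hβ hγ hsum hx
        have hWx : W x = (β : ℂ) * W s + (γ : ℂ) * W q := w_combo hu hsum hx
        rw [hWs, mul_one] at hWx
        have hWxim : (W x).im = γ * (W q).im := by
          have : (W x).im = β * (1 : ℂ).im + γ * (W q).im := by
            rw [hWx, ← combo_im, mul_one]
          simpa using this
        have hxQC : x ∈ QC := Finset.mem_filter.mpr ⟨hxB, vac x⟩
        have hmx := hqmin x hxQC
        rw [hWxim, abs_mul, abs_of_pos hγ] at hmx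
        have hγ1 : γ < 1 := by linarith
        have : 0 < |(W q).im| := abs_pos.mpr hqim
        nlinarith

end Helpers

open Complex Real in
/-- If every red point `r` has at least `p` blue sectors with respect to it, then the
number of empty red-red-blue triangles is at least `p · n / 2`. -/
theorem stmt_6 (R B : Finset ℂ) (n : ℕ) (hn : R.card = n) (h2 : 2 ≤ n)
    (hdisj : Disjoint R B) (hgp : GenPos (↑R ∪ ↑B))
    (p : ℕ) (hp : ∀ r ∈ R, p ≤ (blueSectors R B r).ncard) :
    p * n ≤ 2 * (emptyRRB R B).ncard := by
  classical
  have hBnotR : ∀ x ∈ B, x ∉ R := fun x hx hxr => Finset.disjoint_left.mp hdisj hxr hx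
  -- finiteness of the set of empty triangles
  have hfin : (emptyRRB R B).Finite := by
    apply Set.Finite.subset (Set.Finite.image
      (f := fun t : ℂ × ℂ × ℂ => ({t.1, t.2.1, t.2.2} : Set ℂ))
      (((R.finite_toSet.prod (R.finite_toSet.prod B.finite_toSet)))))
    rintro T ⟨a, b, c, ha, hb, hc, -, rfl, -⟩
    exact ⟨(a, b, c), ⟨ha, hb, hc⟩, rfl⟩
  -- the pairs (apex, blue sector)
  set P : Finset (ℂ × ℂ) := (R ×ˢ R).filter (fun z => z.2 ∈ blueSectors R B z.1) with hP
  -- lower bound on the number of pairs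
  have hbsfin : ∀ r : ℂ, blueSectors R B r =
      ↑(R.filter (fun s => s ≠ r ∧ ∃ q ∈ B, inSector R r s q)) := by
    intro r
    ext x
    simp [blueSectors]
  have hPcard : p * n ≤ P.card := by
    have hfib : ∀ z ∈ P, Prod.fst z ∈ R := fun z hz =>
      (Finset.mem_product.mp (Finset.mem_filter.mp hz).1).1
    rw [Finset.card_eq_sum_card_fiberwise hfib]
    have hbound : ∀ r ∈ R, p ≤ (P.filter (fun z => z.1 = r)).card := by
      intro r hrR
      have himg : P.filter (fun z => z.1 = r) =
          (R.filter (fun s => s ∈ blueSectors R B r)).image (fun s => (r, s)) := by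
        ext z
        simp only [Finset.mem_filter, Finset.mem_image, Finset.mem_product, hP]
        constructor
        · rintro ⟨⟨⟨h1, h2⟩, h3⟩, h4⟩
          exact ⟨z.2, ⟨h2, by rw [← h4]; exact h3⟩, by rw [← h4]⟩
        · rintro ⟨s, ⟨hsR, hsb⟩, rfl⟩
          exact ⟨⟨⟨hrR, hsR⟩, hsb⟩, rfl⟩
      rw [himg, Finset.card_image_of_injective _ (fun a b h => (Prod.mk.injEq _ _ _ _ ▸ h).2)]
      have hset : R.filter (fun s => s ∈ blueSectors R B r) =
          R.filter (fun s => s ≠ r ∧ ∃ q ∈ B, inSector R r s q) := by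
        ext x
        simp [blueSectors]
      rw [hset]
      calc p ≤ (blueSectors R B r).ncard := hp r hrR
        _ = _ := by rw [hbsfin r, Set.ncard_coe_finset]
    calc p * n = ∑ _r ∈ R, p := by rw [Finset.sum_const, hn, smul_eq_mul, mul_comm]
      _ ≤ _ := Finset.sum_le_sum hbound
  -- choose an empty triangle for each pair
  have key : ∀ z : ℂ × ℂ, ∃ T : Set ℂ, z ∈ P →
      T ∈ emptyRRB R B ∧ ∃ a q : ℂ, a ∈ R ∧ q ∈ B ∧ a ≠ z.1 ∧
        inSector R z.1 z.2 q ∧ T = {z.1, a, q} := by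
    intro z
    by_cases hz : z ∈ P
    · obtain ⟨hmem, hbs⟩ := Finset.mem_filter.mp hz
      obtain ⟨h1, h2⟩ := Finset.mem_product.mp hmem
      obtain ⟨hsR, hsne, q₀, hq₀, hq₀s⟩ := hbs
      obtain ⟨a, q, haR, har, hqB, hqsec, hT⟩ :=
        exist_triangle R B hdisj hgp z.1 z.2 h1 h2 hsne q₀ hq₀ hq₀s
      exact ⟨{z.1, a, q}, fun _ => ⟨hT, a, q, haR, hqB, har, hqsec, rfl⟩⟩
    · exact ⟨∅, fun h => absurd h hz⟩
  choose F hF using key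
  -- each triangle is hit at most twice
  have hfiber : ∀ T ∈ P.image F, (P.filter (fun z => F z = T)).card ≤ 2 := by
    intro T hT
    obtain ⟨z₀, hz₀P, hz₀T⟩ := Finset.mem_image.mp hT
    obtain ⟨-, a₀, q₀, ha₀R, hq₀B, -, -, hT₀⟩ := hF z₀ hz₀P
    rw [← hz₀T]
    set Fib := P.filter (fun z => F z = F z₀) with hFib
    have hinj : Set.InjOn Prod.fst (Fib : Set (ℂ × ℂ)) := by
      rintro z hz z' hz' h1
      have hzP := (Finset.mem_filter.mp hz).1
      have hzE := (Finset.mem_filter.mp hz).2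
      have hz'P := (Finset.mem_filter.mp hz').1
      have hz'E := (Finset.mem_filter.mp hz').2
      obtain ⟨-, a, q, haR, hqB, har, hqsec, hTz⟩ := hF z hzP
      obtain ⟨-, a', q', ha'R, hq'B, ha'r, hq'sec, hTz'⟩ := hF z' hz'P
      have hTT : ({z.1, a, q} : Set ℂ) = ({z'.1, a', q'} : Set ℂ) := by
        rw [← hTz, ← hTz', hzE, hz'E]
      have hqq : q = q' := by
        have hqmem : q ∈ ({z'.1, a', q'} : Set ℂ) := by
          rw [← hTT]; right; right; rfl
        rcases hqmem with h | h | h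
        · exact absurd ((h ▸ hqB : z'.1 ∈ B)) (fun hh => hBnotR _ hh
            ((Finset.mem_product.mp (Finset.mem_filter.mp hz'P).1).1))
        · exact absurd ((h ▸ hqB : a' ∈ B)) (fun hh => hBnotR _ hh ha'R)
        · exact h
      have hzR := Finset.mem_product.mp (Finset.mem_filter.mp hzP).1
      have hz'R := Finset.mem_product.mp (Finset.mem_filter.mp hz'P).1
      have hbsz := (Finset.mem_filter.mp hzP).2
      have hbsz' := (Finset.mem_filter.mp hz'P).2
      by_contra hne
      have hsne : z.2 ≠ z'.2 := fun h => hne (Prod.ext h1 h)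
      apply sector_disjoint hdisj hgp hzR.1 hzR.2 hz'R.2 hqB
        hbsz.2.1 (fun hh => hbsz'.2.1 (hh.trans h1)) hsne hqsec
      rw [hqq, h1]
      exact hq'sec
    have himage : Fib.image Prod.fst ⊆ {z₀.1, a₀} := by
      intro x hx
      obtain ⟨z, hzFib, rfl⟩ := Finset.mem_image.mp hx
      have hzP := (Finset.mem_filter.mp hzFib).1
      have hzE := (Finset.mem_filter.mp hzFib).2
      obtain ⟨-, a, q, haR, hqB, har, hqsec, hTz⟩ := hF z hzP
      have : z.1 ∈ ({z₀.1, a₀, q₀} : Set ℂ) := by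
        rw [← hT₀, ← hzE, hTz]
        left; rfl
      have hz1R := (Finset.mem_product.mp (Finset.mem_filter.mp hzP).1).1
      rcases this with h | h | h
      · simp [h]
      · simp [h]
      · exact absurd (h ▸ hz1R) (hBnotR q₀ hq₀B)
    calc Fib.card = (Fib.image Prod.fst).card :=
          (Finset.card_image_of_injOn hinj).symm
      _ ≤ ({z₀.1, a₀} : Finset ℂ).card := Finset.card_le_card himage
      _ ≤ 2 := Finset.card_insert_le _ _ |>.trans (by simp)
  have hPle : P.card ≤ 2 * (P.image F).card := Finset.card_le_mul_card_image P 2 hfiber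
  have himgsub : ↑(P.image F) ⊆ emptyRRB R B := by
    intro T hT
    obtain ⟨z, hzP, rfl⟩ := Finset.mem_coe.mp hT |> Finset.mem_image.mp
    exact (hF z hzP).1
  have hlast : (P.image F).card ≤ (emptyRRB R B).ncard := by
    rw [← Set.ncard_coe_finset]
    exact Set.ncard_le_ncard himgsub hfin
  omega
end

section
/- Let r, r₁, r₂ be red points and let S be the closed sector with apex r bounded by the rays from r through r₁ and r₂ (containing no other red point in its interior). Suppose S contains at least one blue point, the full point set R ∪ B is in general position, and b ∈ S ∩ B is chosen to minimize the smaller of the angles ∠(rb, rr₁) and ∠(rb, rr₂) over blue points in S. If this minimum is attained at ∠(rb, rr₁), then the triangle with vertices r, r₁, b is empty, i.e., its convex hull contains no point of R ∪ B other than r, r₁, b. -/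
lemma ccwAngle_aux_nonneg (x : ℂ) : 0 ≤ (if 0 ≤ x.arg then x.arg else x.arg + 2 * Real.pi) := by
  split_ifs with h
  · exact h
  · nlinarith [Complex.neg_pi_lt_arg x, Real.pi_pos]

lemma ccwAngle_aux_lt (x : ℂ) : (if 0 ≤ x.arg then x.arg else x.arg + 2 * Real.pi) < 2 * Real.pi := by
  split_ifs with h
  · nlinarith [Complex.arg_le_pi x, Real.pi_pos]
  · linarith [not_le.mp h]

lemma arg_aux (w : ℂ) (hw : 0 < w.im) (β γ : ℝ) (hβ : 0 ≤ β) (hγ : 0 ≤ γ)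
    (hz : (β : ℂ) + (γ : ℂ) * w ≠ 0) :
    0 ≤ ((β : ℂ) + (γ : ℂ) * w).arg ∧ ((β : ℂ) + (γ : ℂ) * w).arg ≤ w.arg ∧
      (((β : ℂ) + (γ : ℂ) * w).arg = w.arg → β = 0 ∧ 0 < γ) := by
  set z : ℂ := (β : ℂ) + (γ : ℂ) * w with hzdef
  have hw0 : w ≠ 0 := by
    intro h; rw [h] at hw; simp at hw
  have hzim : z.im = γ * w.im := by simp [hzdef]
  have h0 : 0 ≤ z.arg := Complex.arg_nonneg_iff.mpr (by rw [hzim]; positivity)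
  have hwarg : 0 < w.arg := by
    rcases (Complex.arg_nonneg_iff.mpr hw.le).lt_or_eq with h | h
    · exact h
    · exact absurd (Complex.arg_eq_zero_iff.mp h.symm).2 (by linarith)
  have hdne : z / w ≠ 0 := div_ne_zero hz hw0
  have hnsq : 0 < Complex.normSq w := Complex.normSq_pos.mpr hw0
  have hdim : (z / w).im = -β * w.im / Complex.normSq w := by
    rw [Complex.div_im]
    field_simp [hzdef]
    simp only [hzdef, Complex.add_re, Complex.add_im, Complex.mul_re, Complex.mul_im,
      Complex.ofReal_re, Complex.ofReal_im]
    ring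
  have hdle : (z / w).arg ≤ 0 ∧ ((z / w).arg = 0 → β = 0 ∧ 0 < γ) := by
    rcases hβ.lt_or_eq with hb0 | hb0
    · have him : (z / w).im < 0 := by
        rw [hdim]
        apply div_neg_of_neg_of_pos _ hnsq
        nlinarith
      have := Complex.arg_neg_iff.mpr him
      exact ⟨this.le, fun h => absurd h (by linarith)⟩
    · have hγ0 : γ ≠ 0 := by
        intro h
        apply hz
        rw [hzdef, ← hb0, h]
        simp
      have hγpos : 0 < γ := lt_of_le_of_ne hγ (Ne.symm hγ0)
      have hzw : z / w = (γ : ℂ) := by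
        rw [hzdef, ← hb0]
        push_cast
        field_simp
        ring
      rw [hzw]
      constructor
      · rw [Complex.arg_ofReal_of_nonneg hγ]
      · exact fun _ => ⟨hb0.symm, hγpos⟩
  have hmul : z.arg = w.arg + (z / w).arg := by
    have hwz : w * (z / w) = z := mul_div_cancel₀ z hw0
    have := (Complex.arg_mul_eq_add_arg_iff hw0 hdne).mpr
      ⟨by linarith [Complex.neg_pi_lt_arg (z / w)], by linarith [Complex.arg_le_pi w]⟩
    rw [hwz] at this
    exact this
  refine ⟨h0, by linarith [hdle.1], fun h => ?_⟩
  exact hdle.2 (by linarith)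

/-- Let `S` be the closed sector with apex `r` swept counterclockwise from the ray `r r₁`
to the ray `r r₂`, containing no red point other than `r, r₁, r₂`.  If `b` is a blue
point of `S` minimizing the smaller of the angles `∠(rb, rr₁)` and `∠(rb, rr₂)` over blue
points of `S`, and this minimum is attained at `∠(rb, rr₁)`, then `r, r₁, b` form an
empty triangle. -/
theorem stmt_7 (R B : Finset ℂ) (hdisj : Disjoint R B) (hgp : GenPos (↑R ∪ ↑B))
    (r r₁ r₂ b : ℂ) (hr : r ∈ R) (hr₁ : r₁ ∈ R) (hr₂ : r₂ ∈ R)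
    (hrr₁ : r ≠ r₁) (hrr₂ : r ≠ r₂) (hr₁r₂ : r₁ ≠ r₂)
    (S : Set ℂ)
    (hS : S = {x | x = r ∨ ccwAngle (r₁ - r) (x - r) ≤ ccwAngle (r₁ - r) (r₂ - r)})
    (hnored : ∀ s ∈ R, s ∈ S → s = r ∨ s = r₁ ∨ s = r₂)
    (hb : b ∈ B) (hbS : b ∈ S)
    (hmin : ∀ q ∈ B, q ∈ S →
      min (ccwAngle (r₁ - r) (b - r))
          (ccwAngle (r₁ - r) (r₂ - r) - ccwAngle (r₁ - r) (b - r)) ≤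
      min (ccwAngle (r₁ - r) (q - r))
          (ccwAngle (r₁ - r) (r₂ - r) - ccwAngle (r₁ - r) (q - r)))
    (hside : ccwAngle (r₁ - r) (b - r) ≤
      ccwAngle (r₁ - r) (r₂ - r) - ccwAngle (r₁ - r) (b - r)) :
    convexHull ℝ {r, r₁, b} ∩ (↑R ∪ ↑B : Set ℂ) = ({r, r₁, b} : Set ℂ) := by
  have hdisj' := Finset.disjoint_left.mp hdisj
  have hbr : b ≠ r := fun h => hdisj' hr (h ▸ hb)
  have hbr₁ : b ≠ r₁ := fun h => hdisj' hr₁ (h ▸ hb)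
  have hu : r₁ - r ≠ 0 := sub_ne_zero_of_ne hrr₁.symm
  have hv : b - r ≠ 0 := sub_ne_zero_of_ne hbr
  set u : ℂ := r₁ - r with hudef
  set w : ℂ := (b - r) / u with hwdef
  have hw0 : w ≠ 0 := div_ne_zero hv hu
  have hrmem : r ∈ (↑R ∪ ↑B : Set ℂ) := Or.inl (by exact_mod_cast hr)
  have hr₁mem : r₁ ∈ (↑R ∪ ↑B : Set ℂ) := Or.inl (by exact_mod_cast hr₁)
  have hbmem : b ∈ (↑R ∪ ↑B : Set ℂ) := Or.inr (by exact_mod_cast hb)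
  have ccw_def : ∀ x : ℂ,
      ccwAngle u x = if 0 ≤ (x / u).arg then (x / u).arg else (x / u).arg + 2 * Real.pi :=
    fun x => rfl
  have hθ₂lt : ccwAngle u (r₂ - r) < 2 * Real.pi := by
    rw [ccw_def]; exact ccwAngle_aux_lt _
  have hbnn : 0 ≤ ccwAngle u (b - r) := by
    rw [ccw_def]; exact ccwAngle_aux_nonneg _
  have hwim : 0 < w.im := by
    rcases lt_trichotomy 0 w.im with h | h | h
    · exact h
    · exfalso
      apply hgp r hrmem r₁ hr₁mem b hbmem hrr₁ (Ne.symm hbr) (Ne.symm hbr₁)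
      rw [collinear_iff_exists_forall_eq_smul_vadd]
      refine ⟨r, u, ?_⟩
      intro q hq
      simp only [Set.mem_insert_iff, Set.mem_singleton_iff] at hq
      rcases hq with hq | hq | hq
      · exact ⟨0, by simp [hq]⟩
      · refine ⟨1, ?_⟩
        simp only [one_smul, vadd_eq_add, hudef, hq]
        ring
      · refine ⟨w.re, ?_⟩
        have hwre : (w.re : ℂ) = w := by
          apply Complex.ext <;> simp [← h]
        have hbu : b - r = w * u := (div_mul_cancel₀ _ hu).symm
        simp only [vadd_eq_add, Complex.real_smul, hwre, hq]
        rw [← hbu]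
        ring
    · exfalso
      have harg : w.arg < 0 := Complex.arg_neg_iff.mpr h
      have hcb : ccwAngle u (b - r) = w.arg + 2 * Real.pi := by
        rw [ccw_def, ← hwdef, if_neg (not_le.mpr harg)]
      have := Complex.neg_pi_lt_arg w
      have := Real.pi_pos
      linarith [hside, hθ₂lt]
  have hwarg : 0 < w.arg := by
    rcases (Complex.arg_nonneg_iff.mpr hwim.le).lt_or_eq with h | h
    · exact h
    · exact absurd (Complex.arg_eq_zero_iff.mp h.symm).2 (by linarith)
  have hccwb : ccwAngle u (b - r) = w.arg := by
    rw [ccw_def, ← hwdef, if_pos hwarg.le]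
  have h2b : 2 * ccwAngle u (b - r) ≤ ccwAngle u (r₂ - r) := by linarith [hside]
  apply Set.Subset.antisymm
  · rintro p ⟨hph, hpRB⟩
    by_cases hpr : p = r
    · simp [hpr]
    rw [show ({r, r₁, b} : Set ℂ) = insert r {r₁, b} from rfl,
      convexHull_insert ⟨r₁, Set.mem_insert _ _⟩, mem_convexJoin] at hph
    obtain ⟨x, hx, z, hz, hpz⟩ := hph
    rw [Set.mem_singleton_iff] at hx
    rw [hx] at hpz
    rw [convexHull_pair] at hz
    obtain ⟨a', c', ha', hc', hac', hzeq⟩ := hz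
    obtain ⟨a, c, ha, hc, hac, hpeq⟩ := hpz
    simp only [Complex.real_smul] at hpeq hzeq
    have hacC : (a : ℂ) + (c : ℂ) = 1 := by exact_mod_cast hac
    have hac'C : (a' : ℂ) + (c' : ℂ) = 1 := by exact_mod_cast hac'
    have hβ : (0:ℝ) ≤ c * a' := mul_nonneg hc ha'
    have hγ : (0:ℝ) ≤ c * c' := mul_nonneg hc hc'
    have hpru : p - r = ((c * a' : ℝ) : ℂ) * u + ((c * c' : ℝ) : ℂ) * (b - r) := by
      rw [hudef]
      push_cast
      linear_combination (-1 : ℂ) * hpeq - (c : ℂ) * hzeq + r * hacC + r * (c : ℂ) * hac'C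
    have hz'eq : (p - r) / u = ((c * a' : ℝ) : ℂ) + ((c * c' : ℝ) : ℂ) * w := by
      rw [hpru, hwdef]
      field_simp
    have hzne : ((c * a' : ℝ) : ℂ) + ((c * c' : ℝ) : ℂ) * w ≠ 0 := by
      rw [← hz'eq]
      exact div_ne_zero (sub_ne_zero_of_ne hpr) hu
    obtain ⟨h1, h2, h3⟩ := arg_aux w hwim (c * a') (c * c') hβ hγ hzne
    have hccwp : ccwAngle u (p - r) = ((p - r) / u).arg := by
      rw [ccw_def, if_pos (by rw [hz'eq]; exact h1)]
    have hple : ccwAngle u (p - r) ≤ ccwAngle u (b - r) := by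
      rw [hccwp, hccwb, hz'eq]
      exact h2
    have hpS : p ∈ S := by
      rw [hS]
      exact Or.inr (by linarith)
    rcases hpRB with hpR | hpB
    · rcases hnored p (by exact_mod_cast hpR) hpS with h | h | h
      · exact absurd h hpr
      · simp [h]
      · exfalso
        have : ccwAngle u (r₂ - r) ≤ ccwAngle u (b - r) := h ▸ hple
        linarith
    · have hpB' : p ∈ B := by exact_mod_cast hpB
      by_cases hpb : p = b
      · simp [hpb]
      exfalso
      have hm := hmin p hpB' hpS
      rw [min_eq_left hside] at hm
      have hge : ccwAngle u (b - r) ≤ ccwAngle u (p - r) := le_trans hm (min_le_left _ _)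
      obtain ⟨hβ0, hγpos⟩ := h3 (by rw [← hz'eq, ← hccwp, ← hccwb]; linarith)
      have hpr' : p - r = ((c * c' : ℝ) : ℂ) * (b - r) := by
        rw [hpru, hβ0]
        simp
      apply hgp r hrmem b hbmem p (Or.inr hpB) (Ne.symm hbr) (Ne.symm hpr) (Ne.symm hpb)
      rw [collinear_iff_exists_forall_eq_smul_vadd]
      refine ⟨r, b - r, ?_⟩
      intro q hq
      simp only [Set.mem_insert_iff, Set.mem_singleton_iff] at hq
      rcases hq with hq | hq | hq
      · exact ⟨0, by simp [hq]⟩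
      · exact ⟨1, by simp [hq]⟩
      · refine ⟨c * c', ?_⟩
        simp only [vadd_eq_add, Complex.real_smul, hq]
        rw [← hpr']
        ring
  · intro x hx
    refine ⟨subset_convexHull ℝ _ hx, ?_⟩
    simp only [Set.mem_insert_iff, Set.mem_singleton_iff] at hx
    rcases hx with rfl | rfl | rfl
    · exact hrmem
    · exact hr₁mem
    · exact hbmem
end

section
/- Let R, B ⊂ ℝ² be finite disjoint sets with R ∪ B in general position. Suppose G ⊆ ℝ² is a convex sector with |R ∩ G| ≥ 2 and |B ∩ G| = ⌈|R ∩ G|/3⌉. Then the number of empty red-red-blue triangles with all three vertices in G is at least (2/9)·|R ∩ G|². -/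
open Complex



lemma ccw_nonneg (u v : ℂ) : 0 ≤ ccwAngle u v := by
  unfold ccwAngle
  split
  · assumption
  · nlinarith [neg_pi_lt_arg (v/u), Real.pi_pos]

lemma ccw_lt_two_pi (u v : ℂ) : ccwAngle u v < 2 * Real.pi := by
  unfold ccwAngle
  split
  · nlinarith [arg_le_pi (v/u), Real.pi_pos]
  · rename_i h
    push_neg at h
    linarith

lemma ccw_coe (u v : ℂ) : (ccwAngle u v : Real.Angle) = ((v / u).arg : Real.Angle) := by
  unfold ccwAngle
  split
  · rfl
  · rw [Real.Angle.coe_add, Real.Angle.coe_two_pi, add_zero]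

/-- extraction -/
lemma angle_ext {α β : ℝ} (h : (α : Real.Angle) = β) (h2 : |α - β| < 2 * Real.pi) : α = β := by
  rw [Real.Angle.angle_eq_iff_two_pi_dvd_sub] at h
  obtain ⟨k, hk⟩ := h
  have hπ := Real.pi_pos
  rw [abs_lt] at h2
  have hk1 : k = 0 := by
    have h1' : (k:ℝ) < 1 := by nlinarith
    have h2' : (-1:ℝ) < (k:ℝ) := by nlinarith
    have : k < 1 := by exact_mod_cast h1'
    have : -1 < k := by exact_mod_cast h2'
    omega
  rw [hk1] at hk
  push_cast at hk
  linarith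

lemma ccw_add (u v w : ℂ) (hu : u ≠ 0) (hv : v ≠ 0) (hw : w ≠ 0) :
    (ccwAngle u w : Real.Angle) = (ccwAngle u v : Real.Angle) + (ccwAngle v w : Real.Angle) := by
  rw [ccw_coe, ccw_coe, ccw_coe]
  rw [← Complex.arg_mul_coe_angle (div_ne_zero hv hu) (div_ne_zero hw hv)]
  have : v / u * (w / v) = w / u := by
    field_simp
  rw [this]

lemma ccw_eq_zero {u v : ℂ} (hu : u ≠ 0) (hv : v ≠ 0) (h : ccwAngle u v = 0) :
    ∃ t : ℝ, 0 < t ∧ v = t * u := by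
  have hne : v / u ≠ 0 := div_ne_zero hv hu
  have harg : (v/u).arg = 0 := by
    unfold ccwAngle at h
    split at h
    · exact h
    · nlinarith [neg_pi_lt_arg (v/u), Real.pi_pos]
  rw [Complex.arg_eq_zero_iff] at harg
  have hvu : v / u = ((v/u).re : ℂ) := by
    apply Complex.ext <;> simp [harg.2]
  refine ⟨(v/u).re, ?_, ?_⟩
  · rcases harg.1.lt_or_eq with h1 | h1
    · exact h1
    · exfalso; apply hne; rw [hvu, ← h1]; simp
  · exact (div_eq_iff hu).mp hvu

lemma ccw_eq_pi {u v : ℂ} (hu : u ≠ 0) (hv : v ≠ 0) (h : ccwAngle u v = Real.pi) :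
    ∃ t : ℝ, t < 0 ∧ v = t * u := by
  have harg : (v/u).arg = Real.pi := by
    unfold ccwAngle at h
    split at h
    · exact h
    · nlinarith [arg_le_pi (v/u), neg_pi_lt_arg (v/u), Real.pi_pos]
  rw [Complex.arg_eq_pi_iff] at harg
  have hvu : v / u = ((v/u).re : ℂ) := by
    apply Complex.ext <;> simp [harg.2]
  exact ⟨(v/u).re, harg.1, (div_eq_iff hu).mp hvu⟩

lemma ccw_self (u : ℂ) (hu : u ≠ 0) : ccwAngle u u = 0 := by
  unfold ccwAngle
  rw [div_self hu]
  simp [Complex.arg_one]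

lemma ccw_anti {u v : ℂ} (hu : u ≠ 0) (hv : v ≠ 0) (h1 : ccwAngle u v ≠ 0) :
    ccwAngle u v + ccwAngle v u = 2 * Real.pi := by
  have h2 : ccwAngle v u ≠ 0 := by
    intro hc
    obtain ⟨t, ht, hvt⟩ := ccw_eq_zero hv hu hc
    apply h1
    have htne : (t:ℂ) ≠ 0 := by exact_mod_cast ht.ne'
    have hratio : v / u = ((t⁻¹ : ℝ) : ℂ) := by
      rw [hvt, mul_comm, ← div_div, div_self hv]
      push_cast
      rw [one_div]
    unfold ccwAngle
    rw [hratio]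
    have ht' : (0:ℝ) ≤ t⁻¹ := by positivity
    rw [Complex.arg_ofReal_of_nonneg ht']
    simp
  have key : ((ccwAngle u v + ccwAngle v u : ℝ) : Real.Angle) = ((0:ℝ) : Real.Angle) := by
    rw [Real.Angle.coe_add]
    rw [← ccw_add u v u hu hv hu]
    rw [ccw_self u hu]
  rw [Real.Angle.angle_eq_iff_two_pi_dvd_sub] at key
  obtain ⟨k, hk⟩ := key
  have b1 := ccw_nonneg u v
  have b2 := ccw_nonneg v u
  have b3 := ccw_lt_two_pi u v
  have b4 := ccw_lt_two_pi v u
  have hπ := Real.pi_pos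
  have hk1 : k = 1 := by
    have u1 : (k:ℝ) < 2 := by nlinarith
    have u2 : (0:ℝ) < (k:ℝ) := by
      rcases (lt_or_ge 0 ((k:ℝ))) with h | h
      · exact h
      · exfalso
        have hs1 : ccwAngle u v = 0 := by nlinarith [b1, b2]
        exact h1 hs1
    have w1 : k < 2 := by exact_mod_cast u1
    have w2 : 0 < k := by exact_mod_cast u2
    omega
  rw [hk1] at hk
  push_cast at hk
  linarith

lemma ccw_sub {w z1 z2 : ℂ} (hw : w ≠ 0) (h1 : z1 ≠ 0) (h2 : z2 ≠ 0)
    (hlt : ccwAngle w z1 < ccwAngle w z2) :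
    ccwAngle z1 z2 = ccwAngle w z2 - ccwAngle w z1 := by
  apply angle_ext
  · rw [Real.Angle.coe_sub]
    rw [ccw_add w z1 z2 hw h1 h2]
    abel
  · have := ccw_nonneg z1 z2
    have := ccw_lt_two_pi z1 z2
    have := ccw_nonneg w z1
    have := ccw_lt_two_pi w z2
    rw [abs_lt]
    constructor <;> nlinarith

lemma ccw_sub' {w z1 z2 : ℂ} (hw : w ≠ 0) (h1 : z1 ≠ 0) (h2 : z2 ≠ 0)
    (hlt : ccwAngle w z2 < ccwAngle w z1) :
    ccwAngle z1 z2 = ccwAngle w z2 - ccwAngle w z1 + 2 * Real.pi := by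
  apply angle_ext
  · rw [Real.Angle.coe_add, Real.Angle.coe_sub]
    rw [ccw_add w z1 z2 hw h1 h2]
    rw [Real.Angle.coe_two_pi]
    abel
  · have := ccw_nonneg z1 z2
    have := ccw_lt_two_pi z1 z2
    have := ccw_nonneg w z2
    have := ccw_lt_two_pi w z1
    rw [abs_lt]
    constructor <;> nlinarith

lemma ccw_add_exact {w z1 z2 : ℂ} (hw : w ≠ 0) (h1 : z1 ≠ 0) (h2 : z2 ≠ 0)
    (hlt : ccwAngle w z1 + ccwAngle z1 z2 < 2 * Real.pi) :
    ccwAngle w z2 = ccwAngle w z1 + ccwAngle z1 z2 := by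
  apply angle_ext
  · rw [Real.Angle.coe_add]
    exact ccw_add w z1 z2 hw h1 h2
  · have := ccw_nonneg z1 z2
    have := ccw_nonneg w z1
    have := ccw_nonneg w z2
    have := ccw_lt_two_pi w z2
    rw [abs_lt]
    constructor <;> nlinarith

lemma cross_eq_s18 {z1 z2 : ℂ} (h1 : z1 ≠ 0) (h2 : z2 ≠ 0) :
    ((starRingEnd ℂ) z1 * z2).im = ‖z1‖ * ‖z2‖ * Real.sin (z2.arg - z1.arg) := by
  have hb1 : ‖z1‖ ≠ 0 := by simpa using h1
  have hb2 : ‖z2‖ ≠ 0 := by simpa using h2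
  have e1 : z1.re = ‖z1‖ * Real.cos z1.arg := by
    rw [Complex.cos_arg h1]; field_simp
  have e2 : z2.re = ‖z2‖ * Real.cos z2.arg := by
    rw [Complex.cos_arg h2]; field_simp
  have f1 : z1.im = ‖z1‖ * Real.sin z1.arg := by
    rw [Complex.sin_arg]; field_simp
  have f2 : z2.im = ‖z2‖ * Real.sin z2.arg := by
    rw [Complex.sin_arg]; field_simp
  simp only [Complex.mul_im, Complex.conj_re, Complex.conj_im]
  rw [Real.sin_sub, e1, e2, f1, f2]
  ring

lemma arg_mem_Ioo_of_im_pos {z : ℂ} (hz : 0 < z.im) :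
    0 < z.arg ∧ z.arg < Real.pi := by
  have hne : z ≠ 0 := by intro h; rw [h] at hz; simp at hz
  have habs : 0 < ‖z‖ := norm_pos_iff.mpr hne
  have hs : 0 < Real.sin z.arg := by
    rw [Complex.sin_arg]
    exact div_pos hz habs
  constructor
  · by_contra h
    push_neg at h
    have := Real.sin_nonpos_of_nonpos_of_neg_pi_le h (by linarith [Complex.neg_pi_lt_arg z])
    linarith
  · rcases (Complex.arg_le_pi z).lt_or_eq with h | h
    · exact h
    · rw [h] at hs; simp at hs

lemma arg_lt_arg_of_cross {z1 z2 : ℂ} (h1 : 0 < z1.im) (h2 : 0 < z2.im)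
    (hc : 0 < ((starRingEnd ℂ) z1 * z2).im) : z1.arg < z2.arg := by
  have hne1 : z1 ≠ 0 := by intro h; rw [h] at h1; simp at h1
  have hne2 : z2 ≠ 0 := by intro h; rw [h] at h2; simp at h2
  obtain ⟨a1, b1⟩ := arg_mem_Ioo_of_im_pos h1
  obtain ⟨a2, b2⟩ := arg_mem_Ioo_of_im_pos h2
  by_contra h
  push_neg at h
  rw [cross_eq_s18 hne1 hne2] at hc
  have habs1 : 0 < ‖z1‖ := norm_pos_iff.mpr hne1
  have habs2 : 0 < ‖z2‖ := norm_pos_iff.mpr hne2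
  have : Real.sin (z2.arg - z1.arg) ≤ 0 :=
    Real.sin_nonpos_of_nonpos_of_neg_pi_le (by linarith) (by linarith)
  nlinarith [mul_pos habs1 habs2]

lemma col3 {c p y : ℂ} (t : ℝ) (h : y - c = (t : ℂ) * (p - c)) :
    Collinear ℝ ({c, p, y} : Set ℂ) := by
  rw [collinear_iff_of_mem (Set.mem_insert c {p, y})]
  refine ⟨p - c, ?_⟩
  intro x hx
  rcases hx with h1 | h1 | h1
  · exact ⟨0, by simp [h1]⟩
  · refine ⟨1, ?_⟩
    subst h1
    show x = (1:ℝ) • (x - c) + c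
    rw [one_smul]
    ring
  · refine ⟨t, ?_⟩
    subst h1
    show x = t • (p - c) + c
    rw [Complex.real_smul]
    linear_combination h

lemma hull3 {c p q x : ℂ} (hx : x ∈ convexHull ℝ ({c, p, q} : Set ℂ)) :
    ∃ β γ : ℝ, 0 ≤ β ∧ 0 ≤ γ ∧ x - c = (β : ℂ) * (p - c) + (γ : ℂ) * (q - c) := by
  rw [show ({c, p, q} : Set ℂ) = insert c {p, q} from rfl] at hx
  rw [convexHull_insert ⟨p, by simp⟩] at hx
  rw [convexHull_pair, mem_convexJoin] at hx
  obtain ⟨c', hc', z, hz, hseg⟩ := hx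
  obtain ⟨a', b', ha', hb', hab', hz'⟩ := hz
  rw [Set.mem_singleton_iff] at hc'
  rw [hc'] at hseg
  obtain ⟨s, b, hs, hb, hsb, hx'⟩ := hseg
  refine ⟨b * a', b * b', by positivity, by positivity, ?_⟩
  have hz2 : z = (a' : ℂ) * p + (b' : ℂ) * q := by
    rw [← hz']; simp [Complex.real_smul]
  have hx2 : x = (s : ℂ) * c + (b : ℂ) * z := by
    rw [← hx']; simp [Complex.real_smul]
  rw [hx2, hz2]
  have h1 : (s : ℂ) + b = 1 := by exact_mod_cast congrArg (Complex.ofReal) hsb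
  have h2 : (a' : ℂ) + b' = 1 := by exact_mod_cast congrArg (Complex.ofReal) hab'
  push_cast
  linear_combination c * h1 + (b:ℂ) * c * h2


lemma im_pos_of_arg {z : ℂ} (hz : z ≠ 0) (h1 : 0 < z.arg) (h2 : z.arg < Real.pi) : 0 < z.im := by
  have habs : 0 < ‖z‖ := norm_pos_iff.mpr hz
  have hs : 0 < Real.sin z.arg := Real.sin_pos_of_pos_of_lt_pi h1 h2
  have := Complex.sin_arg z
  have : z.im = ‖z‖ * Real.sin z.arg := by
    rw [Complex.sin_arg]; field_simp
  rw [this]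
  positivity

lemma ccw_arg_eq {u v : ℂ} (h1 : 0 < ccwAngle u v) (h2 : ccwAngle u v < Real.pi) :
    (v / u).arg = ccwAngle u v := by
  unfold ccwAngle at h1 h2 ⊢
  split_ifs at h1 h2 ⊢ with h
  · rfl
  · exfalso
    have := Complex.neg_pi_lt_arg (v / u)
    have hπ := Real.pi_pos
    push_neg at h
    linarith

lemma triangle_empty (R B : Finset ℂ) (hgp : GenPos (↑R ∪ ↑B)) (G : Set ℂ) (hconv : Convex ℝ G)
    (c : ℂ) (hcRB : c ∈ (↑R ∪ ↑B : Set ℂ)) (hcG : c ∈ G)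
    (S : Finset ℂ) (hS : ∀ x : ℂ, x ∈ S ↔ (x ∈ (↑R ∪ ↑B : Set ℂ) ∧ x ∈ G ∧ x ≠ c))
    (w : ℂ) (hw : w ≠ 0)
    (p q : ℂ) (hp : p ∈ S) (hq : q ∈ S)
    (hlt : ccwAngle w (p - c) < ccwAngle w (q - c))
    (hgap : ccwAngle (p-c) (q-c) < Real.pi)
    (hbet : ∀ z ∈ S, ¬(ccwAngle w (p-c) < ccwAngle w (z-c) ∧ ccwAngle w (z-c) < ccwAngle w (q-c))) :
    convexHull ℝ ({p, q, c} : Set ℂ) ∩ (↑R ∪ ↑B : Set ℂ) = ({p, q, c} : Set ℂ) := by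
  obtain ⟨hpRB, hpG, hpc⟩ := (hS p).mp hp
  obtain ⟨hqRB, hqG, hqc⟩ := (hS q).mp hq
  have hpne : p - c ≠ 0 := sub_ne_zero.mpr hpc
  have hqne : q - c ≠ 0 := sub_ne_zero.mpr hqc
  have hpq : p ≠ q := by
    intro h; rw [h] at hlt; exact lt_irrefl _ hlt
  -- θ = f q - f p
  have hθ : ccwAngle (p-c) (q-c) = ccwAngle w (q-c) - ccwAngle w (p-c) :=
    ccw_sub hw hpne hqne hlt
  have hθpos : 0 < ccwAngle (p-c) (q-c) := by rw [hθ]; linarith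
  -- ζ
  set ζ := (q - c) / (p - c) with hζdef
  have hargζ : ζ.arg = ccwAngle (p-c) (q-c) := ccw_arg_eq hθpos hgap
  have hζne : ζ ≠ 0 := div_ne_zero hqne hpne
  have hζim : 0 < ζ.im := im_pos_of_arg hζne (by rw [hargζ]; exact hθpos) (by rw [hargζ]; exact hgap)
  apply Set.Subset.antisymm
  · rintro x ⟨hxhull, hxRB⟩
    have hseteq : ({p, q, c} : Set ℂ) = {c, p, q} := by
      ext z; simp only [Set.mem_insert_iff, Set.mem_singleton_iff]; tauto
    have hxG : x ∈ G := by
      have : convexHull ℝ ({p, q, c} : Set ℂ) ⊆ G := by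
        apply convexHull_min _ hconv
        intro z hz
        rcases hz with h | h | h <;> simp_all
      exact this hxhull
    by_cases hxc : x = c
    · simp [hxc]
    have hxS : x ∈ S := (hS x).mpr ⟨hxRB, hxG, hxc⟩
    have hxne : x - c ≠ 0 := sub_ne_zero.mpr hxc
    rw [hseteq] at hxhull
    obtain ⟨β, γ, hβ, hγ, hcomb⟩ := hull3 hxhull
    -- cases
    rcases hγ.eq_or_lt with hγ0 | hγ0
    · -- x on ray c p
      have : x - c = (β : ℂ) * (p - c) := by rw [hcomb, ← hγ0]; push_cast; ring
      have hcol : Collinear ℝ ({c, p, x} : Set ℂ) := col3 β this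
      by_cases hxp : x = p
      · simp [hxp]
      · exfalso
        exact hgp c hcRB p hpRB x hxRB (Ne.symm hpc) (Ne.symm hxc) (fun h => hxp h.symm) hcol
    rcases hβ.eq_or_lt with hβ0 | hβ0
    · have : x - c = (γ : ℂ) * (q - c) := by rw [hcomb, ← hβ0]; push_cast; ring
      have hcol : Collinear ℝ ({c, q, x} : Set ℂ) := col3 γ this
      by_cases hxq : x = q
      · simp [hxq]
      · exfalso
        exact hgp c hcRB q hqRB x hxRB (Ne.symm hqc) (Ne.symm hxc) (fun h => hxq h.symm) hcol
    · exfalso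
      set η := (x - c) / (p - c) with hηdef
      have hη : η = (β : ℂ) + (γ : ℂ) * ζ := by
        rw [hηdef, hζdef, hcomb]
        field_simp
      have hηim : 0 < η.im := by
        rw [hη]
        simp [Complex.add_im, Complex.mul_im]
        nlinarith
      have hcross : 0 < ((starRingEnd ℂ) η * ζ).im := by
        rw [hη]
        simp only [map_add, map_mul, Complex.conj_ofReal]
        simp [Complex.add_im, Complex.mul_im, Complex.mul_re, Complex.conj_re, Complex.conj_im]
        nlinarith
      have hargs : η.arg < ζ.arg := arg_lt_arg_of_cross hηim hζim hcross
      have hηarg0 : 0 < η.arg := (arg_mem_Ioo_of_im_pos hηim).1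
      -- ccwAngle (p-c) (x-c) = η.arg
      have hccwx : ccwAngle (p-c) (x-c) = η.arg := by
        unfold ccwAngle
        rw [← hηdef]
        rw [if_pos hηarg0.le]
      have hfx : ccwAngle w (x-c) = ccwAngle w (p-c) + ccwAngle (p-c) (x-c) := by
        apply ccw_add_exact hw hpne hxne
        rw [hccwx]
        have h2π := ccw_lt_two_pi w (q - c)
        rw [hθ] at hargζ
        linarith [hargs, hargζ ▸ hargs]
      apply hbet x hxS
      constructor
      · rw [hfx, hccwx]; linarith
      · rw [hfx, hccwx]
        have : η.arg < ccwAngle w (q-c) - ccwAngle w (p-c) := by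
          rw [← hθ, ← hargζ]; exact hargs
        linarith
  · intro z hz
    refine ⟨subset_convexHull ℝ _ hz, ?_⟩
    rcases hz with h | h | h <;> simp_all

lemma ccw_eq_of_eq {w z1 z2 : ℂ} (hw : w ≠ 0) (h1 : z1 ≠ 0) (h2 : z2 ≠ 0)
    (h : ccwAngle w z1 = ccwAngle w z2) : ccwAngle z1 z2 = 0 := by
  apply angle_ext
  · have := ccw_add w z1 z2 hw h1 h2
    rw [h] at this
    have h0 : (ccwAngle z1 z2 : Real.Angle) = 0 := by
      have := congrArg (fun a => a - (ccwAngle w z2 : Real.Angle)) this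
      simpa using this.symm
    rw [h0]
    norm_cast
  · have := ccw_nonneg z1 z2
    have := ccw_lt_two_pi z1 z2
    have := Real.pi_pos
    rw [abs_lt]
    constructor <;> nlinarith

open scoped Classical in
lemma per_blue (R B : Finset ℂ) (hdisj : Disjoint R B) (hgp : GenPos (↑R ∪ ↑B))
    (G : Set ℂ) (hconv : Convex ℝ G)
    (c : ℂ) (hcB : c ∈ B) (hcG : c ∈ G)
    (hr2 : 2 ≤ (R.filter (· ∈ G)).card) :
    ∃ 𝒯 : Finset (Set ℂ),
      (R.filter (· ∈ G)).card ≤ 𝒯.card + (B.filter (· ∈ G)).card ∧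
      ∀ T ∈ 𝒯, T ∈ emptyRRB R B ∧ T ⊆ G ∧ T ∩ ↑B = {c} := by
  set r := (R.filter (· ∈ G)).card with hrdef
  set b := (B.filter (· ∈ G)).card with hbdef
  have hcnR : c ∉ R := fun h => (Finset.disjoint_left.mp hdisj h) hcB
  have hb1 : 1 ≤ b := Finset.card_pos.mpr ⟨c, Finset.mem_filter.mpr ⟨hcB, hcG⟩⟩
  set S := ((R ∪ B).filter (· ∈ G)).erase c with hSdef
  have hSmem : ∀ x : ℂ, x ∈ S ↔ (x ∈ (↑R ∪ ↑B : Set ℂ) ∧ x ∈ G ∧ x ≠ c) := by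
    intro x
    simp only [hSdef, Finset.mem_erase, Finset.mem_filter, Finset.mem_union,
      Set.mem_union, Finset.mem_coe]
    tauto
  have hcmem : c ∈ (R ∪ B).filter (· ∈ G) :=
    Finset.mem_filter.mpr ⟨Finset.mem_union_right _ hcB, hcG⟩
  have hScard : S.card = r + b - 1 := by
    rw [hSdef, Finset.card_erase_of_mem hcmem, Finset.filter_union,
      Finset.card_union_of_disjoint (Finset.disjoint_filter_filter hdisj)]
  have hm2 : 2 ≤ S.card := by omega
  have hwne : ∀ x ∈ S, x - c ≠ 0 := by
    intro x hx
    exact sub_ne_zero.mpr (((hSmem x).mp hx).2.2)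
  have hcRB : c ∈ (↑R ∪ ↑B : Set ℂ) := Set.mem_union_right _ hcB
  have hSRB : ∀ x ∈ S, x ∈ (↑R ∪ ↑B : Set ℂ) := fun x hx => ((hSmem x).mp hx).1
  have hSG : ∀ x ∈ S, x ∈ G := fun x hx => ((hSmem x).mp hx).2.1
  have hSc : ∀ x ∈ S, x ≠ c := fun x hx => ((hSmem x).mp hx).2.2
  -- no zero / pi relative angles between distinct points of S
  have hccw_ne : ∀ x ∈ S, ∀ z ∈ S, x ≠ z →
      ccwAngle (x-c) (z-c) ≠ 0 ∧ ccwAngle (x-c) (z-c) ≠ Real.pi := by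
    intro x hx z hz hne
    constructor
    · intro h
      obtain ⟨t, _, hzt⟩ := ccw_eq_zero (hwne x hx) (hwne z hz) h
      exact hgp c hcRB x (hSRB x hx) z (hSRB z hz) (Ne.symm (hSc x hx)) (Ne.symm (hSc z hz))
        hne (col3 t hzt)
    · intro h
      obtain ⟨t, _, hzt⟩ := ccw_eq_pi (hwne x hx) (hwne z hz) h
      exact hgp c hcRB x (hSRB x hx) z (hSRB z hz) (Ne.symm (hSc x hx)) (Ne.symm (hSc z hz))
        hne (col3 t hzt)
  have herase_ne : ∀ x ∈ S, (S.erase x).Nonempty := by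
    intro x hx
    apply Finset.card_pos.mp
    rw [Finset.card_erase_of_mem hx]
    omega
  -- choose y₀ maximizing the successor gap
  set g : {x // x ∈ S} → ℝ :=
    fun x => (S.erase x.1).inf' (herase_ne x.1 x.2) (fun z => ccwAngle (x.1-c) (z-c)) with hgdef
  have hSne : S.Nonempty := Finset.card_pos.mp (by omega)
  obtain ⟨y₀s, hy₀mem, hy₀max⟩ := Finset.exists_max_image S.attach g
    (Finset.attach_nonempty_iff.mpr hSne)
  set y₀ := y₀s.1 with hy₀def
  have hy₀S : y₀ ∈ S := y₀s.2
  obtain ⟨y₁, hy₁mem, hy₁eq⟩ := Finset.exists_mem_eq_inf' (herase_ne y₀ hy₀S)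
    (fun z => ccwAngle (y₀-c) (z-c))
  have hy₁S : y₁ ∈ S := Finset.mem_of_mem_erase hy₁mem
  have hy₁ne : y₁ ≠ y₀ := Finset.ne_of_mem_erase hy₁mem
  set w := y₁ - c with hwdef
  have hw : w ≠ 0 := hwne y₁ hy₁S
  set f : ℂ → ℝ := fun x => ccwAngle w (x-c) with hfdef
  -- f is injective on S
  have hfinj : ∀ x ∈ S, ∀ z ∈ S, f x = f z → x = z := by
    intro x hx z hz h
    by_contra hne
    exact (hccw_ne x hx z hz hne).1 (ccw_eq_of_eq hw (hwne x hx) (hwne z hz) h)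
  -- the anti relation for y₀
  have hanti : f y₀ + g y₀s = 2 * Real.pi := by
    have h0 : ccwAngle (y₀-c) (y₁-c) ≠ 0 := (hccw_ne y₀ hy₀S y₁ hy₁S (Ne.symm hy₁ne)).1
    have := ccw_anti (hwne y₀ hy₀S) (hwne y₁ hy₁S) h0
    rw [hgdef]
    simp only [← hy₀def]
    rw [hy₁eq]
    rw [hfdef]
    simp only [hwdef]
    linarith
  -- y₀ has maximal f value
  have hfmax : ∀ x ∈ S, f x ≤ f y₀ := by
    intro x hx
    by_contra h
    push_neg at h
    have hxy₀ : x ≠ y₀ := fun hc => by rw [hc] at h; exact lt_irrefl _ h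
    have hθ : ccwAngle (y₀-c) (x-c) = f x - f y₀ :=
      ccw_sub hw (hwne y₀ hy₀S) (hwne x hx) h
    have hge : g y₀s ≤ ccwAngle (y₀-c) (x-c) := by
      rw [hgdef]
      exact Finset.inf'_le _ (Finset.mem_erase.mpr ⟨hxy₀, hx⟩)
    have := ccw_lt_two_pi w (x-c)
    rw [hθ] at hge
    have : f x < 2 * Real.pi := ccw_lt_two_pi w (x-c)
    linarith
  -- consecutive gaps are < π
  have hgapπ : ∀ p ∈ S, ∀ q ∈ S, f p < f q → (∀ z ∈ S, ¬(f p < f z ∧ f z < f q)) →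
      ccwAngle (p-c) (q-c) < Real.pi := by
    intro p hp q hq hlt hbet
    have hpq : p ≠ q := fun hc => by rw [hc] at hlt; exact lt_irrefl _ hlt
    have hθ : ccwAngle (p-c) (q-c) = f q - f p := ccw_sub hw (hwne p hp) (hwne q hq) hlt
    obtain ⟨z', hz'mem, hz'eq⟩ := Finset.exists_mem_eq_inf' (herase_ne p hp)
      (fun z => ccwAngle (p-c) (z-c))
    have hz'S : z' ∈ S := Finset.mem_of_mem_erase hz'mem
    have hz'p : z' ≠ p := Finset.ne_of_mem_erase hz'mem
    have hfz'p : f z' ≠ f p := fun hc => hz'p (hfinj z' hz'S p hp hc)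
    -- θ ≤ g p
    have hθle : ccwAngle (p-c) (q-c) ≤ g ⟨p, hp⟩ := by
      rw [hgdef]
      simp only
      rw [hz'eq]
      rcases hfz'p.lt_or_gt with hcase | hcase
      · -- f z' < f p
        have := ccw_sub' hw (hwne p hp) (hwne z' hz'S) hcase
        rw [this, hθ]
        have h1 := ccw_lt_two_pi w (q-c)
        have h2 := ccw_nonneg w (z'-c)
        rw [hfdef] at *
        simp only at *
        linarith
      · -- f p < f z' : then f q ≤ f z'
        have := ccw_sub hw (hwne p hp) (hwne z' hz'S) hcase
        rw [this, hθ]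
        have : ¬ (f p < f z' ∧ f z' < f q) := hbet z' hz'S
        have hfq : f q ≤ f z' := by
          by_contra hc
          push_neg at hc
          exact this ⟨hcase, hc⟩
        rw [hfdef] at *
        simp only at *
        linarith
    have hgle : g ⟨p, hp⟩ ≤ g y₀s := hy₀max ⟨p, hp⟩ (Finset.mem_attach _ _)
    have hfqmax : f q ≤ f y₀ := hfmax q hq
    have hfp0 : 0 ≤ f p := ccw_nonneg _ _
    have hne : ccwAngle (p-c) (q-c) ≠ Real.pi := (hccw_ne p hp q hq hpq).2
    have hππ : ccwAngle (p-c) (q-c) ≤ Real.pi := by nlinarith [hθ, hanti]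
    exact hππ.lt_of_ne hne
  -- enumeration of S by increasing f
  obtain ⟨n, hn⟩ : ∃ n, S.card = n + 1 := ⟨S.card - 1, by omega⟩
  have htcard : (S.image f).card = n + 1 := by
    rw [Finset.card_image_of_injOn (fun x hx z hz h => hfinj x hx z hz h)]
    exact hn
  set e := (S.image f).orderIsoOfFin htcard with hedef
  set y : Fin (n+1) → ℂ := fun i => Function.invFunOn f ↑S ((e i : ℝ)) with hydef
  have hex : ∀ i : Fin (n+1), ∃ a ∈ (↑S : Set ℂ), f a = (e i : ℝ) := by
    intro i
    have := (e i).2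
    rw [Finset.mem_image] at this
    obtain ⟨a, ha, hfa⟩ := this
    exact ⟨a, ha, hfa⟩
  have hyS : ∀ i, y i ∈ S := by
    intro i
    have := Function.invFunOn_mem (hex i)
    simpa [hydef] using this
  have hfy : ∀ i, f (y i) = (e i : ℝ) := by
    intro i
    exact Function.invFunOn_eq (hex i)
  have hymono : ∀ i j : Fin (n+1), i < j → f (y i) < f (y j) := by
    intro i j hij
    rw [hfy, hfy]
    exact_mod_cast (OrderIso.lt_iff_lt e).mpr hij
  have hyinj : ∀ i j : Fin (n+1), y i = y j → i = j := by
    intro i j h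
    by_contra hne
    rcases Ne.lt_or_gt hne with hl | hl
    · exact absurd (congrArg f h) (ne_of_lt (hymono i j hl))
    · exact absurd (congrArg f h).symm (ne_of_lt (hymono j i hl))
  have hylt : ∀ i j : Fin (n+1), f (y i) < f (y j) → i < j := by
    intro i j h
    by_contra hc
    push_neg at hc
    rcases hc.lt_or_eq with hl | hl
    · exact absurd (hymono j i hl) (by linarith)
    · rw [hl] at h; exact lt_irrefl _ h
  have hysurj : ∀ z ∈ S, ∃ i, y i = z := by
    intro z hz
    have hfz : f z ∈ S.image f := Finset.mem_image_of_mem f hz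
    obtain ⟨i, hi⟩ := e.surjective ⟨f z, hfz⟩
    refine ⟨i, ?_⟩
    apply hfinj _ (hyS i) _ hz
    rw [hfy i, hi]
  -- index sets
  set RedIdx := Finset.univ.filter (fun i : Fin (n+1) => y i ∈ R) with hRIdef
  set BlueIdx := Finset.univ.filter (fun i : Fin (n+1) => y i ∈ B) with hBIdef
  have hRedcard : RedIdx.card = r := by
    rw [hrdef]
    apply Finset.card_bij (fun i _ => y i)
    · intro i hi
      rw [Finset.mem_filter] at hi ⊢
      exact ⟨hi.2, hSG _ (hyS i)⟩
    · intro i hi j hj h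
      exact hyinj i j h
    · intro x hx
      rw [Finset.mem_filter] at hx
      have hxS : x ∈ S := (hSmem x).mpr ⟨Set.mem_union_left _ hx.1, hx.2,
        fun hc => hcnR (hc ▸ hx.1)⟩
      obtain ⟨i, hi⟩ := hysurj x hxS
      exact ⟨i, Finset.mem_filter.mpr ⟨Finset.mem_univ _, hi ▸ hx.1⟩, hi⟩
  have hBluecard : BlueIdx.card = b - 1 := by
    have : BlueIdx.card = ((B.filter (· ∈ G)).erase c).card := by
      apply Finset.card_bij (fun i _ => y i)
      · intro i hi
        rw [Finset.mem_filter] at hi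
        rw [Finset.mem_erase, Finset.mem_filter]
        exact ⟨hSc _ (hyS i), hi.2, hSG _ (hyS i)⟩
      · intro i hi j hj h
        exact hyinj i j h
      · intro x hx
        rw [Finset.mem_erase, Finset.mem_filter] at hx
        have hxS : x ∈ S := (hSmem x).mpr ⟨Set.mem_union_right _ hx.2.1, hx.2.2, hx.1⟩
        obtain ⟨i, hi⟩ := hysurj x hxS
        exact ⟨i, Finset.mem_filter.mpr ⟨Finset.mem_univ _, hi ▸ hx.2.1⟩, hi⟩
    rw [this, Finset.card_erase_of_mem (Finset.mem_filter.mpr ⟨hcB, hcG⟩), hbdef]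
  -- adjacency sets
  set A := Finset.univ.filter (fun i : Fin n => y i.castSucc ∈ R) with hAdef
  set Adj := Finset.univ.filter
    (fun i : Fin n => y i.castSucc ∈ R ∧ y i.succ ∈ R) with hAdjdef
  have hAcard : A.card = (RedIdx.erase (Fin.last n)).card := by
    apply Finset.card_bij (fun i _ => i.castSucc)
    · intro i hi
      rw [Finset.mem_filter] at hi
      rw [Finset.mem_erase, Finset.mem_filter]
      exact ⟨Fin.ne_of_lt (Fin.castSucc_lt_last i), Finset.mem_univ _, hi.2⟩
    · intro i _ j _ h
      exact Fin.castSucc_inj.mp h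
    · intro j hj
      rw [Finset.mem_erase, Finset.mem_filter] at hj
      have hjlt : j < Fin.last n := Fin.lt_last_iff_ne_last.mpr hj.1
      refine ⟨j.castPred hj.1, ?_, Fin.castSucc_castPred j hj.1⟩
      rw [Finset.mem_filter]
      refine ⟨Finset.mem_univ _, ?_⟩
      rw [Fin.castSucc_castPred]
      exact hj.2.2
  have hAlow : r - 1 ≤ A.card := by
    rw [hAcard]
    have := Finset.pred_card_le_card_erase (s := RedIdx) (a := Fin.last n)
    omega
  have hAdjsub : Adj ⊆ A := by
    intro i hi
    rw [hAdjdef, Finset.mem_filter] at hi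
    rw [hAdef, Finset.mem_filter]
    exact ⟨hi.1, hi.2.1⟩
  have hsdiff : (A \ Adj).card ≤ b - 1 := by
    rw [← hBluecard]
    apply Finset.card_le_card_of_injOn (fun i => i.succ)
    · intro i hi
      rw [Finset.mem_coe, Finset.mem_sdiff, hAdef, hAdjdef, Finset.mem_filter, Finset.mem_filter] at hi
      rw [Finset.mem_coe, hBIdef, Finset.mem_filter]
      refine ⟨Finset.mem_univ _, ?_⟩
      have hnR : y i.succ ∉ R := by
        intro hc
        exact hi.2 ⟨Finset.mem_univ _, hi.1.2, hc⟩
      have := hSRB _ (hyS i.succ)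
      rcases this with h | h
      · exact absurd h hnR
      · exact h
    · intro i _ j _ h
      exact Fin.succ_inj.mp h
  have hAdjcard : r ≤ Adj.card + b := by
    have := Finset.card_sdiff_add_card_eq_card hAdjsub
    omega
  -- the triangles
  have hyc : ∀ k : Fin (n+1), y k ≠ c := fun k => hSc _ (hyS k)
  refine ⟨Adj.image (fun i => ({y i.castSucc, y i.succ, c} : Set ℂ)), ?_, ?_⟩
  · -- cardinality
    have himg : (Adj.image (fun i => ({y i.castSucc, y i.succ, c} : Set ℂ))).card = Adj.card := by
      apply Finset.card_image_of_injOn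
      intro i _ j _ h
      simp only at h
      have h1 : y i.castSucc ∈ ({y j.castSucc, y j.succ, c} : Set ℂ) := by
        rw [← h]; simp
      have h2 : y i.succ ∈ ({y j.castSucc, y j.succ, c} : Set ℂ) := by
        rw [← h]; simp
      have hv : ∀ k l : Fin (n+1), y k = y l → k.val = l.val := by
        intro k l hkl
        exact congrArg Fin.val (hyinj k l hkl)
      apply Fin.ext
      rcases h1 with e1 | e1 | e1
      · exact by have := hv _ _ e1; simpa using this
      · rcases h2 with e2 | e2 | e2
        · have a1 := hv _ _ e1
          have a2 := hv _ _ e2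
          simp [Fin.val_succ] at a1 a2
          omega
        · have a1 := hv _ _ e1
          have a2 := hv _ _ e2
          simp [Fin.val_succ] at a1 a2
          omega
        · exact absurd e2 (hyc _)
      · exact absurd e1 (hyc _)
    rw [himg]
    exact hAdjcard
  · -- properties
    intro T hT
    rw [Finset.mem_image] at hT
    obtain ⟨i, hiAdj, hTeq⟩ := hT
    rw [hAdjdef, Finset.mem_filter] at hiAdj
    obtain ⟨-, hpR, hqR⟩ := hiAdj
    set p := y i.castSucc with hpdef
    set q := y i.succ with hqdef
    have hpS : p ∈ S := hyS _
    have hqS : q ∈ S := hyS _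
    have hflt : f p < f q := hymono i.castSucc i.succ Fin.castSucc_lt_succ
    have hnobet : ∀ z ∈ S, ¬(f p < f z ∧ f z < f q) := by
      intro z hz ⟨hz1, hz2⟩
      obtain ⟨k, hk⟩ := hysurj z hz
      rw [← hk] at hz1 hz2
      have hk1 := hylt _ _ hz1
      have hk2 := hylt _ _ hz2
      have b1 : i.castSucc.val < k.val := hk1
      have b2 : k.val < i.succ.val := hk2
      simp [Fin.val_succ] at b1 b2
      omega
    have hgap : ccwAngle (p-c) (q-c) < Real.pi := hgapπ p hpS q hqS hflt hnobet
    have hhull : convexHull ℝ ({p, q, c} : Set ℂ) ∩ (↑R ∪ ↑B : Set ℂ) = ({p, q, c} : Set ℂ) :=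
      triangle_empty R B hgp G hconv c hcRB hcG S (fun x => hSmem x) w hw p q hpS hqS
        hflt hgap hnobet
    have hpq : p ≠ q := by
      intro hc
      have := hyinj _ _ hc
      have := congrArg Fin.val this
      simp [Fin.val_succ] at this
    refine ⟨?_, ?_, ?_⟩
    · exact ⟨p, q, c, hpR, hqR, hcB, hpq, hTeq.symm, hTeq ▸ hhull⟩
    · rw [← hTeq]
      rintro x (hx | hx | hx)
      · exact hx ▸ hSG _ hpS
      · exact hx ▸ hSG _ hqS
      · exact hx ▸ hcG
    · rw [← hTeq]
      ext x
      simp only [Set.mem_inter_iff, Set.mem_insert_iff, Set.mem_singleton_iff, Finset.mem_coe]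
      constructor
      · rintro ⟨hx1 | hx1 | hx1, hx2⟩
        · exact absurd hx2 (hx1 ▸ fun h => (Finset.disjoint_left.mp hdisj hpR) h)
        · exact absurd hx2 (hx1 ▸ fun h => (Finset.disjoint_left.mp hdisj hqR) h)
        · exact hx1
      · intro hx
        exact ⟨Or.inr (Or.inr hx), hx ▸ hcB⟩


/-- If `G` is a convex sector with `|R ∩ G| ≥ 2` and `|B ∩ G| = ⌈|R ∩ G|/3⌉`, then the
number of empty red-red-blue triangles with all vertices in `G` is at least
`(2/9)·|R ∩ G|²`. -/
theorem stmt_18 (R B : Finset ℂ) (hdisj : Disjoint R B) (hgp : GenPos (↑R ∪ ↑B))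
    (G : Set ℂ) (hconv : Convex ℝ G)
    (a u v : ℂ) (hu : u ≠ 0) (hv : v ≠ 0)
    (hsector : G = {x | x = a ∨ ccwAngle u (x - a) ≤ ccwAngle u v})
    (hR2 : 2 ≤ (↑R ∩ G : Set ℂ).ncard)
    (hBG : ((↑B ∩ G : Set ℂ).ncard : ℚ) = ⌈((↑R ∩ G : Set ℂ).ncard : ℚ) / 3⌉) :
    2 * ((↑R ∩ G : Set ℂ).ncard : ℚ) ^ 2 / 9 ≤ ({T ∈ emptyRRB R B | T ⊆ G}.ncard : ℚ) := by
  classical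
  have hRcoe : (↑R ∩ G : Set ℂ).ncard = (R.filter (· ∈ G)).card := by
    rw [← Set.ncard_coe_finset]
    congr 1
    rw [Finset.coe_filter]
    exact (Set.sep_mem_eq).symm ▸ rfl
  have hBcoe : (↑B ∩ G : Set ℂ).ncard = (B.filter (· ∈ G)).card := by
    rw [← Set.ncard_coe_finset]
    congr 1
    rw [Finset.coe_filter]
    exact (Set.sep_mem_eq).symm ▸ rfl
  set rN := (R.filter (· ∈ G)).card with hrdef
  set bN := (B.filter (· ∈ G)).card with hbdef
  rw [hRcoe] at hR2 hBG ⊢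
  rw [hBcoe] at hBG
  -- arithmetic facts about bN
  have hceil1 : ((rN : ℚ)/3) ≤ ((bN : ℚ)) := by
    rw [hBG]; exact Int.le_ceil _
  have hceil2 : ((bN : ℚ)) < (rN : ℚ)/3 + 1 := by
    rw [hBG]; exact Int.ceil_lt_add_one _
  have hq1 : (rN : ℚ) ≤ 3 * (bN : ℚ) := by linarith
  have hq2 : 3 * (bN : ℚ) < (rN : ℚ) + 3 := by linarith
  have hn1 : rN ≤ 3 * bN := by exact_mod_cast hq1
  have hn2 : 3 * bN < rN + 3 := by exact_mod_cast hq2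
  have hb1 : 1 ≤ bN := by omega
  have hbr : bN ≤ rN := by omega
  -- per blue point triangles
  set Bf := B.filter (· ∈ G) with hBfdef
  have hch : ∀ c ∈ Bf, ∃ 𝒯 : Finset (Set ℂ),
      rN ≤ 𝒯.card + bN ∧ ∀ T ∈ 𝒯, T ∈ emptyRRB R B ∧ T ⊆ G ∧ T ∩ ↑B = {c} := by
    intro c hc
    rw [hBfdef, Finset.mem_filter] at hc
    exact per_blue R B hdisj hgp G hconv c hc.1 hc.2 hR2
  choose F hF1 hF2 using hch
  set F' : ℂ → Finset (Set ℂ) := fun c => if h : c ∈ Bf then F c h else ∅ with hF'def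
  set 𝒯all := Bf.biUnion F' with h𝒯def
  have hF'mem : ∀ c (hc : c ∈ Bf), F' c = F c hc := by
    intro c hc
    rw [hF'def]
    simp [hc]
  have hdisjT : ∀ c ∈ Bf, ∀ c' ∈ Bf, c ≠ c' → Disjoint (F' c) (F' c') := by
    intro c hc c' hc' hne
    rw [Finset.disjoint_left]
    intro T hT hT'
    rw [hF'mem c hc] at hT
    rw [hF'mem c' hc'] at hT'
    have e1 := (hF2 c hc T hT).2.2
    have e2 := (hF2 c' hc' T hT').2.2
    rw [e1] at e2
    exact hne (Set.singleton_eq_singleton_iff.mp e2)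
  have hcard : bN * (rN - bN) ≤ 𝒯all.card := by
    rw [h𝒯def, Finset.card_biUnion hdisjT]
    calc bN * (rN - bN) = ∑ _c ∈ Bf, (rN - bN) := by
          rw [Finset.sum_const, smul_eq_mul, ← hbdef]
      _ ≤ ∑ c ∈ Bf, (F' c).card := by
          apply Finset.sum_le_sum
          intro c hc
          rw [hF'mem c hc]
          have := hF1 c hc
          omega
  -- the global set is finite and contains all these triangles
  set 𝒮 := {T ∈ emptyRRB R B | T ⊆ G} with h𝒮def
  have hfin : 𝒮.Finite := by
    apply Set.Finite.subset ((R.finite_toSet.union B.finite_toSet).finite_subsets)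
    intro T hT
    obtain ⟨⟨p, q, z, hpR, hqR, hzB, _, hTeq, _⟩, -⟩ := hT
    rw [hTeq]
    rintro x (hx | hx | hx)
    · exact Or.inl (hx ▸ hpR)
    · exact Or.inl (hx ▸ hqR)
    · exact Or.inr (hx ▸ hzB)
  have hsub : ↑𝒯all ⊆ 𝒮 := by
    intro T hT
    rw [Finset.mem_coe, h𝒯def, Finset.mem_biUnion] at hT
    obtain ⟨c, hc, hTc⟩ := hT
    rw [hF'mem c hc] at hTc
    exact ⟨(hF2 c hc T hTc).1, (hF2 c hc T hTc).2.1⟩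
  have hncard : bN * (rN - bN) ≤ 𝒮.ncard := by
    calc bN * (rN - bN) ≤ 𝒯all.card := hcard
      _ = (↑𝒯all : Set (Set ℂ)).ncard := (Set.ncard_coe_finset _).symm
      _ ≤ 𝒮.ncard := Set.ncard_le_ncard hsub hfin
  -- final arithmetic
  have hcast : ((bN * (rN - bN) : ℕ) : ℚ) = (bN : ℚ) * ((rN : ℚ) - (bN : ℚ)) := by
    push_cast [Nat.cast_sub hbr]
    ring
  have hQ : ((bN * (rN - bN) : ℕ) : ℚ) ≤ (𝒮.ncard : ℚ) := by exact_mod_cast hncard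
  rw [hcast] at hQ
  have hrQ : (2 : ℚ) ≤ (rN : ℚ) := by exact_mod_cast hR2
  have hn2' : 3 * (bN:ℚ) ≤ (rN:ℚ) + 2 := by
    have : 3 * bN ≤ rN + 2 := by omega
    exact_mod_cast this
  have key : (0:ℚ) ≤ (3*(bN:ℚ) - (rN:ℚ)) * (2*(rN:ℚ) - 3*(bN:ℚ)) := by
    apply mul_nonneg <;> linarith
  nlinarith [hQ, key]
end
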